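/- arXiv:1512.02443 — 6 statements merged into one kernel-verified Lean document; each statement's English description precedes it below -/
import Mathlib

section
/- Let G be a 2-edge-connected simple graph and let k ≥ 3 be a positive integer. If the degree of every vertex of G is divisible by k, then every edge of G is contained in a circuit of even length. -/
open SimpleGraph

set_option linter.unusedSectionVars false
set_option linter.unusedVariables false
set_option maxHeartbeats 1600000

/-- A graph is 2-edge-connected if it is connected and remains connected after
the deletion of any single edge. -/
def TwoEdgeConnected {V : Type*} (G : SimpleGraph V) : Prop :=
  G.Connected ∧ ∀ e ∈ G.edgeSet, (G.deleteEdges {e}).Connected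

namespace EC
variable {V : Type*}

section Walks
variable [DecidableEq V] {H : SimpleGraph V}

lemma mem_support_of_mem_edges {x y w : V} {R : H.Walk x y} {e : Sym2 V}
    (he : e ∈ R.edges) (hw : w ∈ e) : w ∈ R.support := by
  induction e with
  | _ a b =>
    rcases Sym2.mem_iff.mp hw with rfl | rfl
    · exact R.fst_mem_support_of_mem_edges he
    · exact R.snd_mem_support_of_mem_edges he

lemma trail_append {x y z : V} {p : H.Walk x y} {q : H.Walk y z}
    (hp : p.IsTrail) (hq : q.IsTrail) (hd : ∀ e ∈ p.edges, e ∉ q.edges) :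
    (p.append q).IsTrail := by
  rw [Walk.isTrail_def, Walk.edges_append]
  exact hp.edges_nodup.append hq.edges_nodup hd

lemma trail_append3 {a b c d : V} {p : H.Walk a b} {q : H.Walk b c} {r : H.Walk c d}
    (hp : p.IsTrail) (hq : q.IsTrail) (hr : r.IsTrail)
    (hpq : ∀ e ∈ p.edges, e ∉ q.edges) (hpr : ∀ e ∈ p.edges, e ∉ r.edges)
    (hqr : ∀ e ∈ q.edges, e ∉ r.edges) : (p.append (q.append r)).IsTrail := by
  refine trail_append hp (trail_append hq hr hqr) ?_
  intro e he hmem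
  rw [Walk.edges_append, List.mem_append] at hmem
  rcases hmem with h | h
  · exact hpq e he h
  · exact hpr e he h

lemma firstHit (S : Set V) : ∀ {x y : V} (p : H.Walk x y), S y →
    ∃ (c : V) (q : H.Walk x c), S c ∧ q.edges.Sublist p.edges ∧
      (∀ e ∈ q.edges, ∃ w ∈ e, w ∉ S) := by
  intro x y p
  induction p with
  | nil => intro hy; exact ⟨_, Walk.nil, hy, by simp, by simp⟩
  | @cons a b c h p ih =>
    intro hy
    by_cases hx : S a
    · exact ⟨a, Walk.nil, hx, by simp, by simp⟩
    · obtain ⟨c', q, hc', hsub, hprop⟩ := ih hy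
      refine ⟨c', Walk.cons h q, hc', ?_, ?_⟩
      · simp only [Walk.edges_cons]; exact hsub.cons₂ _
      · intro e he
        rcases List.mem_cons.mp (by simpa [Walk.edges_cons] using he) with rfl | he'
        · exact ⟨a, by simp, hx⟩
        · exact hprop e he'

lemma mem_support_rotate {z u v : V} (R : H.Walk z z) (h : u ∈ R.support)
    (hv : v ∈ R.support) : v ∈ (R.rotate _ h).support := by
  unfold Walk.rotate
  rw [Walk.mem_support_append_iff]
  rcases (Walk.mem_support_append_iff _ _).mp (by rw [R.take_spec h]; exact hv) with h1 | h1
  · right; exact h1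
  · left; exact h1

lemma arcs {z c1 c2 : V} (R : H.Walk z z) (hR : R.IsTrail)
    (h1 : c1 ∈ R.support) (h2 : c2 ∈ R.support) :
    ∃ (A1 : H.Walk c1 c2) (A2 : H.Walk c2 c1), A1.IsTrail ∧ A2.IsTrail ∧
      (∀ e ∈ A1.edges, e ∈ R.edges) ∧ (∀ e ∈ A2.edges, e ∈ R.edges) ∧
      (∀ e ∈ A1.edges, e ∉ A2.edges) ∧ A1.length + A2.length = R.length := by
  classical
  set R1 := R.rotate _ h1 with hR1
  have hperm : R1.edges ~r R.edges := R.rotate_edges _ h1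
  have hc2 : c2 ∈ R1.support := mem_support_rotate R h1 h2
  have hR1t : R1.IsTrail := hR.rotate h1
  refine ⟨R1.takeUntil c2 hc2, R1.dropUntil c2 hc2, hR1t.takeUntil hc2, hR1t.dropUntil hc2,
    ?_, ?_, ?_, ?_⟩
  · intro e he; exact hperm.perm.mem_iff.mp (R1.edges_takeUntil_subset hc2 he)
  · intro e he; exact hperm.perm.mem_iff.mp (R1.edges_dropUntil_subset hc2 he)
  · have hnd : R1.edges.Nodup := hR1t.edges_nodup
    rw [← R1.take_spec hc2, Walk.edges_append] at hnd
    exact fun e he => (List.disjoint_of_nodup_append hnd) he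
  · have h3 := congrArg Walk.length (R1.take_spec hc2)
    rw [Walk.length_append] at h3
    rw [h3]
    rw [show R1.length = R.length from by
      rw [← Walk.length_edges, ← Walk.length_edges]; exact hperm.perm.length_eq]

/-- In a bridgeless graph, any two connected vertices lie on a common closed trail. -/
lemma throughPair (hbl : ∀ u' v', H.Adj u' v' → (H.deleteEdges {s(u',v')}).Reachable u' v') :
    ∀ (n : ℕ) (u z : V), H.dist u z ≤ n → H.Reachable u z →
    ∃ (x : V) (C : H.Walk x x), C.IsTrail ∧ u ∈ C.support ∧ z ∈ C.support := by
  intro n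
  induction n with
  | zero =>
    intro u z hd hr
    have huz : u = z := hr.dist_eq_zero_iff.mp (Nat.le_zero.mp hd)
    subst huz
    exact ⟨u, Walk.nil, Walk.IsTrail.nil, Walk.start_mem_support _, Walk.start_mem_support _⟩
  | succ n ih =>
    intro u z hd hr
    by_cases h0 : H.dist u z ≤ n
    · exact ih u z h0 hr
    have hdist : H.dist u z = n + 1 := le_antisymm hd (by omega)
    obtain ⟨q, hq⟩ := hr.symm.exists_walk_length_eq_dist
    rw [dist_comm, hdist] at hq
    cases q with
    | nil => simp at hq
    | @cons _ w _ hzw rest =>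
      rw [Walk.length_cons] at hq
      have hrestlen : rest.length = n := by omega
      have hdw : H.dist u w ≤ n := by
        have := dist_le rest.reverse
        rwa [Walk.length_reverse, hrestlen] at this
      obtain ⟨x, C0, hC0t, huC0, hwC0⟩ := ih u w hdw ⟨rest.reverse⟩
      by_cases hzC0 : z ∈ C0.support
      · exact ⟨x, C0, hC0t, huC0, hzC0⟩
      obtain ⟨P0⟩ := hbl z w hzw
      have hP1e : ∀ e ∈ P0.bypass.edges, e ∈ H.edgeSet := by
        intro e he
        have h1 := Walk.edges_subset_edgeSet _ (P0.edges_bypass_subset he)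
        rw [edgeSet_deleteEdges] at h1
        exact h1.1
      set P1 : H.Walk z w := (P0.bypass).transfer H hP1e with hP1def
      have hP1trail : P1.IsTrail := (P0.bypass_isPath.transfer hP1e).isTrail
      have hfP1 : s(z, w) ∉ P1.edges := by
        rw [hP1def, Walk.edges_transfer]
        intro hmem
        have h1 := Walk.edges_subset_edgeSet _ (P0.edges_bypass_subset hmem)
        rw [edgeSet_deleteEdges] at h1
        exact h1.2 rfl
      obtain ⟨c, s, hcS, hsub, hprop⟩ := firstHit (· ∈ C0.support) P1 hwC0
      have hstrail : s.IsTrail := ⟨hP1trail.edges_nodup.sublist hsub⟩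
      have hfs : s(z, w) ∉ s.edges := fun hmem => hfP1 (hsub.mem hmem)
      have hsC0 : ∀ e ∈ s.edges, e ∉ C0.edges := by
        intro e he hec
        obtain ⟨w', hw'e, hw'S⟩ := hprop e he
        exact hw'S (mem_support_of_mem_edges hec hw'e)
      set M : H.Walk w c := Walk.cons hzw.symm s with hMdef
      have hMt : M.IsTrail := by
        rw [hMdef, Walk.isTrail_cons]
        refine ⟨hstrail, fun hmem => hfs ?_⟩
        rwa [Sym2.eq_swap] at hmem
      have hMC0 : ∀ e ∈ M.edges, e ∉ C0.edges := by
        intro e he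
        rw [hMdef, Walk.edges_cons, List.mem_cons] at he
        rcases he with rfl | he'
        · intro hec
          exact hzC0 (mem_support_of_mem_edges hec (by simp))
        · exact hsC0 e he'
      have hzM : z ∈ M.support := by
        rw [hMdef, Walk.support_cons]
        exact List.mem_cons_of_mem _ s.start_mem_support
      set C0' := C0.rotate _ hwC0 with hC0'def
      have hC0't : C0'.IsTrail := hC0t.rotate _
      have hperm : C0'.edges ~r C0.edges := C0.rotate_edges _ hwC0
      have hcC0' : c ∈ C0'.support := mem_support_rotate _ _ hcS
      have huC0' : u ∈ C0'.support := mem_support_rotate _ _ huC0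
      have hsplit := C0'.take_spec hcC0'
      have hT1e : ∀ e ∈ (C0'.takeUntil c hcC0').edges, e ∈ C0.edges :=
        fun e he => hperm.perm.mem_iff.mp (C0'.edges_takeUntil_subset hcC0' he)
      have hT2e : ∀ e ∈ (C0'.dropUntil c hcC0').edges, e ∈ C0.edges :=
        fun e he => hperm.perm.mem_iff.mp (C0'.edges_dropUntil_subset hcC0' he)
      by_cases hu1 : u ∈ (C0'.takeUntil c hcC0').support
      · refine ⟨w, (C0'.takeUntil c hcC0').append M.reverse, ?_, ?_, ?_⟩
        · refine trail_append (hC0't.takeUntil _) (hMt.reverse _) ?_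
          intro e he hmem
          rw [Walk.edges_reverse, List.mem_reverse] at hmem
          exact hMC0 e hmem (hT1e e he)
        · rw [Walk.mem_support_append_iff]; left; exact hu1
        · rw [Walk.mem_support_append_iff]; right
          rw [Walk.support_reverse, List.mem_reverse]; exact hzM
      · have hu2 : u ∈ (C0'.dropUntil c hcC0').support := by
          have := (Walk.mem_support_append_iff _ _).mp (by rw [hsplit]; exact huC0')
          tauto
        refine ⟨w, M.append (C0'.dropUntil c hcC0'), ?_, ?_, ?_⟩
        · refine trail_append hMt (hC0't.dropUntil _) ?_
          intro e he hmem
          exact hMC0 e he (hT2e e hmem)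
        · rw [Walk.mem_support_append_iff]; right; exact hu2
        · rw [Walk.mem_support_append_iff]; left; exact hzM

/-- Step 1: an odd closed trail through any vertex of the component. -/
lemma oddClosedAt (hbl : ∀ u' v', H.Adj u' v' → (H.deleteEdges {s(u',v')}).Reachable u' v')
    {z0 a : V} (R : H.Walk z0 z0) (hRt : R.IsTrail) (hRodd : Odd R.length)
    (ha : H.Reachable a z0) :
    ∃ D : H.Walk a a, D.IsTrail ∧ Odd D.length := by
  obtain ⟨x, W, hWt, haW, hzW⟩ := throughPair hbl (H.dist a z0) a z0 (le_refl _) ha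
  set Wa := W.rotate _ haW with hWadef
  have hWat : Wa.IsTrail := hWt.rotate _
  have hzWa : z0 ∈ Wa.support := mem_support_rotate _ _ hzW
  have hsplit := Wa.take_spec hzWa
  set W1 := Wa.takeUntil z0 hzWa with hW1def
  set W2 := Wa.dropUntil z0 hzWa with hW2def
  have hW1t : W1.IsTrail := hWat.takeUntil _
  have hW2t : W2.IsTrail := hWat.dropUntil _
  have hW12 : ∀ e ∈ W1.edges, e ∉ W2.edges := by
    have hnd : Wa.edges.Nodup := hWat.edges_nodup
    rw [← hsplit, Walk.edges_append] at hnd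
    exact fun e he => (List.disjoint_of_nodup_append hnd) he
  obtain ⟨c1, s1, hc1R, hsub1, hprop1⟩ := firstHit (· ∈ R.support) W1 R.start_mem_support
  obtain ⟨c2, s2, hc2R, hsub2, hprop2⟩ :=
    firstHit (· ∈ R.support) W2.reverse R.start_mem_support
  have hs1t : s1.IsTrail := ⟨hW1t.edges_nodup.sublist hsub1⟩
  have hs2t : s2.IsTrail := ⟨(hW2t.reverse _).edges_nodup.sublist hsub2⟩
  have hs2W2 : ∀ e ∈ s2.edges, e ∈ W2.edges := by
    intro e he
    have := hsub2.mem he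
    rwa [Walk.edges_reverse, List.mem_reverse] at this
  have hs12 : ∀ e ∈ s1.edges, e ∉ s2.edges :=
    fun e he hmem => hW12 e (hsub1.mem he) (hs2W2 e hmem)
  have hs1R : ∀ e ∈ s1.edges, e ∉ R.edges := by
    intro e he hmem
    obtain ⟨w', hw'e, hw'S⟩ := hprop1 e he
    exact hw'S (mem_support_of_mem_edges hmem hw'e)
  have hs2R : ∀ e ∈ s2.edges, e ∉ R.edges := by
    intro e he hmem
    obtain ⟨w', hw'e, hw'S⟩ := hprop2 e he
    exact hw'S (mem_support_of_mem_edges hmem hw'e)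
  obtain ⟨A1, A2, hA1t, hA2t, hA1R, hA2R, hA12, hAsum⟩ := arcs R hRt hc1R hc2R
  rcases Nat.even_or_odd (s1.length + s2.length + A1.length) with hev | hodd'
  ·
    refine ⟨s1.append (A2.reverse.append s2.reverse), ?_, ?_⟩
    · refine trail_append3 hs1t (hA2t.reverse _) (hs2t.reverse _) ?_ ?_ ?_
      · intro e he hmem
        rw [Walk.edges_reverse, List.mem_reverse] at hmem
        exact hs1R e he (hA2R e hmem)
      · intro e he hmem
        rw [Walk.edges_reverse, List.mem_reverse] at hmem
        exact hs12 e he hmem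
      · intro e he hmem
        rw [Walk.edges_reverse, List.mem_reverse] at he hmem
        exact hs2R e hmem (hA2R e he)
    · rw [Walk.length_append, Walk.length_append, Walk.length_reverse, Walk.length_reverse]
      rcases hRodd with ⟨t, ht⟩
      rcases hev with ⟨t2, ht2⟩
      rw [Nat.odd_iff]
      omega
  · refine ⟨s1.append (A1.append s2.reverse), ?_, ?_⟩
    · refine trail_append3 hs1t hA1t (hs2t.reverse _) ?_ ?_ ?_
      · exact fun e he hmem => hs1R e he (hA1R e hmem)
      · intro e he hmem
        rw [Walk.edges_reverse, List.mem_reverse] at hmem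
        exact hs12 e he hmem
      · intro e he hmem
        rw [Walk.edges_reverse, List.mem_reverse] at hmem
        exact hs2R e hmem (hA1R e he)
    · rw [Walk.length_append, Walk.length_append, Walk.length_reverse]
      rcases hodd' with ⟨t, ht⟩
      exact ⟨t, by omega⟩

/-- Step 2: odd closed trail at `a` plus reachability gives an odd trail `a`–`b`. -/
lemma oddTrailTo {a b : V} (D : H.Walk a a) (hDt : D.IsTrail) (hDodd : Odd D.length)
    (hab : H.Reachable a b) : ∃ T : H.Walk a b, T.IsTrail ∧ Odd T.length := by
  obtain ⟨Q0⟩ := hab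
  set Q := Q0.bypass with hQdef
  have hQp : Q.IsPath := Q0.bypass_isPath
  obtain ⟨c, q, hcD, hsub, hprop⟩ := firstHit (· ∈ D.support) Q.reverse (D.start_mem_support)
  have hqt : q.IsTrail := ⟨(hQp.reverse.isTrail).edges_nodup.sublist hsub⟩
  have hqD : ∀ e ∈ q.edges, e ∉ D.edges := by
    intro e he hmem
    obtain ⟨w', hw'e, hw'S⟩ := hprop e he
    exact hw'S (mem_support_of_mem_edges hmem hw'e)
  obtain ⟨B1, B2, hB1t, hB2t, hB1D, hB2D, hB12, hBsum⟩ :=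
    arcs D hDt D.start_mem_support hcD
  rcases Nat.even_or_odd (B1.length + q.length) with hev | hodd'
  · refine ⟨B2.reverse.append q.reverse, ?_, ?_⟩
    · refine trail_append (hB2t.reverse _) (hqt.reverse _) ?_
      intro e he hmem
      rw [Walk.edges_reverse, List.mem_reverse] at he hmem
      exact hqD e hmem (hB2D e he)
    · rw [Walk.length_append, Walk.length_reverse, Walk.length_reverse]
      rcases hDodd with ⟨t, ht⟩
      rcases hev with ⟨t2, ht2⟩
      rw [Nat.odd_iff]
      omega
  · refine ⟨B1.append q.reverse, ?_, ?_⟩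
    · refine trail_append hB1t (hqt.reverse _) ?_
      intro e he hmem
      rw [Walk.edges_reverse, List.mem_reverse] at hmem
      exact hqD e hmem (hB1D e he)
    · rw [Walk.length_append, Walk.length_reverse]
      rcases hodd' with ⟨t, ht⟩
      exact ⟨t, by omega⟩

/-- LEMMA A: bridgeless + odd closed trail in the component ⇒ odd `a`–`b` trail. -/
lemma oddTrail_bridgeless
    (hbl : ∀ u' v', H.Adj u' v' → (H.deleteEdges {s(u',v')}).Reachable u' v')
    {z0 a b : V} (R : H.Walk z0 z0) (hRt : R.IsTrail) (hRodd : Odd R.length)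
    (ha : H.Reachable a z0) (hab : H.Reachable a b) :
    ∃ T : H.Walk a b, T.IsTrail ∧ Odd T.length := by
  obtain ⟨D, hDt, hDodd⟩ := oddClosedAt hbl R hRt hRodd ha
  exact oddTrailTo D hDt hDodd hab

lemma path_edge_end {u v : V} (q : H.Walk u v) (hq : q.IsPath) (hne : u ≠ v)
    (he : s(v, u) ∈ q.edges) : q.length = 1 := by
  induction q with
  | nil => simp at he
  | @cons a m w h rest ih =>
    rw [Walk.edges_cons, List.mem_cons] at he
    rcases he with he | he
    · have hvm : w = m := by
        rw [Sym2.eq_iff] at he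
        rcases he with ⟨h1, h2⟩ | ⟨h1, h2⟩
        · exact absurd h1.symm hne
        · exact h1
      subst hvm
      have hrest : rest = Walk.nil := by
        have h2 := SimpleGraph.Path.loop_eq (⟨rest, hq.of_cons⟩ : H.Path w w)
        exact congrArg Subtype.val h2
      simp [hrest]
    · exfalso
      have hu : a ∈ rest.support := mem_support_of_mem_edges he (by simp)
      have hnd := hq.support_nodup
      rw [Walk.support_cons, List.nodup_cons] at hnd
      exact hnd.1 hu

lemma closed_tail_nodup_trail {c : V} (w : H.Walk c c) (hodd : Odd w.length)
    (hnd : w.support.tail.Nodup) : w.IsTrail := by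
  cases w with
  | nil => simp at hodd
  | @cons _ m _ h rest =>
    have hrest : rest.IsPath := by
      rw [Walk.isPath_def]
      simpa [Walk.support_cons] using hnd
    rw [Walk.isTrail_def, Walk.edges_cons]
    refine List.nodup_cons.mpr ⟨?_, hrest.isTrail.edges_nodup⟩
    intro hmem
    have hlen := path_edge_end rest hrest h.ne' hmem
    rw [Walk.length_cons, hlen] at hodd
    exact absurd hodd (by decide)

lemma walk_cons_of_tail_mem {x y z' : V} (p : H.Walk x y) (hz : z' ∈ p.support.tail) :
    ∃ (m : V) (h' : H.Adj x m) (rest : H.Walk m y), p = Walk.cons h' rest := by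
  cases p with
  | nil => simp at hz
  | cons h rest => exact ⟨_, h, rest, rfl⟩

lemma length_pos_of_ne {x y : V} (p : H.Walk x y) (hne : x ≠ y) : 1 ≤ p.length := by
  cases p with
  | nil => exact absurd rfl hne
  | cons h rest => simp [Walk.length_cons]

lemma length_pos_of_tail_mem {x y z' : V} (p : H.Walk x y) (h : z' ∈ p.support.tail) :
    1 ≤ p.length := by
  cases p with
  | nil => simp at h
  | cons h rest => simp [Walk.length_cons]

lemma oddClosedWalk_to_trail : ∀ (n : ℕ) {c : V} (w : H.Walk c c), w.length ≤ n →
    Odd w.length →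
    ∃ (z : V) (R : H.Walk z z), R.IsTrail ∧ Odd R.length ∧ z ∈ w.support := by
  intro n
  induction n using Nat.strong_induction_on with
  | _ n ih =>
    intro c w hlen hodd
    by_cases hnd : w.support.tail.Nodup
    · exact ⟨c, w, closed_tail_nodup_trail w hodd hnd, hodd, w.start_mem_support⟩
    obtain ⟨z, hz⟩ := List.exists_duplicate_iff_not_nodup.mpr hnd
    have hcount2 : 2 ≤ w.support.tail.count z := List.duplicate_iff_two_le_count.mp hz
    have hzs : z ∈ w.support := List.mem_of_mem_tail hz.mem
    have hsupcount : 2 ≤ w.support.count z := by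
      rw [w.support_eq_cons, List.count_cons]
      omega
    have hspec := w.take_spec hzs
    have hcount1 : (w.takeUntil z hzs).support.count z = 1 :=
      w.count_support_takeUntil_eq_one hzs
    have hsupp : w.support = (w.takeUntil z hzs).support ++ (w.dropUntil z hzs).support.tail := by
      conv_lhs => rw [← hspec]
      rw [Walk.support_append]
    have hc23 : 1 ≤ (w.dropUntil z hzs).support.tail.count z := by
      have h2 := hsupcount
      rw [hsupp, List.count_append, hcount1] at h2
      omega
    have hmem23 : z ∈ (w.dropUntil z hzs).support.tail := List.count_pos_iff.mp (by omega)
    obtain ⟨m, h', rest, hw23⟩ := walk_cons_of_tail_mem (w.dropUntil z hzs) hmem23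
    have hzr : z ∈ rest.support := by
      have : (w.dropUntil z hzs).support.tail = rest.support := by rw [hw23]; simp
      exact List.count_pos_iff.mp (by rw [← this]; omega)
    -- the two closed walks
    set A : H.Walk z z := Walk.cons h' (rest.takeUntil z hzr) with hA
    set B : H.Walk c c := (w.takeUntil z hzs).append (rest.dropUntil z hzr) with hB
    have hrlen : rest.length = (rest.takeUntil z hzr).length + (rest.dropUntil z hzr).length := by
      conv_lhs => rw [← rest.take_spec hzr]
      rw [Walk.length_append]
    have hwlen : w.length = (w.takeUntil z hzs).length + (w.dropUntil z hzs).length := by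
      conv_lhs => rw [← hspec]
      rw [Walk.length_append]
    have hdlen : (w.dropUntil z hzs).length = rest.length + 1 := by rw [hw23]; simp
    have htot : A.length + B.length = w.length := by
      rw [hA, hB]
      simp only [Walk.length_cons, Walk.length_append]
      omega
    have hBpos : 1 ≤ B.length := by
      rw [hB, Walk.length_append]
      by_cases hzc : z = c
      · subst hzc
        have hc3 : 3 ≤ w.support.count z := by
          rw [w.support_eq_cons, List.count_cons_self]
          omega
        have h2 : 2 ≤ (w.dropUntil z hzs).support.tail.count z := by
          rw [hsupp, List.count_append, hcount1] at hc3
          omega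
        have hrsup : (w.dropUntil z hzs).support.tail = rest.support := by rw [hw23]; simp
        rw [hrsup] at h2
        have hrspec : rest.support
            = (rest.takeUntil z hzr).support ++ (rest.dropUntil z hzr).support.tail := by
          conv_lhs => rw [← rest.take_spec hzr]
          rw [Walk.support_append]
        rw [hrspec, List.count_append, rest.count_support_takeUntil_eq_one hzr] at h2
        have hmemd : z ∈ (rest.dropUntil z hzr).support.tail := List.count_pos_iff.mp (by omega)
        have := length_pos_of_tail_mem _ hmemd
        omega
      · have := length_pos_of_ne (w.takeUntil z hzs) (fun h => hzc h.symm)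
        omega
    have hApos : 1 ≤ A.length := by rw [hA]; simp [Walk.length_cons]
    -- supports contained in w.support
    have hAsub : A.support ⊆ w.support := by
      rw [hA]
      intro v hv
      rw [Walk.support_cons, List.mem_cons] at hv
      rcases hv with rfl | hv
      · exact hzs
      · have h1 : v ∈ rest.support := rest.support_takeUntil_subset hzr hv
        have h2 : v ∈ (w.dropUntil z hzs).support := by
          rw [hw23, Walk.support_cons]
          exact List.mem_cons_of_mem _ h1
        exact w.support_dropUntil_subset hzs h2
    have hBsub : B.support ⊆ w.support := by
      rw [hB]
      intro v hv
      rw [Walk.mem_support_append_iff] at hv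
      rcases hv with hv | hv
      · exact w.support_takeUntil_subset hzs hv
      · have h1 : v ∈ rest.support := rest.support_dropUntil_subset hzr hv
        have h2 : v ∈ (w.dropUntil z hzs).support := by
          rw [hw23, Walk.support_cons]
          exact List.mem_cons_of_mem _ h1
        exact w.support_dropUntil_subset hzs h2
    rcases Nat.even_or_odd A.length with hAe | hAo
    · -- B odd
      have hBo : Odd B.length := by
        rcases Nat.even_or_odd B.length with hBe | hBo
        · exfalso
          rw [← htot] at hodd
          rcases hodd with ⟨t, ht⟩
          rcases hAe with ⟨t1, ht1⟩
          rcases hBe with ⟨t2, ht2⟩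
          omega
        · exact hBo
      obtain ⟨z', R, h1, h2, h3⟩ := ih B.length (by omega) B (le_refl _) hBo
      exact ⟨z', R, h1, h2, hBsub h3⟩
    · obtain ⟨z', R, h1, h2, h3⟩ := ih A.length (by omega) A (le_refl _) hAo
      exact ⟨z', R, h1, h2, hAsub h3⟩

end Walks

section Restrict

lemma exc {K : SimpleGraph V} (u v : V) : ∀ {p q : V} (w : K.Walk p q),
    (K.deleteEdges {s(u,v)}).Reachable p q ∨ (K.deleteEdges {s(u,v)}).Reachable p u ∨
      (K.deleteEdges {s(u,v)}).Reachable p v := by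
  intro p q w
  induction w with
  | nil => exact Or.inl (Reachable.refl _)
  | @cons a m b h rest ih =>
    by_cases he : s(a, m) = s(u, v)
    · rw [Sym2.eq_iff] at he
      rcases he with ⟨rfl, rfl⟩ | ⟨rfl, rfl⟩
      · exact Or.inr (Or.inl (Reachable.refl _))
      · exact Or.inr (Or.inr (Reachable.refl _))
    · have hadj : (K.deleteEdges {s(u,v)}).Adj a m := by
        rw [deleteEdges_adj]
        exact ⟨h, by simpa using he⟩
      rcases ih with h1 | h1 | h1
      · exact Or.inl (hadj.reachable.trans h1)
      · exact Or.inr (Or.inl (hadj.reachable.trans h1))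
      · exact Or.inr (Or.inr (hadj.reachable.trans h1))

/-- The graph `K` restricted to the connected component of `a`. -/
def restrict (K : SimpleGraph V) (a : V) : SimpleGraph V where
  Adj u v := K.Adj u v ∧ K.Reachable a u ∧ K.Reachable a v
  symm := ⟨fun u v ⟨h, h1, h2⟩ => ⟨h.symm, h2, h1⟩⟩
  loopless := ⟨fun u ⟨h, _, _⟩ => K.loopless.irrefl u h⟩

lemma restrict_le {K : SimpleGraph V} {a : V} : restrict K a ≤ K := fun _ _ h => h.1

lemma restrict_adj {K : SimpleGraph V} {a u v : V} :
    (restrict K a).Adj u v ↔ K.Adj u v ∧ K.Reachable a u ∧ K.Reachable a v := Iff.rfl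

lemma reachable_restrict_del {K : SimpleGraph V} {a : V} (E0 : Set (Sym2 V)) :
    ∀ {p q : V} (_ : (K.deleteEdges E0).Walk p q), K.Reachable a p →
      ((restrict K a).deleteEdges E0).Reachable p q := by
  intro p q w
  induction w with
  | nil => exact fun _ => Reachable.refl _
  | @cons x m y h rest ih =>
    intro hp
    rw [deleteEdges_adj] at h
    have hm : K.Reachable a m := hp.trans h.1.reachable
    have hadj : ((restrict K a).deleteEdges E0).Adj x m := by
      rw [deleteEdges_adj]
      exact ⟨⟨h.1, hp, hm⟩, h.2⟩
    exact hadj.reachable.trans (ih hm)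

lemma reachable_restrict {K : SimpleGraph V} {a : V} :
    ∀ {p q : V} (_ : K.Walk p q), K.Reachable a p → (restrict K a).Reachable p q := by
  intro p q w
  induction w with
  | nil => exact fun _ => Reachable.refl _
  | @cons x m y h rest ih =>
    intro hp
    have hm : K.Reachable a m := hp.trans h.reachable
    exact (Adj.reachable (show (restrict K a).Adj x m from ⟨h, hp, hm⟩)).trans (ih hm)

noncomputable def ndeg (H : SimpleGraph V) (v : V) : ℕ := (H.neighborSet v).ncard

lemma ndeg_restrict_of_reachable {K : SimpleGraph V} {a v : V} (h : K.Reachable a v) :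
    ndeg (restrict K a) v = ndeg K v := by
  unfold ndeg
  congr 1
  ext w
  simp only [mem_neighborSet, restrict_adj]
  exact ⟨fun h' => h'.1, fun h' => ⟨h', h, h.trans h'.reachable⟩⟩

lemma ndeg_restrict_of_not_reachable {K : SimpleGraph V} {a v : V} (h : ¬K.Reachable a v) :
    ndeg (restrict K a) v = 0 := by
  unfold ndeg
  convert Set.ncard_empty V
  ext w
  simp only [mem_neighborSet, restrict_adj, Set.mem_empty_iff_false, iff_false]
  exact fun h' => h h'.2.1

lemma ndeg_deleteEdges_endpoint [Fintype V] {K : SimpleGraph V} {u v : V} (h : K.Adj u v) :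
    ndeg (K.deleteEdges {s(u,v)}) u + 1 = ndeg K u := by
  unfold ndeg
  have hset : (K.deleteEdges {s(u,v)}).neighborSet u = K.neighborSet u \ {v} := by
    ext w
    simp only [mem_neighborSet, deleteEdges_adj, Set.mem_diff, Set.mem_singleton_iff,
      Set.mem_setOf_eq]
    constructor
    · rintro ⟨h1, h2⟩
      exact ⟨h1, fun hw => h2 (by rw [hw])⟩
    · rintro ⟨h1, h2⟩
      exact ⟨h1, fun hw => h2 (Sym2.congr_right.mp hw)⟩
  rw [hset]
  exact Set.ncard_diff_singleton_add_one (by rwa [mem_neighborSet]) (Set.toFinite _)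

lemma ndeg_deleteEdges_other [Fintype V] {K : SimpleGraph V} {u v w : V} (hu : w ≠ u)
    (hv : w ≠ v) : ndeg (K.deleteEdges {s(u,v)}) w = ndeg K w := by
  unfold ndeg
  congr 1
  ext x
  simp only [mem_neighborSet, deleteEdges_adj, Set.mem_singleton_iff]
  constructor
  · exact fun h' => h'.1
  · intro h'
    refine ⟨h', fun hmem => ?_⟩
    rw [Sym2.eq_iff] at hmem
    rcases hmem with ⟨h1, _⟩ | ⟨h1, _⟩
    · exact hu h1
    · exact hv h1

lemma ndeg_eq_degree [Fintype V] {K : SimpleGraph V} [DecidableRel K.Adj] (v : V) :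
    ndeg K v = K.degree v := by
  unfold ndeg
  rw [Set.ncard_eq_toFinset_card', Set.toFinset_card, card_neighborSet_eq_degree]

/-- Sum of degrees over one side of a "crossing" bipartition equals the number of edges. -/
lemma degsum [Fintype V] (H : SimpleGraph V) (A : Finset V)
    (hcross : ∀ u v, H.Adj u v → (u ∈ A ↔ v ∉ A)) :
    ∑ v ∈ A, ndeg H v = H.edgeSet.ncard := by
  classical
  have hd : ∀ v ∈ A, ndeg H v = H.degree v := fun v _ => ndeg_eq_degree v
  rw [Finset.sum_congr rfl hd]
  have h1 : ∀ v : V, H.degree v = (Finset.univ.filter fun d : H.Dart => d.fst = v).card :=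
    fun v => (H.dart_fst_fiber_card_eq_degree v).symm
  rw [Finset.sum_congr rfl fun v _ => h1 v]
  have hdisj : ∀ x ∈ A, ∀ y ∈ A, x ≠ y →
      Disjoint (Finset.univ.filter fun d : H.Dart => d.fst = x)
        (Finset.univ.filter fun d : H.Dart => d.fst = y) := by
    intro x _ y _ hxy
    simp only [Finset.disjoint_left, Finset.mem_filter]
    rintro d ⟨_, rfl⟩ ⟨_, h⟩
    exact hxy h
  rw [← Finset.card_biUnion hdisj]
  have hbi : A.biUnion (fun v => Finset.univ.filter fun d : H.Dart => d.fst = v)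
      = Finset.univ.filter fun d : H.Dart => d.fst ∈ A := by
    ext d
    simp only [Finset.mem_biUnion, Finset.mem_filter, Finset.mem_univ, true_and]
    constructor
    · rintro ⟨v, hv, rfl⟩
      exact hv
    · intro hd
      exact ⟨d.fst, hd, rfl⟩
  rw [hbi]
  have hcard : (Finset.univ.filter fun d : H.Dart => d.fst ∈ A).card = H.edgeFinset.card := by
    apply Finset.card_bij (fun d _ => d.edge)
    · intro d _
      rw [mem_edgeFinset]
      exact d.edge_mem
    · intro d1 h1 d2 h2 heq
      rcases (dart_edge_eq_iff d1 d2).mp heq with h | h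
      · exact h
      · exfalso
        rw [Finset.mem_filter] at h1 h2
        have hfst : d1.fst = d2.snd := by rw [h]; rfl
        have := (hcross d2.fst d2.snd d2.adj).mp h2.2
        rw [← hfst] at this
        exact this h1.2
    · intro e he
      rw [mem_edgeFinset] at he
      induction e with
      | _ x y =>
        have hadj : H.Adj x y := he
        by_cases hx : x ∈ A
        · exact ⟨⟨(x, y), hadj⟩, Finset.mem_filter.mpr ⟨Finset.mem_univ _, hx⟩, rfl⟩
        · have hy : y ∈ A := by
            by_contra hy
            exact hx ((hcross x y hadj).mpr hy)
          exact ⟨⟨(y, x), hadj.symm⟩, Finset.mem_filter.mpr ⟨Finset.mem_univ _, hy⟩,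
            Sym2.eq_swap⟩
  rw [hcard, ← Set.ncard_coe_finset, coe_edgeFinset]

end Restrict

lemma restrict_edge_reach {K : SimpleGraph V} {c : V} {e : Sym2 V}
    (he : e ∈ (restrict K c).edgeSet) : ∀ w ∈ e, K.Reachable c w := by
  induction e with
  | _ x y =>
    intro w hw
    have hadj : (restrict K c).Adj x y := he
    rcases Sym2.mem_iff.mp hw with rfl | rfl
    · exact hadj.2.1
    · exact hadj.2.2

/-- The bundled hypotheses of the main induction. -/
structure Hyp (k : ℕ) (H : SimpleGraph V) (a b : V) : Prop where
  hre : ∀ u v : V, H.Adj u v → H.Reachable a u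
  hab : H.Reachable a b
  hdeg : ∀ v : V, v ≠ a → v ≠ b → k ∣ ndeg H v
  hdega : a = b → k ∣ ndeg H a + 2
  hdegb : a ≠ b → k ∣ ndeg H a + 1 ∧ k ∣ ndeg H b + 1
  hbr : ∀ u v : V, H.Adj u v → ¬(H.deleteEdges {s(u,v)}).Reachable u v →
      ¬(H.deleteEdges {s(u,v)}).Reachable a b

lemma hypSymm {k : ℕ} {H : SimpleGraph V} {a b : V} (hyp : Hyp k H a b) : Hyp k H b a where
  hre := fun u v h => hyp.hab.symm.trans (hyp.hre u v h)
  hab := hyp.hab.symm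
  hdeg := fun v hvb hva => hyp.hdeg v hva hvb
  hdega := fun h => by subst h; exact hyp.hdega rfl
  hdegb := fun h => ⟨(hyp.hdegb (Ne.symm h)).2, (hyp.hdegb (Ne.symm h)).1⟩
  hbr := fun u v h1 h2 h3 => hyp.hbr u v h1 h2 h3.symm

lemma pieceHyp [Fintype V] [DecidableEq V] {k : ℕ} {H : SimpleGraph V} {a b u0 v0 : V}
    (hyp : Hyp k H a b) (huv : H.Adj u0 v0)
    (hnr : ¬(H.deleteEdges {s(u0,v0)}).Reachable u0 v0)
    (hau : (H.deleteEdges {s(u0,v0)}).Reachable a u0)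
    (hbv : (H.deleteEdges {s(u0,v0)}).Reachable b v0) :
    Hyp k (restrict (H.deleteEdges {s(u0,v0)}) a) a u0 ∧
      (restrict (H.deleteEdges {s(u0,v0)}) a).edgeSet.ncard < H.edgeSet.ncard := by
  set H' := H.deleteEdges {s(u0,v0)} with hH'
  have hsep : ¬H'.Reachable a b := hyp.hbr u0 v0 huv hnr
  have hne : a ≠ b := fun h => hsep (h ▸ Reachable.refl a)
  have hav : ¬H'.Reachable a v0 := fun h => hnr (hau.symm.trans h)
  have hbu : ¬H'.Reachable b u0 := fun h => hsep (hau.trans h.symm)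
  constructor
  · refine ⟨?_, ?_, ?_, ?_, ?_, ?_⟩
    · -- hre
      intro p q hpq
      obtain ⟨w⟩ := hpq.2.1
      exact reachable_restrict w (Reachable.refl a)
    · -- hab
      obtain ⟨w⟩ := hau
      exact reachable_restrict w (Reachable.refl a)
    · -- hdeg
      intro v hva hvu0
      by_cases hrv : H'.Reachable a v
      · rw [ndeg_restrict_of_reachable hrv]
        have hvv0 : v ≠ v0 := fun h => hav (h ▸ hrv)
        have hvb : v ≠ b := fun h => hsep ((h ▸ hrv : H'.Reachable a b))
        rw [hH', ndeg_deleteEdges_other hvu0 hvv0]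
        exact hyp.hdeg v hva hvb
      · rw [ndeg_restrict_of_not_reachable hrv]
        exact dvd_zero k
    · -- hdega : a = u0
      intro h
      subst h
      rw [ndeg_restrict_of_reachable (Reachable.refl a)]
      have h2 := (hyp.hdegb hne).1
      rw [← ndeg_deleteEdges_endpoint huv] at h2
      exact h2
    · -- hdegb : a ≠ u0
      intro hneau0
      constructor
      · rw [ndeg_restrict_of_reachable (Reachable.refl a)]
        have hav0 : a ≠ v0 := fun h => hav (h ▸ Reachable.refl a)
        rw [hH', ndeg_deleteEdges_other hneau0 hav0]
        exact (hyp.hdegb hne).1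
      · rw [ndeg_restrict_of_reachable hau]
        have hu0b : u0 ≠ b := fun h => hbu (by rw [h])
        have h2 := hyp.hdeg u0 (Ne.symm hneau0) hu0b
        rw [← ndeg_deleteEdges_endpoint huv] at h2
        exact h2
    · -- hbr
      intro p q hpq hnpq hcon
      have hHpq : H.Adj p q := hpq.1.1
      have hap : H'.Reachable a p := hpq.2.1
      have haq : H'.Reachable a q := hpq.2.2
      have hfg : s(u0,v0) ≠ s(p,q) := by
        intro h
        rw [Sym2.eq_iff] at h
        rcases h with ⟨h1, h2⟩ | ⟨h1, h2⟩
        · exact hav (by rw [h2]; exact haq)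
        · exact hav (by rw [h2]; exact hap)
      have hA : ¬(H.deleteEdges {s(p,q)}).Reachable p q := by
        intro hHg
        have hEq : (H.deleteEdges {s(p,q)}).deleteEdges {s(u0,v0)}
            = H'.deleteEdges {s(p,q)} := by
          rw [hH', deleteEdges_deleteEdges, deleteEdges_deleteEdges, Set.union_comm]
        have hle : H'.deleteEdges {s(p,q)} ≤ H' := deleteEdges_le _
        have hdown : (H'.deleteEdges {s(p,q)}).Reachable p q → False := by
          intro hPQ
          obtain ⟨w'⟩ := hPQ
          exact hnpq (reachable_restrict_del {s(p,q)} w' hap)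
        obtain ⟨w⟩ := hHg
        have h1 := exc u0 v0 w
        rw [hEq] at h1
        have h2 := exc u0 v0 w.reverse
        rw [hEq] at h2
        rcases h1 with h1 | h1 | h1
        · exact hdown h1
        · rcases h2 with h2 | h2 | h2
          · exact hdown h2.symm
          · exact hdown (h1.trans h2.symm)
          · exact absurd (haq.trans (h2.mono hle)) hav
        · exact absurd (hap.trans (h1.mono hle)) hav
      have hB : ¬(H.deleteEdges {s(p,q)}).Reachable a b := hyp.hbr p q hHpq hA
      apply hB
      have h1 : (H.deleteEdges {s(p,q)}).Reachable a u0 := by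
        refine hcon.mono ?_
        intro x y hxy
        rw [deleteEdges_adj] at hxy ⊢
        exact ⟨hxy.1.1.1, hxy.2⟩
      have h2 : (H.deleteEdges {s(p,q)}).Adj u0 v0 := by
        rw [deleteEdges_adj]
        exact ⟨huv, by simpa using hfg⟩
      have h3 : (H.deleteEdges {s(p,q)}).Reachable v0 b := by
        obtain ⟨w2⟩ := hbv
        have hedges : ∀ e ∈ w2.edges, e ∈ (H.deleteEdges {s(p,q)}).edgeSet := by
          intro e he
          rw [edgeSet_deleteEdges]
          have he1 : e ∈ H'.edgeSet := Walk.edges_subset_edgeSet w2 he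
          rw [hH', edgeSet_deleteEdges] at he1
          refine ⟨he1.1, ?_⟩
          intro hm
          rw [Set.mem_singleton_iff] at hm
          have hpe : p ∈ e := by rw [hm]; simp
          have hps : p ∈ w2.support := mem_support_of_mem_edges he hpe
          have hbp : H'.Reachable b p := ⟨w2.takeUntil p hps⟩
          exact hsep (hap.trans hbp.symm)
        exact Reachable.symm ⟨w2.transfer _ hedges⟩
      exact (h1.trans h2.reachable).trans h3
  · -- size decreases
    have hsub : (restrict H' a).edgeSet ⊆ H.edgeSet :=
      edgeSet_mono (le_trans restrict_le (by rw [hH']; exact deleteEdges_le _))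
    have hfH : s(u0,v0) ∈ H.edgeSet := huv
    have hfHx : s(u0,v0) ∉ (restrict H' a).edgeSet := by
      intro hmem
      exact hav (restrict_edge_reach hmem v0 (by simp))
    exact Set.ncard_lt_ncard ⟨hsub, fun h => hfHx (h hfH)⟩ (Set.toFinite _)

lemma bridgeStep [Fintype V] [DecidableEq V] {k : ℕ} {H : SimpleGraph V} {a b u0 v0 : V}
    (hyp : Hyp k H a b) (huv : H.Adj u0 v0)
    (hnr : ¬(H.deleteEdges {s(u0,v0)}).Reachable u0 v0)
    (hau : (H.deleteEdges {s(u0,v0)}).Reachable a u0)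
    (ih : ∀ (H' : SimpleGraph V) (a' b' : V), H'.edgeSet.ncard < H.edgeSet.ncard →
        Hyp k H' a' b' → ∃ T : H'.Walk a' b', T.IsTrail ∧ Odd T.length) :
    ∃ T : H.Walk a b, T.IsTrail ∧ Odd T.length := by
  set H' := H.deleteEdges {s(u0,v0)} with hH'
  have hsep : ¬H'.Reachable a b := hyp.hbr u0 v0 huv hnr
  have hav : ¬H'.Reachable a v0 := fun h => hnr (hau.symm.trans h)
  have hbu : ¬H'.Reachable b u0 := fun h => hsep (hau.trans h.symm)
  have hbv : H'.Reachable b v0 := by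
    have hHbv : H.Reachable b v0 := hyp.hab.symm.trans (hyp.hre v0 u0 huv.symm)
    obtain ⟨w⟩ := hHbv
    rcases exc u0 v0 w with h | h | h
    · exact h
    · exact absurd h hbu
    · exact h
  -- piece X
  obtain ⟨hypX, hsizeX⟩ := pieceHyp hyp huv hnr hau hbv
  obtain ⟨T1, hT1t, hT1o⟩ := ih _ a u0 hsizeX hypX
  -- piece Y (swapped)
  have hswap : s(v0, u0) = s(u0, v0) := Sym2.eq_swap
  have hnr' : ¬(H.deleteEdges {s(v0,u0)}).Reachable v0 u0 := by
    rw [hswap]; exact fun h => hnr h.symm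
  have hbv' : (H.deleteEdges {s(v0,u0)}).Reachable b v0 := by rw [hswap]; exact hbv
  have hau' : (H.deleteEdges {s(v0,u0)}).Reachable a u0 := by rw [hswap]; exact hau
  obtain ⟨hypY, hsizeY⟩ := pieceHyp (hypSymm hyp) huv.symm hnr' hbv' hau'
  have hresY : ∃ T : (restrict (H.deleteEdges {s(v0,u0)}) b).Walk b v0,
      T.IsTrail ∧ Odd T.length := ih _ b v0 hsizeY hypY
  rw [hswap] at hresY
  obtain ⟨T2pre, hT2t, hT2o⟩ := hresY
  -- lift to H and combine
  have hT1edges : ∀ e ∈ T1.edges, e ∈ H.edgeSet := by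
    intro e he
    exact edgeSet_mono (le_trans restrict_le (deleteEdges_le _)) (Walk.edges_subset_edgeSet T1 he)
  have hT2edges : ∀ e ∈ T2pre.reverse.edges, e ∈ H.edgeSet := by
    intro e he
    exact edgeSet_mono (le_trans restrict_le (deleteEdges_le _))
      (Walk.edges_subset_edgeSet T2pre.reverse he)
  set T1' := T1.transfer H hT1edges with hT1'def
  set T2' := T2pre.reverse.transfer H hT2edges with hT2'def
  refine ⟨T1'.append (Walk.cons huv T2'), ?_, ?_⟩
  · rw [Walk.isTrail_def, Walk.edges_append, Walk.edges_cons, Walk.edges_transfer,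
      Walk.edges_transfer, Walk.edges_reverse]
    have hnd1 : T1.edges.Nodup := hT1t.edges_nodup
    have hnd2 : T2pre.edges.reverse.Nodup := by
      rw [List.nodup_reverse]; exact hT2t.edges_nodup
    refine List.Nodup.append hnd1 (List.nodup_cons.mpr ⟨?_, hnd2⟩) ?_
    · -- f ∉ T2 edges
      intro hmem
      rw [List.mem_reverse] at hmem
      have := restrict_edge_reach (Walk.edges_subset_edgeSet T2pre hmem) u0 (by simp)
      exact hbu this
    · -- disjointness
      intro e he1 he2
      have hra := restrict_edge_reach (Walk.edges_subset_edgeSet T1 he1)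
      rcases List.mem_cons.mp he2 with rfl | he2'
      · exact hav (hra v0 (by simp))
      · rw [List.mem_reverse] at he2'
        have hrb := restrict_edge_reach (Walk.edges_subset_edgeSet T2pre he2')
        induction e with
        | _ x y => exact hsep ((hra x (by simp)).trans (hrb x (by simp)).symm)
  · rw [Walk.length_append, Walk.length_cons, Walk.length_transfer, Walk.length_transfer,
      Walk.length_reverse]
    rcases hT1o with ⟨t1, ht1⟩
    rcases hT2o with ⟨t2, ht2⟩
    rw [Nat.odd_iff]
    omega

lemma main [Fintype V] [DecidableEq V] {k : ℕ} (hk : 3 ≤ k) :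
    ∀ (n : ℕ) (H : SimpleGraph V) (a b : V), H.edgeSet.ncard ≤ n → Hyp k H a b →
    ∃ T : H.Walk a b, T.IsTrail ∧ Odd T.length := by
  intro n
  induction n using Nat.strong_induction_on with
  | _ n ih =>
    intro H a b hn hyp
    by_cases hbridge : ∃ u v : V, H.Adj u v ∧ ¬(H.deleteEdges {s(u,v)}).Reachable u v
    · obtain ⟨u0, v0, huv, hnr⟩ := hbridge
      have hihloc : ∀ (H' : SimpleGraph V) (a' b' : V),
          H'.edgeSet.ncard < H.edgeSet.ncard → Hyp k H' a' b' →
          ∃ T : H'.Walk a' b', T.IsTrail ∧ Odd T.length := by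
        intro H' a' b' hlt hyp'
        exact ih H'.edgeSet.ncard (lt_of_lt_of_le hlt hn) H' a' b' (le_refl _) hyp'
      have hor : (H.deleteEdges {s(u0,v0)}).Reachable a u0 ∨
          (H.deleteEdges {s(u0,v0)}).Reachable a v0 := by
        obtain ⟨w⟩ := hyp.hre u0 v0 huv
        rcases exc u0 v0 w with h | h | h
        · exact Or.inl h
        · exact Or.inl h
        · exact Or.inr h
      rcases hor with hau | hav
      · exact bridgeStep hyp huv hnr hau hihloc
      · have hswap : s(v0, u0) = s(u0, v0) := Sym2.eq_swap
        refine bridgeStep (u0 := v0) (v0 := u0) hyp huv.symm ?_ ?_ hihloc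
        · rw [hswap]; exact fun h => hnr h.symm
        · rw [hswap]; exact hav
    · push_neg at hbridge
      by_cases hodd : ∃ (c : V) (w : H.Walk c c), H.Reachable a c ∧ Odd w.length
      · obtain ⟨c, w, hac, hwodd⟩ := hodd
        obtain ⟨z, R, hRt, hRodd, hzsup⟩ :=
          oddClosedWalk_to_trail w.length w (le_refl _) hwodd
        have haz : H.Reachable a z := hac.trans ⟨w.takeUntil z hzsup⟩
        exact oddTrail_bridgeless hbridge R hRt hRodd haz hyp.hab
      · push_neg at hodd
        classical
        obtain ⟨Q0⟩ := hyp.hab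
        set Q := Q0.bypass with hQdef
        have hQp : Q.IsPath := Q0.bypass_isPath
        rcases Nat.even_or_odd Q.length with hQev | hQodd
        · exfalso
          -- counting argument
          set A : Finset V := Finset.univ.filter
            (fun v => ∃ w : H.Walk a v, Even w.length) with hAdef
          have hmemA : ∀ v : V, v ∈ A ↔ ∃ w : H.Walk a v, Even w.length := by
            intro v
            rw [hAdef, Finset.mem_filter]
            simp
          have hcross : ∀ u v, H.Adj u v → (u ∈ A ↔ v ∉ A) := by
            intro u v huv
            constructor
            · intro huA hvA
              obtain ⟨w1, hw1⟩ := (hmemA u).mp huA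
              obtain ⟨w2, hw2⟩ := (hmemA v).mp hvA
              have hcw : Odd ((w1.append (Walk.cons huv Walk.nil)).append w2.reverse).length := by
                rw [Walk.length_append, Walk.length_append, Walk.length_cons,
                  Walk.length_nil, Walk.length_reverse, Nat.odd_iff]
                rcases hw1 with ⟨t1, ht1⟩
                rcases hw2 with ⟨t2, ht2⟩
                omega
              exact hodd a _ (Reachable.refl a) hcw
            · intro hvA
              obtain ⟨w⟩ := hyp.hre u v huv
              rcases Nat.even_or_odd w.length with hev | hod
              · exact (hmemA u).mpr ⟨w, hev⟩
              · exfalso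
                apply hvA
                refine (hmemA v).mpr ⟨w.append (Walk.cons huv Walk.nil), ?_⟩
                rw [Walk.length_append, Walk.length_cons, Walk.length_nil, Nat.even_iff]
                rcases hod with ⟨t, ht⟩
                omega
          have hcross' : ∀ u v, H.Adj u v → (u ∈ Aᶜ ↔ v ∉ Aᶜ) := by
            intro u v huv
            rw [Finset.mem_compl, Finset.mem_compl, not_not]
            have h1 := hcross u v huv
            have h2 := hcross v u huv.symm
            tauto
          have haA : a ∈ A := (hmemA a).mpr ⟨Walk.nil, by simp⟩
          have hbA : b ∈ A := (hmemA b).mpr ⟨Q, hQev⟩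
          have hsum1 : ∑ v ∈ A, ndeg H v = H.edgeSet.ncard := degsum H A hcross
          have hsum2 : ∑ v ∈ Aᶜ, ndeg H v = H.edgeSet.ncard := degsum H Aᶜ hcross'
          have hdvd2 : k ∣ ∑ v ∈ Aᶜ, ndeg H v := by
            refine Finset.dvd_sum ?_
            intro v hv
            rw [Finset.mem_compl] at hv
            exact hyp.hdeg v (fun h => hv (h ▸ haA)) (fun h => hv (h ▸ hbA))
          have hdvd1 : k ∣ (∑ v ∈ A, ndeg H v) + 2 := by
            by_cases hab' : a = b
            · rw [← Finset.add_sum_erase A _ haA]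
              have heq : ndeg H a + ∑ v ∈ A.erase a, ndeg H v + 2
                  = (ndeg H a + 2) + ∑ v ∈ A.erase a, ndeg H v := by ring
              rw [heq]
              refine dvd_add (hyp.hdega hab') (Finset.dvd_sum ?_)
              intro v hv
              rw [Finset.mem_erase] at hv
              exact hyp.hdeg v hv.1 (fun h => hv.1 (h.trans hab'.symm))
            · have hbmem : b ∈ A.erase a := Finset.mem_erase.mpr ⟨Ne.symm hab', hbA⟩
              rw [← Finset.add_sum_erase A _ haA, ← Finset.add_sum_erase _ _ hbmem]
              have heq : ndeg H a + (ndeg H b + ∑ v ∈ (A.erase a).erase b, ndeg H v) + 2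
                  = (ndeg H a + 1) + (ndeg H b + 1)
                    + ∑ v ∈ (A.erase a).erase b, ndeg H v := by ring
              rw [heq]
              refine dvd_add (dvd_add (hyp.hdegb hab').1 (hyp.hdegb hab').2)
                (Finset.dvd_sum ?_)
              intro v hv
              rw [Finset.mem_erase, Finset.mem_erase] at hv
              exact hyp.hdeg v hv.2.1 hv.1
          rw [hsum1] at hdvd1
          rw [hsum2] at hdvd2
          have hk2 : k ∣ 2 := by
            have := Nat.dvd_sub hdvd1 hdvd2
            rwa [show H.edgeSet.ncard + 2 - H.edgeSet.ncard = 2 by omega] at this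
          have := Nat.le_of_dvd (by norm_num) hk2
          omega
        · exact ⟨Q, hQp.isTrail, hQodd⟩

end EC

open EC

/-- If `G` is 2-edge-connected and every vertex degree is divisible by some
`k ≥ 3`, then every edge of `G` is contained in an even circuit. -/
theorem stmt_9 {V : Type*} [Fintype V] (G : SimpleGraph V) [DecidableRel G.Adj]
    (hG : TwoEdgeConnected G) (k : ℕ) (hk : 3 ≤ k) (hdeg : ∀ v : V, k ∣ G.degree v) :
    ∀ e ∈ G.edgeSet, ∃ (b : V) (D : G.Walk b b),
      D.IsCircuit ∧ Even D.length ∧ e ∈ D.edges := by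
  classical
  intro e he
  induction e with
  | _ x y =>
    have hxy : G.Adj x y := he
    have hxny : x ≠ y := hxy.ne
    set H := G.deleteEdges {s(x,y)} with hHdef
    have hHconn : H.Connected := hG.2 _ he
    have hyp : Hyp k H x y := by
      refine ⟨?_, ?_, ?_, ?_, ?_, ?_⟩
      · exact fun u v _ => hHconn.preconnected x u
      · exact hHconn.preconnected x y
      · intro v hvx hvy
        rw [hHdef, ndeg_deleteEdges_other hvx hvy, ndeg_eq_degree]
        exact hdeg v
      · intro h; exact absurd h hxny
      · intro _
        constructor
        · rw [hHdef]
          have h1 := ndeg_deleteEdges_endpoint hxy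
          rw [h1, ndeg_eq_degree]
          exact hdeg x
        · rw [hHdef]
          have hswap : s(y, x) = s(x, y) := Sym2.eq_swap
          have h1 := ndeg_deleteEdges_endpoint hxy.symm
          rw [hswap] at h1
          rw [h1, ndeg_eq_degree]
          exact hdeg y
      · intro u v huvH hnr hcon
        have huvG : G.Adj u v := huvH.1
        have hgE : s(u,v) ∈ G.edgeSet := huvG
        have hconnG : (G.deleteEdges {s(u,v)}).Connected := hG.2 _ hgE
        obtain ⟨w⟩ := hconnG.preconnected u v
        have hEq : (G.deleteEdges {s(u,v)}).deleteEdges {s(x,y)}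
            = H.deleteEdges {s(u,v)} := by
          rw [hHdef, deleteEdges_deleteEdges, deleteEdges_deleteEdges, Set.union_comm]
        have h1 := exc x y w
        rw [hEq] at h1
        have h2 := exc x y w.reverse
        rw [hEq] at h2
        rcases h1 with h1 | h1 | h1
        · exact hnr h1
        all_goals {
          rcases h2 with h2 | h2 | h2
          · exact hnr h2.symm
          all_goals first
            | exact hnr (h1.trans h2.symm)
            | exact hnr (h1.trans (hcon.trans h2.symm))
            | exact hnr (h1.trans (hcon.symm.trans h2.symm))
        }
    obtain ⟨T, hTt, hTodd⟩ := main hk H.edgeSet.ncard H x y (le_refl _) hyp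
    have hTedges : ∀ e' ∈ T.edges, e' ∈ G.edgeSet := by
      intro e' he'
      exact edgeSet_mono (deleteEdges_le _) (Walk.edges_subset_edgeSet T he')
    set T' := T.transfer G hTedges with hT'def
    refine ⟨y, Walk.cons hxy.symm T', ⟨⟨?_⟩, by simp⟩, ?_, ?_⟩
    · rw [Walk.edges_cons, Walk.edges_transfer]
      refine List.nodup_cons.mpr ⟨?_, hTt.edges_nodup⟩
      intro hmem
      have hin : s(y,x) ∈ H.edgeSet := Walk.edges_subset_edgeSet T hmem
      rw [hHdef, edgeSet_deleteEdges] at hin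
      exact hin.2 (Set.mem_singleton_iff.mpr Sym2.eq_swap)
    · rw [Walk.length_cons, Walk.length_transfer]
      rcases hTodd with ⟨t, ht⟩
      exact ⟨t + 1, by omega⟩
    · rw [Walk.edges_cons]
      rw [show s(y,x) = s(x,y) from Sym2.eq_swap]
      exact List.mem_cons_self
end

section
/- Let G be a 2-edge-connected k-regular simple graph with k ≥ 3. Then every edge of G is contained in a circuit of even length. -/
open SimpleGraph
namespace EC
variable {V : Type*} [DecidableEq V]
open SimpleGraph.Walk

set_option linter.unusedSectionVars false
section Toolkit
variable {K : SimpleGraph V}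

lemma mem_tail_support_of_mem {z x : V} (c : K.Walk z z) (hc : c.length ≠ 0)
    (hx : x ∈ c.support) : x ∈ c.support.tail := by
  cases c with
  | nil => simp at hc
  | cons h rest =>
    rw [Walk.support_cons] at hx ⊢
    simp only [List.tail_cons]
    rcases List.mem_cons.mp hx with rfl | hx
    · exact rest.end_mem_support
    · exact hx

lemma mem_support_rotate_s10 {z x y : V} (c : K.Walk z z) (hc : c.length ≠ 0) (hx : x ∈ c.support)
    (hy : y ∈ c.support) : y ∈ (c.rotate x hx).support := by
  have h1 : y ∈ c.support.tail := mem_tail_support_of_mem c hc hy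
  have h2 := (Walk.support_rotate c x hx).mem_iff.mpr h1
  exact List.mem_of_mem_tail h2

lemma length_rotate {z x : V} (c : K.Walk z z) (hx : x ∈ c.support) :
    (c.rotate x hx).length = c.length := by
  have := (Walk.rotate_edges c x hx).perm.length_eq
  rwa [Walk.length_edges, Walk.length_edges] at this

lemma exists_firstHit {a b : V} (S : Set V) (w : K.Walk a b) (h : ∃ x ∈ w.support, x ∈ S) :
    ∃ (c : V) (w1 : K.Walk a c) (w2 : K.Walk c b), c ∈ S ∧ w = w1.append w2 ∧
      ∀ x ∈ w1.support, x ∈ S → x = c := by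
  classical
  induction w with
  | nil =>
    obtain ⟨x, hx, hxS⟩ := h
    rw [Walk.support_nil, List.mem_singleton] at hx
    subst hx
    exact ⟨x, Walk.nil, Walk.nil, hxS, by simp, by simp⟩
  | @cons u v b hadj rest ih =>
    by_cases hu : u ∈ S
    · refine ⟨u, Walk.nil, Walk.cons hadj rest, hu, by simp, ?_⟩
      intro x hx _
      simpa using hx
    · have h' : ∃ x ∈ rest.support, x ∈ S := by
        obtain ⟨x, hx, hxS⟩ := h
        rw [Walk.support_cons, List.mem_cons] at hx
        rcases hx with rfl | hx
        · exact absurd hxS hu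
        · exact ⟨x, hx, hxS⟩
      obtain ⟨c, w1, w2, hcS, heq, hcond⟩ := ih h'
      refine ⟨c, Walk.cons hadj w1, w2, hcS, by rw [Walk.cons_append, heq], ?_⟩
      intro x hx hxS
      rw [Walk.support_cons, List.mem_cons] at hx
      rcases hx with rfl | hx
      · exact absurd hxS hu
      · exact hcond x hx hxS

lemma exists_lastHit {a b : V} (S : Set V) (w : K.Walk a b) (h : ∃ x ∈ w.support, x ∈ S) :
    ∃ (c : V) (w1 : K.Walk a c) (w2 : K.Walk c b), c ∈ S ∧ w = w1.append w2 ∧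
      ∀ x ∈ w2.support, x ∈ S → x = c := by
  obtain ⟨c, r1, r2, hcS, heq, hcond⟩ := exists_firstHit S w.reverse (by
    obtain ⟨x, hx, hxS⟩ := h; exact ⟨x, by simpa using hx, hxS⟩)
  refine ⟨c, r2.reverse, r1.reverse, hcS, ?_, ?_⟩
  · have := congrArg Walk.reverse heq
    rw [Walk.reverse_reverse, Walk.reverse_append] at this
    exact this
  · intro x hx hxS
    exact hcond x (by simpa using hx) hxS

lemma edges_disjoint_of_support_inter {a b c d : V} (w : K.Walk a b) (o : K.Walk c d) (x : V)
    (hsub : ∀ y ∈ w.support, y ∈ o.support → y = x) :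
    ∀ e ∈ w.edges, e ∉ o.edges := by
  intro e he heo
  induction e using Sym2.ind with
  | _ p q =>
    have hadj : K.Adj p q := w.adj_of_mem_edges he
    have hp : p = x := hsub p (w.fst_mem_support_of_mem_edges he) (o.fst_mem_support_of_mem_edges heo)
    have hq : q = x := hsub q (w.snd_mem_support_of_mem_edges he) (o.snd_mem_support_of_mem_edges heo)
    subst hp; subst hq
    exact K.irrefl hadj

end Toolkit

section Del
variable {K : SimpleGraph V}

lemma reachable_delete_cases {c d a b : V} (w : K.Walk a b) :
    (K.deleteEdges {s(c,d)}).Reachable a b ∨ (K.deleteEdges {s(c,d)}).Reachable a c ∨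
      (K.deleteEdges {s(c,d)}).Reachable a d := by
  induction w with
  | nil => exact Or.inl (Reachable.refl _)
  | @cons u x b hadj rest ih =>
    by_cases he : s(u, x) = s(c, d)
    · rw [Sym2.eq_iff] at he
      rcases he with ⟨rfl, rfl⟩ | ⟨rfl, rfl⟩
      · exact Or.inr (Or.inl (Reachable.refl _))
      · exact Or.inr (Or.inr (Reachable.refl _))
    · have hstep : (K.deleteEdges {s(c,d)}).Adj u x := by
        rw [SimpleGraph.deleteEdges_adj]
        exact ⟨hadj, by simpa using he⟩
      rcases ih with h | h | h
      · exact Or.inl (hstep.reachable.trans h)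
      · exact Or.inr (Or.inl (hstep.reachable.trans h))
      · exact Or.inr (Or.inr (hstep.reachable.trans h))

lemma reachable_delete_patch {c d a b : V} (w : K.Walk a b)
    (hcd : (K.deleteEdges {s(c,d)}).Reachable c d) :
    (K.deleteEdges {s(c,d)}).Reachable a b := by
  induction w with
  | nil => exact Reachable.refl _
  | @cons u x b hadj rest ih =>
    refine Reachable.trans ?_ ih
    by_cases he : s(u, x) = s(c, d)
    · rw [Sym2.eq_iff] at he
      rcases he with ⟨rfl, rfl⟩ | ⟨rfl, rfl⟩
      · exact hcd
      · exact hcd.symm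
    · refine Adj.reachable ?_
      rw [SimpleGraph.deleteEdges_adj]
      exact ⟨hadj, by simpa using he⟩

lemma exists_splitEdge {a b : V} (w : K.Walk a b) {f : Sym2 V} (hf : f ∈ w.edges) :
    ∃ (c d : V) (w1 : K.Walk a c) (hadj : K.Adj c d) (w2 : K.Walk d b),
      w = w1.append (Walk.cons hadj w2) ∧ s(c, d) = f := by
  induction w with
  | nil => simp at hf
  | @cons u x b hadj rest ih =>
    by_cases he : s(u, x) = f
    · exact ⟨u, x, Walk.nil, hadj, rest, by simp, he⟩
    · have hf' : f ∈ rest.edges := by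
        rw [Walk.edges_cons, List.mem_cons] at hf
        rcases hf with rfl | hf
        · exact absurd rfl he
        · exact hf
      obtain ⟨c, d, w1, hadj', w2, heq, hsd⟩ := ih hf'
      exact ⟨c, d, Walk.cons hadj w1, hadj', w2, by rw [Walk.cons_append, heq], hsd⟩

lemma reachable_endpoints_of_trail {p q c d : V} (O : K.Walk p q) (hpq : p = q)
    (hO : O.IsTrail) (hf : s(c,d) ∈ O.edges) :
    (K.deleteEdges {s(c,d)}).Reachable c d := by
  subst hpq
  obtain ⟨c', d', w1, hadj', w2, heq, hsd⟩ := exists_splitEdge O hf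
  have hnodup := hO.edges_nodup
  rw [heq, Walk.edges_append, Walk.edges_cons] at hnodup
  have hdisj := List.disjoint_of_nodup_append hnodup
  have h1 : s(c', d') ∉ w1.edges := fun hmem => hdisj hmem (List.mem_cons_self)
  have h2 : s(c', d') ∉ w2.edges := by
    have := (List.nodup_append.mp hnodup).2.1
    exact (List.nodup_cons.mp this).1
  have hw : (K.deleteEdges {s(c,d)}).Reachable d' c' := by
    refine ⟨(w2.append w1).toDeleteEdges {s(c,d)} ?_⟩
    intro e he
    rw [Walk.edges_append, List.mem_append] at he
    rw [Set.mem_singleton_iff, ← hsd]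
    rcases he with h | h
    · exact fun hh => h2 (hh ▸ h)
    · exact fun hh => h1 (hh ▸ h)
  rw [Sym2.eq_iff] at hsd
  rcases hsd with ⟨rfl, rfl⟩ | ⟨rfl, rfl⟩
  · exact hw.symm
  · exact hw

end Del

section Reduce
variable {K : SimpleGraph V}

lemma exists_splitEdge2 {a b : V} (w : K.Walk a b) {f : Sym2 V} (hf : List.Sublist [f, f] w.edges) :
    ∃ (c d c' d' : V) (w1 : K.Walk a c) (h1 : K.Adj c d) (w2 : K.Walk d c') (h2 : K.Adj c' d')
      (w3 : K.Walk d' b), w.length = w1.length + w2.length + w3.length + 2 ∧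
      s(c, d) = f ∧ s(c', d') = f := by
  induction w with
  | nil => simp at hf
  | @cons u x b hadj rest ih =>
    rw [Walk.edges_cons] at hf
    by_cases he : s(u, x) = f
    · have hfrest : f ∈ rest.edges := by
        cases hf with
        | cons _ h => exact h.subset (by simp)
        | cons_cons _ h => exact h.subset (by simp)
      obtain ⟨c', d', w2, hadj', w3, heq, hsd⟩ := exists_splitEdge rest hfrest
      refine ⟨u, x, c', d', Walk.nil, hadj, w2, hadj', w3, ?_, he, hsd⟩
      rw [Walk.length_cons, heq, Walk.length_append, Walk.length_cons, Walk.length_nil]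
      omega
    · have hf' : List.Sublist [f, f] rest.edges := by
        cases hf with
        | cons _ h => exact h
        | cons_cons _ h => exact absurd rfl he
      obtain ⟨c, d, c', d', w1, h1, w2, h2, w3, hlen, hs1, hs2⟩ := ih hf'
      refine ⟨c, d, c', d', Walk.cons hadj w1, h1, w2, h2, w3, ?_, hs1, hs2⟩
      rw [Walk.length_cons, Walk.length_cons, hlen]
      omega

lemma reduce_closed_walk {z : V} (w : K.Walk z z) (hw : ¬w.IsTrail) (h3 : 3 ≤ w.length) :
    ∃ (x1 : V) (c1 : K.Walk x1 x1) (x2 : V) (c2 : K.Walk x2 x2),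
      c1.length + c2.length = w.length ∧ c1.length < w.length ∧ c2.length < w.length := by
  have hdup : ∃ f, List.Sublist [f, f] w.edges := by
    have : ¬w.edges.Nodup := fun h => hw ⟨h⟩
    obtain ⟨f, hf⟩ := List.exists_duplicate_iff_not_nodup.mpr this
    exact ⟨f, List.duplicate_iff_sublist.mp hf⟩
  obtain ⟨f, hf⟩ := hdup
  obtain ⟨c, d, c', d', w1, h1, w2, h2, w3, hlen, hs1, hs2⟩ := exists_splitEdge2 w hf
  have heq : s(c, d) = s(c', d') := hs1.trans hs2.symm
  rw [Sym2.eq_iff] at heq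
  rcases heq with ⟨rfl, rfl⟩ | ⟨rfl, rfl⟩
  · refine ⟨c, Walk.cons h1 w2, z, w1.append (Walk.cons h1 w3), ?_, ?_, ?_⟩ <;>
      simp only [Walk.length_append, Walk.length_cons, hlen] <;> omega
  · by_cases h0 : w2.length = 0
    · refine ⟨z, w1.append w3, c, Walk.cons h1 (Walk.cons h2 Walk.nil), ?_, ?_, ?_⟩ <;>
        simp only [Walk.length_append, Walk.length_cons, Walk.length_nil, hlen] <;> omega
    · refine ⟨d, w2, z, w1.append (Walk.cons h1 (Walk.cons h2 w3)), ?_, ?_, ?_⟩ <;>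
        simp only [Walk.length_append, Walk.length_cons, hlen] <;> omega

lemma short_isTrail {a b : V} (w : K.Walk a b) (h : w.length ≤ 1) : w.IsTrail := by
  constructor
  have hl : w.edges.length ≤ 1 := by rw [Walk.length_edges]; exact h
  match hw : w.edges, hl with
  | [], _ => exact List.nodup_nil
  | [a], _ => simp
  | (a :: b :: l), hl => simp at hl

lemma even_closed_walks (hyp : ∀ (x : V) (c : K.Walk x x), c.IsTrail → Even c.length) :
    ∀ (n : ℕ) (x : V) (c : K.Walk x x), c.length ≤ n → Even c.length := by
  intro n
  induction n using Nat.strong_induction_on with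
  | _ n ih =>
    intro x c hc
    by_cases ht : c.IsTrail
    · exact hyp x c ht
    · have h2 : 2 ≤ c.length := by
        by_contra h
        exact ht (short_isTrail c (by omega))
    
      rcases Nat.lt_or_ge c.length 3 with h3 | h3
      · have : c.length = 2 := by omega
        rw [this]; exact ⟨1, rfl⟩
      · obtain ⟨x1, c1, x2, c2, hsum, hlt1, hlt2⟩ := reduce_closed_walk c ht h3
        have hn : 1 ≤ n := by omega
        have e1 : Even c1.length := ih (n-1) (by omega) x1 c1 (by omega)
        have e2 : Even c2.length := ih (n-1) (by omega) x2 c2 (by omega)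
        rw [← hsum]
        exact e1.add e2

lemma exists_odd_closed_trail_aux :
    ∀ (n : ℕ) (x : V) (c : K.Walk x x), c.length ≤ n → Odd c.length →
      ∃ (y : V) (t : K.Walk y y), t.IsTrail ∧ Odd t.length := by
  intro n
  induction n using Nat.strong_induction_on with
  | _ n ih =>
    intro x c hc hodd
    by_cases ht : c.IsTrail
    · exact ⟨x, c, ht, hodd⟩
    · have h2 : 2 ≤ c.length := by
        by_contra h
        exact ht (short_isTrail c (by omega))
      have h3 : 3 ≤ c.length := by
        rcases hodd with ⟨m, hm⟩; omega
      obtain ⟨x1, c1, x2, c2, hsum, hlt1, hlt2⟩ := reduce_closed_walk c ht h3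
      rcases Nat.even_or_odd c1.length with he | ho
      · have h2' : Odd c2.length := by
          rcases he with ⟨m, hm⟩; rcases hodd with ⟨m', hm'⟩
          refine ⟨m' - m, by omega⟩
        exact ih c2.length (by omega) x2 c2 le_rfl h2'
      · exact ih c1.length (by omega) x1 c1 le_rfl ho

lemma exists_odd_closed_trail (h : ∃ (x : V) (c : K.Walk x x), Odd c.length) :
    ∃ (y : V) (t : K.Walk y y), t.IsTrail ∧ Odd t.length := by
  obtain ⟨x, c, hodd⟩ := h
  exact exists_odd_closed_trail_aux c.length x c le_rfl hodd

end Reduce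

section Splice
variable {K : SimpleGraph V}

lemma splice {p q z : V} (T : K.Walk p q) (hT : T.IsTrail)
    (O : K.Walk z z) (hO : O.IsTrail) (hOodd : Odd O.length)
    (hmeet : ∃ x ∈ T.support, x ∈ O.support) :
    (∃ T' : K.Walk p q, T'.IsTrail ∧ Odd T'.length) ∧
    (∃ T' : K.Walk p q, T'.IsTrail ∧ Even T'.length) := by
  classical
  have hOne : O.length ≠ 0 := by rcases hOodd with ⟨m, hm⟩; omega
  obtain ⟨x, A, M0, hxS, hTeq, hAcond⟩ :=
    exists_firstHit {v | v ∈ O.support} T hmeet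
  obtain ⟨y, M, B, hyS, hMeq, hBcond⟩ :=
    exists_lastHit {v | v ∈ O.support} M0 ⟨x, M0.start_mem_support, hxS⟩
  have hx' : x ∈ O.support := hxS
  have hy' : y ∈ O.support := hyS
  rw [hMeq] at hTeq
  have hT' : (A.append (M.append B)).IsTrail := hTeq ▸ hT
  have nd := hT'.edges_nodup
  rw [Walk.edges_append, Walk.edges_append] at nd
  obtain ⟨ndA, ndMB, disjA⟩ := List.nodup_append.mp nd
  obtain ⟨ndM, ndB, disjMB⟩ := List.nodup_append.mp ndMB
  have disjAB : ∀ e ∈ A.edges, e ∉ B.edges := fun e he hb =>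
    disjA e he _ (List.mem_append.mpr (Or.inr hb)) rfl
  have dAO : ∀ e ∈ A.edges, e ∉ O.edges :=
    edges_disjoint_of_support_inter A O x (fun v hv hvO => hAcond v hv hvO)
  have dBO : ∀ e ∈ B.edges, e ∉ O.edges :=
    edges_disjoint_of_support_inter B O y (fun v hv hvO => hBcond v hv hvO)
  -- builder
  have build : ∀ (mid : K.Walk x y), mid.edges.Nodup → (∀ e ∈ mid.edges, e ∈ O.edges) →
      ∃ T' : K.Walk p q, T'.IsTrail ∧ T'.length = A.length + mid.length + B.length := by
    intro mid ndmid submid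
    refine ⟨A.append (mid.append B), ?_, ?_⟩
    · constructor
      rw [Walk.edges_append, Walk.edges_append]
      rw [List.nodup_append]
      refine ⟨ndA, List.nodup_append.mpr ⟨ndmid, ndB, ?_⟩, ?_⟩
      · rintro e he _ hb rfl
        exact dBO e hb (submid e he)
      · rintro e he _ hmem rfl
        rcases List.mem_append.mp hmem with h | h
        · exact dAO e he (submid e h)
        · exact disjAB e he h
    · rw [Walk.length_append, Walk.length_append]
      omega
  by_cases hxy : x = y
  · subst hxy
    obtain ⟨T0, hT0, hlen0⟩ := build Walk.nil (by simp) (by simp)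
    obtain ⟨T1, hT1, hlen1⟩ := build (O.rotate x hx')
      (by rw [(Walk.rotate_edges O x hx').nodup_iff]; exact hO.edges_nodup)
      (fun e he => (Walk.rotate_edges O x hx').mem_iff.mp he)
    rw [Walk.length_nil] at hlen0
    rw [length_rotate O hx'] at hlen1
    rcases Nat.even_or_odd (A.length + B.length) with hev | hod
    · constructor
      · refine ⟨T1, hT1, ?_⟩
        rcases hev with ⟨m, hm⟩; rcases hOodd with ⟨m', hm'⟩
        exact ⟨m + m', by omega⟩
      · refine ⟨T0, hT0, ?_⟩
        rcases hev with ⟨m, hm⟩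
        exact ⟨m, by omega⟩
    · constructor
      · refine ⟨T0, hT0, ?_⟩
        rcases hod with ⟨m, hm⟩
        exact ⟨m, by omega⟩
      · refine ⟨T1, hT1, ?_⟩
        rcases hod with ⟨m, hm⟩; rcases hOodd with ⟨m', hm'⟩
        exact ⟨m + m' + 1, by omega⟩
  · -- x ≠ y
    have hOx : (O.rotate x hx').IsTrail := hO.rotate hx'
    have hyOx : y ∈ (O.rotate x hx').support := mem_support_rotate_s10 O hOne hx' hy'
    set Ox := O.rotate x hx' with hOxdef
    have hsplit := Ox.take_spec hyOx
    have hlensum : (Ox.takeUntil y hyOx).length + (Ox.dropUntil y hyOx).length = O.length := by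
      have := congrArg Walk.length hsplit
      rw [Walk.length_append] at this
      rw [this, hOxdef, length_rotate]
    have ndOx := hOx.edges_nodup
    have hOxsub : ∀ e ∈ Ox.edges, e ∈ O.edges := fun e he =>
      (Walk.rotate_edges O x hx').mem_iff.mp he
    have ndsplit : ((Ox.takeUntil y hyOx).edges ++ (Ox.dropUntil y hyOx).edges).Nodup := by
      rw [← Walk.edges_append, hsplit]; exact ndOx
    obtain ⟨ndtake, nddrop, _⟩ := List.nodup_append.mp ndsplit
    have subtake : ∀ e ∈ (Ox.takeUntil y hyOx).edges, e ∈ O.edges := fun e he =>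
      hOxsub e (Walk.edges_takeUntil_subset Ox hyOx he)
    have subdrop : ∀ e ∈ (Ox.dropUntil y hyOx).edges, e ∈ O.edges := fun e he =>
      hOxsub e (Walk.edges_dropUntil_subset Ox hyOx he)
    obtain ⟨T0, hT0, hlen0⟩ := build (Ox.takeUntil y hyOx) ndtake subtake
    obtain ⟨T1, hT1, hlen1⟩ := build (Ox.dropUntil y hyOx).reverse
      (by rw [Walk.edges_reverse]; exact List.nodup_reverse.mpr nddrop)
      (fun e he => subdrop e (by rw [Walk.edges_reverse] at he; exact List.mem_reverse.mp he))
    rw [Walk.length_reverse] at hlen1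
    have hparity : (A.length + (Ox.takeUntil y hyOx).length + B.length) +
        (A.length + (Ox.dropUntil y hyOx).length + B.length) =
        2 * (A.length + B.length) + O.length := by omega
    -- one of T0 T1 odd, other even
    rcases Nat.even_or_odd T0.length with he0 | ho0
    · refine ⟨⟨T1, hT1, ?_⟩, ⟨T0, hT0, he0⟩⟩
      rcases he0 with ⟨m, hm⟩; rcases hOodd with ⟨m', hm'⟩
      refine ⟨A.length + B.length + m' - m, by omega⟩
    · refine ⟨⟨T0, hT0, ho0⟩, ⟨T1, hT1, ?_⟩⟩
      rcases ho0 with ⟨m, hm⟩; rcases hOodd with ⟨m', hm'⟩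
      refine ⟨A.length + B.length + m' - m, by omega⟩

end Splice

section CC
variable {K : SimpleGraph V} {pp : V}

lemma not_mem_edges_of_not_mem_support {a b c d : V} (w : K.Walk a b) (h : c ∉ w.support) :
    s(c, d) ∉ w.edges := fun he => h (w.fst_mem_support_of_mem_edges he)

lemma CC (LB : ∀ x y, K.Adj x y → K.Reachable pp x →
      ∃ P : K.Walk x y, P.IsPath ∧ s(x, y) ∉ P.edges) :
    ∀ (n : ℕ) (a b : V), K.Reachable pp a → a ≠ b →
      (∃ w : K.Walk b a, w.length ≤ n) →
      ∃ W : K.Walk a a, W.IsTrail ∧ b ∈ W.support := by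
  intro n
  induction n using Nat.strong_induction_on with
  | _ n ih =>
    intro a b hpa hab hex
    obtain ⟨wr, hwrlen⟩ := hex
    cases wr with
    | nil => exact absurd rfl hab.symm
    | @cons b c a hadj rrest =>
      rw [Walk.length_cons] at hwrlen
      by_cases hac : a = c
      · subst hac
        obtain ⟨P, hP, hfP⟩ := LB a b hadj.symm hpa
        refine ⟨P.concat hadj, ?_, ?_⟩
        · constructor
          rw [Walk.edges_concat, List.concat_eq_append, List.nodup_append]
          refine ⟨hP.isTrail.edges_nodup, by simp, ?_⟩
          rintro e he _ hmem rfl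
          rw [List.mem_singleton] at hmem
          subst hmem
          rw [Sym2.eq_swap] at he
          exact hfP he
        · rw [Walk.support_concat]
          simp [List.concat_eq_append]
      · have hpc : K.Reachable pp c := hpa.trans ⟨rrest.reverse⟩
        obtain ⟨T, hTtrail, hcT⟩ := ih (n - 1) (by omega) a c hpa hac ⟨rrest, by omega⟩
        by_cases hbT : b ∈ T.support
        · exact ⟨T, hTtrail, hbT⟩
        · obtain ⟨P, hP, hfP⟩ := LB c b hadj.symm hpc
          obtain ⟨x1, E1, rest1, hx1S, heq1, hcond1⟩ :=
            exists_firstHit {v | v ∈ T.support} P.reverse ⟨c, by simp, hcT⟩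
          have hx1T : x1 ∈ T.support := hx1S
          have hPrevTrail : P.reverse.IsTrail := hP.isTrail.reverse
          have ndPrev := hPrevTrail.edges_nodup
          rw [heq1, Walk.edges_append] at ndPrev
          obtain ⟨ndE1, _, _⟩ := List.nodup_append.mp ndPrev
          have hE1subP : ∀ e ∈ E1.edges, e ∈ P.edges := by
            intro e he
            have : e ∈ P.reverse.edges := by
              rw [heq1, Walk.edges_append]
              exact List.mem_append.mpr (Or.inl he)
            rwa [Walk.edges_reverse, List.mem_reverse] at this
          have hfE1 : s(c, b) ∉ E1.edges := fun he => hfP (hE1subP _ he)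
          have dE1T : ∀ e ∈ E1.edges, e ∉ T.edges :=
            edges_disjoint_of_support_inter E1 T x1 (fun v hv hvT => hcond1 v hv hvT)
          -- the outside connector P_D : x1 → c through b
          set PD : K.Walk x1 c := E1.reverse.append (Walk.cons hadj Walk.nil) with hPDdef
          have hPDedges : PD.edges = E1.edges.reverse ++ [s(b, c)] := by
            rw [hPDdef, Walk.edges_append, Walk.edges_reverse, Walk.edges_cons, Walk.edges_nil]
          have hPDnodup : PD.edges.Nodup := by
            rw [hPDedges, List.nodup_append]
            refine ⟨List.nodup_reverse.mpr ndE1, by simp, ?_⟩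
            rintro e he _ hmem rfl
            rw [List.mem_singleton] at hmem
            subst hmem
            rw [List.mem_reverse] at he
            rw [Sym2.eq_swap] at hfE1
            exact hfE1 he
          have hPDdisjT : ∀ e ∈ PD.edges, e ∉ T.edges := by
            intro e he
            rw [hPDedges, List.mem_append] at he
            rcases he with he | he
            · exact dE1T e (List.mem_reverse.mp he)
            · rw [List.mem_singleton] at he
              subst he
              exact not_mem_edges_of_not_mem_support T hbT
          have hbPD : b ∈ PD.support := by
            rw [hPDdef, Walk.mem_support_append_iff]
            exact Or.inl (by rw [Walk.support_reverse]; exact List.mem_reverse.mpr E1.start_mem_support)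
          -- split T at c
          have hspec := T.take_spec hcT
          set T1 := T.takeUntil c hcT with hT1def
          set T2 := T.dropUntil c hcT with hT2def
          have ndT := hTtrail.edges_nodup
          rw [← hspec, Walk.edges_append] at ndT
          obtain ⟨ndT1, ndT2, disjT12⟩ := List.nodup_append.mp ndT
          have hx1T' : x1 ∈ T1.support ∨ x1 ∈ T2.support := by
            rw [← Walk.mem_support_append_iff, hspec]
            exact hx1T
          have hT1subT : ∀ e ∈ T1.edges, e ∈ T.edges := Walk.edges_takeUntil_subset T hcT
          have hT2subT : ∀ e ∈ T2.edges, e ∈ T.edges := Walk.edges_dropUntil_subset T hcT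
          rcases hx1T' with hx1in | hx1in
          · -- x1 on T1 : a → c ; W = T1a ++ PD ++ T2
            have hspec2 := T1.take_spec hx1in
            set T1a := T1.takeUntil x1 hx1in with hT1adef
            set T1b := T1.dropUntil x1 hx1in with hT1bdef
            have ndT1' := ndT1
            rw [← hspec2, Walk.edges_append] at ndT1'
            obtain ⟨ndT1a, ndT1b, disjT1ab⟩ := List.nodup_append.mp ndT1'
            have hT1asubT : ∀ e ∈ T1a.edges, e ∈ T.edges := fun e he =>
              hT1subT e (by rw [← hspec2, Walk.edges_append]; exact List.mem_append.mpr (Or.inl he))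
            refine ⟨T1a.append (PD.append T2), ?_, ?_⟩
            · constructor
              rw [Walk.edges_append, Walk.edges_append, List.nodup_append]
              refine ⟨ndT1a, List.nodup_append.mpr ⟨hPDnodup, ndT2, ?_⟩, ?_⟩
              · rintro e he _ het rfl
                exact hPDdisjT e he (hT2subT e het)
              · rintro e he _ hmem rfl
                rcases List.mem_append.mp hmem with h | h
                · exact hPDdisjT e h (hT1asubT e he)
                · refine disjT12 e ?_ e h rfl
                  rw [← hspec2, Walk.edges_append]
                  exact List.mem_append.mpr (Or.inl he)
            · rw [Walk.mem_support_append_iff]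
              refine Or.inr ?_
              rw [Walk.mem_support_append_iff]
              exact Or.inl hbPD
          · -- x1 on T2 : c → a ; W = T1 ++ PD.reverse ++ T2b
            have hspec2 := T2.take_spec hx1in
            set T2a := T2.takeUntil x1 hx1in with hT2adef
            set T2b := T2.dropUntil x1 hx1in with hT2bdef
            have ndT2' := ndT2
            rw [← hspec2, Walk.edges_append] at ndT2'
            obtain ⟨ndT2a, ndT2b, disjT2ab⟩ := List.nodup_append.mp ndT2'
            have hT2bsubT : ∀ e ∈ T2b.edges, e ∈ T.edges := fun e he =>
              hT2subT e (by rw [← hspec2, Walk.edges_append]; exact List.mem_append.mpr (Or.inr he))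
            refine ⟨T1.append (PD.reverse.append T2b), ?_, ?_⟩
            · constructor
              rw [Walk.edges_append, Walk.edges_append, List.nodup_append]
              refine ⟨ndT1, List.nodup_append.mpr ⟨?_, ndT2b, ?_⟩, ?_⟩
              · rw [Walk.edges_reverse]
                exact List.nodup_reverse.mpr hPDnodup
              · rintro e he _ het rfl
                rw [Walk.edges_reverse, List.mem_reverse] at he
                exact hPDdisjT e he (hT2bsubT e het)
              · rintro e he _ hmem rfl
                rcases List.mem_append.mp hmem with h | h
                · rw [Walk.edges_reverse, List.mem_reverse] at h
                  exact hPDdisjT e h (hT1subT e he)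
                · exact disjT12 e he e (by rw [← hspec2, Walk.edges_append]; exact List.mem_append.mpr (Or.inr h)) rfl
            · rw [Walk.mem_support_append_iff]
              refine Or.inr ?_
              rw [Walk.mem_support_append_iff]
              refine Or.inl ?_
              rw [Walk.support_reverse, List.mem_reverse]
              exact hbPD

end CC

section Reroute
variable {K : SimpleGraph V}

lemma support_of_length_zero {a v : V} (c : K.Walk a a) (h : c.length = 0)
    (hv : v ∈ c.support) : v = a := by
  cases c with
  | nil => simpa using hv
  | cons h' rest => simp at h

lemma reroute {p q : V} (P : K.Walk p q) (hP : P.IsTrail) {r : V} (W : K.Walk r r)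
    (hW : W.IsTrail) (hWne : W.length ≠ 0) (hmeet : ∃ v ∈ P.support, v ∈ W.support)
    (zz : V) (hzW : zz ∈ W.support) :
    ∃ T : K.Walk p q, T.IsTrail ∧ zz ∈ T.support := by
  classical
  obtain ⟨x, A, M0, hxS, hTeq, hAcond⟩ := exists_firstHit {v | v ∈ W.support} P hmeet
  obtain ⟨y, M, B, hyS, hMeq, hBcond⟩ :=
    exists_lastHit {v | v ∈ W.support} M0 ⟨x, M0.start_mem_support, hxS⟩
  have hx' : x ∈ W.support := hxS
  have hy' : y ∈ W.support := hyS
  rw [hMeq] at hTeq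
  have hT' : (A.append (M.append B)).IsTrail := hTeq ▸ hP
  have nd := hT'.edges_nodup
  rw [Walk.edges_append, Walk.edges_append] at nd
  obtain ⟨ndA, ndMB, disjA⟩ := List.nodup_append.mp nd
  obtain ⟨ndM, ndB, disjMB⟩ := List.nodup_append.mp ndMB
  have disjAB : ∀ e ∈ A.edges, e ∉ B.edges := fun e he hb =>
    disjA e he _ (List.mem_append.mpr (Or.inr hb)) rfl
  have dAW : ∀ e ∈ A.edges, e ∉ W.edges :=
    edges_disjoint_of_support_inter A W x (fun v hv hvO => hAcond v hv hvO)
  have dBW : ∀ e ∈ B.edges, e ∉ W.edges :=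
    edges_disjoint_of_support_inter B W y (fun v hv hvO => hBcond v hv hvO)
  have build : ∀ (mid : K.Walk x y), mid.edges.Nodup → (∀ e ∈ mid.edges, e ∈ W.edges) →
      zz ∈ mid.support → ∃ T : K.Walk p q, T.IsTrail ∧ zz ∈ T.support := by
    intro mid ndmid submid hzmid
    refine ⟨A.append (mid.append B), ?_, ?_⟩
    · constructor
      rw [Walk.edges_append, Walk.edges_append, List.nodup_append]
      refine ⟨ndA, List.nodup_append.mpr ⟨ndmid, ndB, ?_⟩, ?_⟩
      · rintro e he _ hb rfl
        exact dBW e hb (submid e he)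
      · rintro e he _ hmem rfl
        rcases List.mem_append.mp hmem with h | h
        · exact dAW e he (submid e h)
        · exact disjAB e he h
    · rw [Walk.mem_support_append_iff]
      exact Or.inr (by rw [Walk.mem_support_append_iff]; exact Or.inl hzmid)
  by_cases hxy : x = y
  · subst hxy
    exact build (W.rotate x hx')
      (by rw [(Walk.rotate_edges W x hx').nodup_iff]; exact hW.edges_nodup)
      (fun e he => (Walk.rotate_edges W x hx').mem_iff.mp he)
      (mem_support_rotate_s10 W hWne hx' hzW)
  · have hOx : (W.rotate x hx').IsTrail := hW.rotate hx'
    have hyOx : y ∈ (W.rotate x hx').support := mem_support_rotate_s10 W hWne hx' hy'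
    set Wx := W.rotate x hx' with hWxdef
    have hsplit := Wx.take_spec hyOx
    have ndWx := hOx.edges_nodup
    have hWxsub : ∀ e ∈ Wx.edges, e ∈ W.edges := fun e he =>
      (Walk.rotate_edges W x hx').mem_iff.mp he
    have ndsplit : ((Wx.takeUntil y hyOx).edges ++ (Wx.dropUntil y hyOx).edges).Nodup := by
      rw [← Walk.edges_append, hsplit]; exact ndWx
    obtain ⟨ndtake, nddrop, _⟩ := List.nodup_append.mp ndsplit
    have hzWx : zz ∈ Wx.support := mem_support_rotate_s10 W hWne hx' hzW
    have hzsplit : zz ∈ (Wx.takeUntil y hyOx).support ∨ zz ∈ (Wx.dropUntil y hyOx).support := by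
      rw [← Walk.mem_support_append_iff, hsplit]
      exact hzWx
    rcases hzsplit with hz1 | hz2
    · exact build (Wx.takeUntil y hyOx) ndtake
        (fun e he => hWxsub e (Walk.edges_takeUntil_subset Wx hyOx he)) hz1
    · refine build (Wx.dropUntil y hyOx).reverse
        (by rw [Walk.edges_reverse]; exact List.nodup_reverse.mpr nddrop)
        (fun e he => hWxsub e (Walk.edges_dropUntil_subset Wx hyOx (by
          rw [Walk.edges_reverse, List.mem_reverse] at he; exact he))) ?_
      rw [Walk.support_reverse, List.mem_reverse]
      exact hz2

lemma BP {pp q z : V}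
    (LB : ∀ x y, K.Adj x y → K.Reachable pp x →
      ∃ P : K.Walk x y, P.IsPath ∧ s(x, y) ∉ P.edges)
    (O : K.Walk z z) (hO : O.IsTrail) (hOodd : Odd O.length)
    (hpq : K.Reachable pp q) (hpz : K.Reachable pp z) :
    (∃ t : K.Walk pp q, t.IsTrail ∧ Odd t.length) ∧
    (∃ t : K.Walk pp q, t.IsTrail ∧ Even t.length) := by
  classical
  obtain ⟨w0⟩ := hpq
  set P := w0.bypass with hPdef
  have hP : P.IsPath := w0.bypass_isPath
  by_cases hmeet : ∃ v ∈ P.support, v ∈ O.support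
  · exact splice P hP.isTrail O hO hOodd hmeet
  · have hppO : pp ∉ O.support := fun h => hmeet ⟨pp, P.start_mem_support, h⟩
    have hppz : pp ≠ z := fun h => hppO (h ▸ O.start_mem_support)
    obtain ⟨w1⟩ := hpz.symm
    obtain ⟨W, hWtrail, hzW⟩ := CC LB w1.length pp z (Reachable.refl pp) hppz ⟨w1, le_rfl⟩
    have hWne : W.length ≠ 0 := by
      intro h0
      exact hppz (support_of_length_zero W h0 hzW).symm
    obtain ⟨T, hT, hzT⟩ := reroute P hP.isTrail W hWtrail hWne
      ⟨pp, P.start_mem_support, W.start_mem_support⟩ z hzW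
    exact splice T hT O hO hOodd ⟨z, hzT, O.start_mem_support⟩

end Reroute

section PL
variable [Finite V]

omit [Finite V] in
lemma reachable_of_mem_support {M : SimpleGraph V} {a b v : V} (w : M.Walk a b)
    (hv : v ∈ w.support) : M.Reachable a v := ⟨w.takeUntil v hv⟩

omit [Finite V] in
lemma deleteEdges_mono_graph {M N : SimpleGraph V} (h : M ≤ N) (s : Set (Sym2 V)) :
    M.deleteEdges s ≤ N.deleteEdges s := by
  intro u v huv
  rw [SimpleGraph.deleteEdges_adj] at huv ⊢
  exact ⟨h huv.1, huv.2⟩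

omit [Finite V] in
lemma deleteEdges_comm' (M : SimpleGraph V) (s t : Set (Sym2 V)) :
    (M.deleteEdges s).deleteEdges t = (M.deleteEdges t).deleteEdges s := by
  ext u v
  simp only [SimpleGraph.deleteEdges_adj]
  tauto

omit [Finite V] in
lemma transfer_isTrail {M N : SimpleGraph V} {a b : V} (w : M.Walk a b)
    (hsub : ∀ e ∈ w.edges, e ∈ N.edgeSet) (hw : w.IsTrail) : (w.transfer N hsub).IsTrail := by
  constructor
  rw [Walk.edges_transfer]
  exact hw.edges_nodup

omit [Finite V] in
lemma glue {K K' : SimpleGraph V} (hK'le : K' ≤ K) {p q a b : V} (hadjab : K.Adj a b)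
    (hfnotK' : s(a, b) ∉ K'.edgeSet) (hnpq' : ¬K'.Reachable p q)
    (t1 : K'.Walk p a) (ht1 : t1.IsTrail) (t2 : K'.Walk b q) (ht2 : t2.IsTrail) :
    ∃ T : K.Walk p q, T.IsTrail ∧ T.length = t1.length + 1 + t2.length := by
  have hsub1 : ∀ e ∈ t1.edges, e ∈ K.edgeSet := fun e he =>
    SimpleGraph.edgeSet_mono hK'le (t1.edges_subset_edgeSet he)
  have hsub2 : ∀ e ∈ t2.edges, e ∈ K.edgeSet := fun e he =>
    SimpleGraph.edgeSet_mono hK'le (t2.edges_subset_edgeSet he)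
  have hdisj : ∀ e ∈ t1.edges, e ∉ t2.edges := by
    intro e he1 he2
    induction e using Sym2.ind with
    | _ c d =>
      have h1 : c ∈ t1.support := t1.fst_mem_support_of_mem_edges he1
      have h2 : c ∈ t2.support := t2.fst_mem_support_of_mem_edges he2
      have h2' : c ∈ t2.reverse.support := by rw [Walk.support_reverse]; simpa using h2
      exact hnpq' ((reachable_of_mem_support t1 h1).trans
        (reachable_of_mem_support t2.reverse h2').symm)
  refine ⟨(t1.transfer K hsub1).append (Walk.cons hadjab (t2.transfer K hsub2)), ?_, ?_⟩
  · constructor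
    rw [Walk.edges_append, Walk.edges_cons, Walk.edges_transfer, Walk.edges_transfer,
      List.nodup_append]
    refine ⟨ht1.edges_nodup, List.nodup_cons.mpr ⟨?_, ht2.edges_nodup⟩, ?_⟩
    · intro hmem
      exact hfnotK' (t2.edges_subset_edgeSet hmem)
    · rintro e he _ hmem rfl
      rcases List.mem_cons.mp hmem with rfl | hmem
      · exact hfnotK' (t1.edges_subset_edgeSet he)
      · exact hdisj e he hmem
  · rw [Walk.length_append, Walk.length_cons, Walk.length_transfer, Walk.length_transfer]
    omega

lemma PL : ∀ (n : ℕ) (K : SimpleGraph V) (p q z : V) (O : K.Walk z z),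
    K.edgeSet.ncard ≤ n →
    O.IsTrail → Odd O.length →
    K.Reachable p q → K.Reachable p z →
    (∀ x y, K.Adj x y → K.Reachable p x →
        (K.deleteEdges {s(x, y)}).Reachable p q → (K.deleteEdges {s(x, y)}).Reachable x y) →
    (∃ t : K.Walk p q, t.IsTrail ∧ Odd t.length) ∧
    (∃ t : K.Walk p q, t.IsTrail ∧ Even t.length) := by
  intro n
  induction n using Nat.strong_induction_on with
  | _ n ih =>
    intro K p q z O hcard hO hOodd hpq hpz H3
    by_cases hbad : ∃ x y, K.Adj x y ∧ K.Reachable p x ∧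
        ¬(K.deleteEdges {s(x, y)}).Reachable x y
    · obtain ⟨xh, yh, hadj, hpxh, hnr⟩ := hbad
      obtain ⟨wpx⟩ := hpxh
      obtain ⟨a, b, hadjab, hKpa, hfs⟩ :
          ∃ a b : V, K.Adj a b ∧ (K.deleteEdges {s(a, b)}).Reachable p a ∧
            s(a, b) = s(xh, yh) := by
        rcases reachable_delete_cases (c := xh) (d := yh) wpx with h | h | h
        · exact ⟨xh, yh, hadj, h, rfl⟩
        · exact ⟨xh, yh, hadj, h, rfl⟩
        · exact ⟨yh, xh, hadj.symm, by rw [Sym2.eq_swap]; exact h, Sym2.eq_swap⟩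
      set K' : SimpleGraph V := K.deleteEdges {s(a, b)} with hK'def
      have hK'le : K' ≤ K := SimpleGraph.deleteEdges_le _
      have hnab : ¬K'.Reachable a b := by
        intro h
        apply hnr
        rw [← hfs]
        rcases Sym2.eq_iff.mp hfs with ⟨rfl, rfl⟩ | ⟨rfl, rfl⟩
        · exact h
        · exact h.symm
      have hnpq' : ¬K'.Reachable p q := by
        intro h
        apply hnab
        have h2 := H3 xh yh hadj ⟨wpx⟩ (by rw [← hfs]; exact h)
        rw [← hfs] at h2
        rcases Sym2.eq_iff.mp hfs with ⟨rfl, rfl⟩ | ⟨rfl, rfl⟩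
        · exact h2
        · exact h2.symm
      have hnpb : ¬K'.Reachable p b := fun h => hnab (hKpa.symm.trans h)
      obtain ⟨wpq⟩ := hpq
      have hqb : K'.Reachable q b := by
        rcases reachable_delete_cases (c := a) (d := b) wpq.reverse with h | h | h
        · exact absurd h.symm hnpq'
        · exact absurd (hKpa.trans h.symm) hnpq'
        · exact h
      have hfK : s(a, b) ∈ K.edgeSet := K.mem_edgeSet.mpr hadjab
      have hfnotK' : s(a, b) ∉ K'.edgeSet := by
        rw [hK'def, SimpleGraph.edgeSet_deleteEdges]
        simp
      have hfO : s(a, b) ∉ O.edges := by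
        intro hmem
        exact hnab (reachable_endpoints_of_trail O rfl hO hmem)
      have hOsub : ∀ e ∈ O.edges, e ∈ K'.edgeSet := by
        intro e he
        rw [hK'def, SimpleGraph.edgeSet_deleteEdges]
        refine ⟨O.edges_subset_edgeSet he, ?_⟩
        intro hmem
        rw [Set.mem_singleton_iff] at hmem
        exact hfO (hmem ▸ he)
      set O' : K'.Walk z z := O.transfer K' hOsub with hO'def
      have hO't : O'.IsTrail := transfer_isTrail O hOsub hO
      have hO'odd : Odd O'.length := by
        rw [hO'def, Walk.length_transfer]
        exact hOodd
      have hncard : (K.edgeSet \ {s(a, b)}).ncard + 1 = K.edgeSet.ncard :=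
        Set.ncard_diff_singleton_add_one hfK (Set.toFinite _)
      have hK'edge : K'.edgeSet = K.edgeSet \ {s(a, b)} := by
        rw [hK'def, SimpleGraph.edgeSet_deleteEdges]
      have hcard' : K'.edgeSet.ncard ≤ n - 1 := by rw [hK'edge]; omega
      have hn1 : 1 ≤ n := by omega
      obtain ⟨wpz⟩ := hpz
      have hzcase : K'.Reachable p z ∨ K'.Reachable q z := by
        rcases reachable_delete_cases (c := a) (d := b) wpz.reverse with h | h | h
        · exact Or.inl h.symm
        · exact Or.inl (hKpa.trans h.symm)
        · exact Or.inr (hqb.trans h.symm)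
      rcases hzcase with hzp | hzq
      · -- z on the p-side : recurse with pair (p, a)
        have H3' : ∀ x y, K'.Adj x y → K'.Reachable p x →
            (K'.deleteEdges {s(x, y)}).Reachable p a →
            (K'.deleteEdges {s(x, y)}).Reachable x y := by
          intro x y hxy hpx hred
          have hxyK' : s(x, y) ∈ K'.edgeSet := K'.mem_edgeSet.mpr hxy
          have hfne : s(a, b) ≠ s(x, y) := fun h => hfnotK' (h ▸ hxyK')
          have hK''le : K'.deleteEdges {s(x, y)} ≤ K.deleteEdges {s(x, y)} :=
            deleteEdges_mono_graph hK'le _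
          have hK''leK' : K'.deleteEdges {s(x, y)} ≤ K' := SimpleGraph.deleteEdges_le _
          have hpy : K'.Reachable p y := hpx.trans hxy.reachable
          obtain ⟨wqb⟩ := hqb
          have hqb' : (K'.deleteEdges {s(x, y)}).Reachable q b := by
            rcases reachable_delete_cases (c := x) (d := y) wqb with h | h | h
            · exact h
            · exact absurd (hpx.trans (h.mono hK''leK').symm) hnpq'
            · exact absurd (hpy.trans (h.mono hK''leK').symm) hnpq'
          have hPQ : (K.deleteEdges {s(x, y)}).Reachable p q := by
            have h2 : (K.deleteEdges {s(x, y)}).Adj a b := by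
              rw [SimpleGraph.deleteEdges_adj]
              exact ⟨hadjab, by simpa using hfne⟩
            exact ((hred.mono hK''le).trans h2.reachable).trans (hqb'.mono hK''le).symm
          have hxyK : (K.deleteEdges {s(x, y)}).Reachable x y :=
            H3 x y (hK'le hxy) (hpx.mono hK'le) hPQ
          obtain ⟨wxy⟩ := hxyK
          have hgeq : (K.deleteEdges {s(x, y)}).deleteEdges {s(a, b)} =
              K'.deleteEdges {s(x, y)} := by
            rw [hK'def]
            exact deleteEdges_comm' K _ _
          have hxcases := reachable_delete_cases (c := a) (d := b) wxy
          have hycases := reachable_delete_cases (c := a) (d := b) wxy.reverse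
          rw [hgeq] at hxcases hycases
          rcases hxcases with h | hxa | hxb
          · exact h
          · rcases hycases with h | hya | hyb
            · exact h.symm
            · exact hxa.trans hya.symm
            · exact absurd (hpy.trans (hyb.mono hK''leK')) hnpb
          · rcases hycases with h | hya | hyb
            · exact h.symm
            · exact absurd (hpx.trans (hxb.mono hK''leK')) hnpb
            · exact hxb.trans hyb.symm
        obtain ⟨⟨t1o, ht1o, ht1oodd⟩, t1e, ht1e, ht1eeven⟩ :=
          ih (n - 1) (by omega) K' p a z O' hcard' hO't hO'odd hKpa hzp H3'
        obtain ⟨wbq⟩ := hqb.symm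
        have ht2 : wbq.bypass.IsTrail := wbq.bypass_isPath.isTrail
        obtain ⟨To, hTo, hToLen⟩ := glue hK'le hadjab hfnotK' hnpq' t1o ht1o wbq.bypass ht2
        obtain ⟨Te, hTe, hTeLen⟩ := glue hK'le hadjab hfnotK' hnpq' t1e ht1e wbq.bypass ht2
        rcases Nat.even_or_odd wbq.bypass.length with h2 | h2
        · refine ⟨⟨Te, hTe, ?_⟩, To, hTo, ?_⟩
          · rcases ht1eeven with ⟨m, hm⟩; rcases h2 with ⟨m', hm'⟩
            exact ⟨m + m', by omega⟩
          · rcases ht1oodd with ⟨m, hm⟩; rcases h2 with ⟨m', hm'⟩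
            exact ⟨m + m' + 1, by omega⟩
        · refine ⟨⟨To, hTo, ?_⟩, Te, hTe, ?_⟩
          · rcases ht1oodd with ⟨m, hm⟩; rcases h2 with ⟨m', hm'⟩
            exact ⟨m + m' + 1, by omega⟩
          · rcases ht1eeven with ⟨m, hm⟩; rcases h2 with ⟨m', hm'⟩
            exact ⟨m + m' + 1, by omega⟩
      · -- z on the q-side : recurse with pair (q, b)
        have H3'' : ∀ x y, K'.Adj x y → K'.Reachable q x →
            (K'.deleteEdges {s(x, y)}).Reachable q b →
            (K'.deleteEdges {s(x, y)}).Reachable x y := by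
          intro x y hxy hqx hred
          have hxyK' : s(x, y) ∈ K'.edgeSet := K'.mem_edgeSet.mpr hxy
          have hfne : s(a, b) ≠ s(x, y) := fun h => hfnotK' (h ▸ hxyK')
          have hK''le : K'.deleteEdges {s(x, y)} ≤ K.deleteEdges {s(x, y)} :=
            deleteEdges_mono_graph hK'le _
          have hK''leK' : K'.deleteEdges {s(x, y)} ≤ K' := SimpleGraph.deleteEdges_le _
          have hqy : K'.Reachable q y := hqx.trans hxy.reachable
          obtain ⟨wpa⟩ := id hKpa
          have hpa' : (K'.deleteEdges {s(x, y)}).Reachable p a := by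
            rcases reachable_delete_cases (c := x) (d := y) wpa with h | h | h
            · exact h
            · exact absurd ((h.mono hK''leK').trans hqx.symm) hnpq'
            · exact absurd ((h.mono hK''leK').trans hqy.symm) hnpq'
          have hPQ : (K.deleteEdges {s(x, y)}).Reachable p q := by
            have h2 : (K.deleteEdges {s(x, y)}).Adj a b := by
              rw [SimpleGraph.deleteEdges_adj]
              exact ⟨hadjab, by simpa using hfne⟩
            exact ((hpa'.mono hK''le).trans h2.reachable).trans (hred.mono hK''le).symm
          have hpq'' : K.Reachable p q := ⟨wpq⟩
          have hpxK : K.Reachable p x := hpq''.trans ((hqx.mono hK'le))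
          have hxyK : (K.deleteEdges {s(x, y)}).Reachable x y :=
            H3 x y (hK'le hxy) hpxK hPQ
          obtain ⟨wxy⟩ := hxyK
          have hgeq : (K.deleteEdges {s(x, y)}).deleteEdges {s(a, b)} =
              K'.deleteEdges {s(x, y)} := by
            rw [hK'def]
            exact deleteEdges_comm' K _ _
          have hxcases := reachable_delete_cases (c := a) (d := b) wxy
          have hycases := reachable_delete_cases (c := a) (d := b) wxy.reverse
          rw [hgeq] at hxcases hycases
          rcases hxcases with h | hxa | hxb
          · exact h
          · rcases hycases with h | hya | hyb
            · exact h.symm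
            · exact hxa.trans hya.symm
            · exact absurd (hKpa.trans ((hqx.trans (hxa.mono hK''leK')).symm)) hnpq'
          · rcases hycases with h | hya | hyb
            · exact h.symm
            · exact absurd (hKpa.trans ((hqy.trans (hya.mono hK''leK')).symm)) hnpq'
            · exact hxb.trans hyb.symm
        obtain ⟨⟨t1o, ht1o, ht1oodd⟩, t1e, ht1e, ht1eeven⟩ :=
          ih (n - 1) (by omega) K' q b z O' hcard' hO't hO'odd hqb hzq H3''
        obtain ⟨wpa⟩ := hKpa
        have ht2 : wpa.bypass.IsTrail := wpa.bypass_isPath.isTrail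
        obtain ⟨To, hTo, hToLen⟩ :=
          glue hK'le hadjab hfnotK' hnpq' wpa.bypass ht2 t1o.reverse ht1o.reverse
        obtain ⟨Te, hTe, hTeLen⟩ :=
          glue hK'le hadjab hfnotK' hnpq' wpa.bypass ht2 t1e.reverse ht1e.reverse
        rw [Walk.length_reverse] at hToLen hTeLen
        rcases Nat.even_or_odd wpa.bypass.length with h2 | h2
        · refine ⟨⟨Te, hTe, ?_⟩, To, hTo, ?_⟩
          · rcases ht1eeven with ⟨m, hm⟩; rcases h2 with ⟨m', hm'⟩
            exact ⟨m + m', by omega⟩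
          · rcases ht1oodd with ⟨m, hm⟩; rcases h2 with ⟨m', hm'⟩
            exact ⟨m + m' + 1, by omega⟩
        · refine ⟨⟨To, hTo, ?_⟩, Te, hTe, ?_⟩
          · rcases ht1oodd with ⟨m, hm⟩; rcases h2 with ⟨m', hm'⟩
            exact ⟨m + m' + 1, by omega⟩
          · rcases ht1eeven with ⟨m, hm⟩; rcases h2 with ⟨m', hm'⟩
            exact ⟨m + m' + 1, by omega⟩
    · -- no bad edge : the p-component is locally bridgeless, use BP
      push_neg at hbad
      have LB : ∀ x y, K.Adj x y → K.Reachable p x →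
          ∃ P : K.Walk x y, P.IsPath ∧ s(x, y) ∉ P.edges := by
        intro x y hxy hpx
        obtain ⟨w⟩ := hbad x y hxy hpx
        have hsub : ∀ e ∈ w.bypass.edges, e ∈ K.edgeSet := fun e he => by
          have := w.bypass.edges_subset_edgeSet he
          rw [SimpleGraph.edgeSet_deleteEdges] at this
          exact this.1
        refine ⟨w.bypass.transfer K hsub, w.bypass_isPath.transfer hsub, ?_⟩
        intro hmem
        rw [Walk.edges_transfer] at hmem
        have := w.bypass.edges_subset_edgeSet hmem
        rw [SimpleGraph.edgeSet_deleteEdges] at this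
        simp at this
      exact BP LB O hO hOodd hpq hpz

end PL

section Count
variable [Fintype V]

lemma ndeg_deleteEdge {M : SimpleGraph V} {a b : V} (hab : M.Adj a b) (x : V) :
    ((M.deleteEdges {s(a, b)}).neighborSet x).ncard +
      (if x = a then 1 else 0) + (if x = b then 1 else 0) = (M.neighborSet x).ncard := by
  have hne : a ≠ b := M.ne_of_adj hab
  by_cases hxa : x = a
  · subst hxa
    have hset : (M.deleteEdges {s(x, b)}).neighborSet x = M.neighborSet x \ {b} := by
      ext y
      simp only [SimpleGraph.mem_neighborSet, SimpleGraph.deleteEdges_adj, Set.mem_diff,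
        Set.mem_singleton_iff]
      constructor
      · rintro ⟨h1, h2⟩
        exact ⟨h1, fun hyb => h2 (by rw [hyb])⟩
      · rintro ⟨h1, h2⟩
        exact ⟨h1, fun hmem => h2 (Sym2.congr_right.mp hmem)⟩
    rw [hset, if_pos rfl, if_neg hne]
    have hb : b ∈ M.neighborSet x := hab
    rw [Set.ncard_diff_singleton_add_one hb (Set.toFinite _)]
  · by_cases hxb : x = b
    · subst hxb
      have hset : (M.deleteEdges {s(a, x)}).neighborSet x = M.neighborSet x \ {a} := by
        ext y
        simp only [SimpleGraph.mem_neighborSet, SimpleGraph.deleteEdges_adj, Set.mem_diff,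
          Set.mem_singleton_iff]
        constructor
        · rintro ⟨h1, h2⟩
          refine ⟨h1, fun hya => h2 ?_⟩
          rw [hya, Sym2.eq_swap]
        · rintro ⟨h1, h2⟩
          refine ⟨h1, fun hmem => h2 ?_⟩
          rcases Sym2.eq_iff.mp hmem with ⟨hxa', _⟩ | ⟨_, hya⟩
          · exact absurd hxa' hxa
          · exact hya
      rw [hset, if_neg hxa, if_pos rfl]
      have ha : a ∈ M.neighborSet x := hab.symm
      rw [Set.ncard_diff_singleton_add_one ha (Set.toFinite _)]
    · have hset : (M.deleteEdges {s(a, b)}).neighborSet x = M.neighborSet x := by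
        ext y
        simp only [SimpleGraph.mem_neighborSet, SimpleGraph.deleteEdges_adj,
          Set.mem_singleton_iff]
        constructor
        · exact fun h => h.1
        · intro h
          refine ⟨h, fun hmem => ?_⟩
          rcases Sym2.eq_iff.mp hmem with ⟨hxa', _⟩ | ⟨hxb', _⟩
          · exact hxa hxa'
          · exact hxb hxb'
      rw [hset, if_neg hxa, if_neg hxb]
      omega

lemma sum_sigma_zero : ∀ (n : ℕ) (M : SimpleGraph V) (σ : V → ℤ),
    M.edgeSet.ncard ≤ n → (∀ x y, M.Adj x y → σ x + σ y = 0) →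
    ∑ x : V, σ x * ((M.neighborSet x).ncard : ℤ) = 0 := by
  intro n
  induction n using Nat.strong_induction_on with
  | _ n ih =>
    intro M σ hcard hflip
    by_cases hE : M.edgeSet = ∅
    · have hzero : ∀ x : V, (M.neighborSet x).ncard = 0 := by
        intro x
        have : M.neighborSet x = ∅ := by
          ext y
          simp only [SimpleGraph.mem_neighborSet, Set.mem_empty_iff_false, iff_false]
          intro h
          have : s(x, y) ∈ M.edgeSet := h
          rw [hE] at this
          exact this
        rw [this, Set.ncard_empty]
      simp [hzero]
    · obtain ⟨f, hf⟩ := Set.nonempty_iff_ne_empty.mpr hE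
      obtain ⟨a, b, hab, hfs⟩ : ∃ a b : V, M.Adj a b ∧ f = s(a, b) := by
        induction f using Sym2.ind with
        | _ a b => exact ⟨a, b, M.mem_edgeSet.mp hf, rfl⟩
      subst hfs
      set M' := M.deleteEdges {s(a, b)} with hM'def
      have hM'edge : M'.edgeSet = M.edgeSet \ {s(a, b)} := by
        rw [hM'def, SimpleGraph.edgeSet_deleteEdges]
      have hncard : (M.edgeSet \ {s(a, b)}).ncard + 1 = M.edgeSet.ncard :=
        Set.ncard_diff_singleton_add_one hf (Set.toFinite _)
      have hn1 : 1 ≤ n := by omega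
      have hflip' : ∀ x y, M'.Adj x y → σ x + σ y = 0 := fun x y h =>
        hflip x y ((SimpleGraph.deleteEdges_le _) h)
      have hIH := ih (n - 1) (by omega) M' σ (by rw [hM'edge]; omega) hflip'
      have key : ∀ x : V, ((M.neighborSet x).ncard : ℤ) =
          ((M'.neighborSet x).ncard : ℤ) +
            (if x = a then 1 else 0) + (if x = b then 1 else 0) := by
        intro x
        have := ndeg_deleteEdge hab x
        push_cast [← this]
        split_ifs <;> push_cast <;> ring
      calc ∑ x : V, σ x * ((M.neighborSet x).ncard : ℤ)
          = ∑ x : V, (σ x * ((M'.neighborSet x).ncard : ℤ) +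
              σ x * (if x = a then 1 else 0) + σ x * (if x = b then 1 else 0)) := by
            refine Finset.sum_congr rfl fun x _ => ?_
            rw [key x]
            ring
        _ = (∑ x : V, σ x * ((M'.neighborSet x).ncard : ℤ)) +
              (∑ x : V, σ x * (if x = a then 1 else 0)) +
              (∑ x : V, σ x * (if x = b then 1 else 0)) := by
            rw [← Finset.sum_add_distrib, ← Finset.sum_add_distrib]
        _ = 0 + σ a + σ b := by
            rw [hIH]
            congr 1
            · congr 1
              simp [mul_ite, mul_one, mul_zero]
            · simp [mul_ite, mul_one, mul_zero]
        _ = 0 := by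
            have := hflip a b hab
            omega

lemma counting {G : SimpleGraph V} {u v : V} (hadj : G.Adj u v)
    (col : V → ℤ)
    (hflip : ∀ x y, (G.deleteEdges {s(u, v)}).Adj x y → col x + col y = 0)
    (hcu : col u = 1) (hcv : col v = 1)
    (k : ℕ) (hk : 3 ≤ k) (hreg : ∀ x : V, (G.neighborSet x).ncard = k) : False := by
  have hH0 := sum_sigma_zero (G.deleteEdges {s(u, v)}).edgeSet.ncard
    (G.deleteEdges {s(u, v)}) col le_rfl hflip
  have key : ∀ x : V, ((G.neighborSet x).ncard : ℤ) =
      (((G.deleteEdges {s(u, v)}).neighborSet x).ncard : ℤ) +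
        (if x = u then 1 else 0) + (if x = v then 1 else 0) := by
    intro x
    have := ndeg_deleteEdge hadj x
    push_cast [← this]
    split_ifs <;> push_cast <;> ring
  have hGsum : ∑ x : V, col x * ((G.neighborSet x).ncard : ℤ) =
      (k : ℤ) * ∑ x : V, col x := by
    rw [Finset.mul_sum]
    refine Finset.sum_congr rfl fun x _ => ?_
    rw [hreg x]
    ring
  have hsplit : ∑ x : V, col x * ((G.neighborSet x).ncard : ℤ) = col u + col v := by
    calc ∑ x : V, col x * ((G.neighborSet x).ncard : ℤ)
        = (∑ x : V, col x * (((G.deleteEdges {s(u, v)}).neighborSet x).ncard : ℤ)) +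
            (∑ x : V, col x * (if x = u then 1 else 0)) +
            (∑ x : V, col x * (if x = v then 1 else 0)) := by
          rw [← Finset.sum_add_distrib, ← Finset.sum_add_distrib]
          refine Finset.sum_congr rfl fun x _ => ?_
          rw [key x]
          ring
      _ = 0 + col u + col v := by
          rw [hH0]
          congr 1
          · congr 1
            simp [mul_ite, mul_one, mul_zero]
          · simp [mul_ite, mul_one, mul_zero]
      _ = col u + col v := by ring
  have h2 : (k : ℤ) * ∑ x : V, col x = 2 := by
    rw [← hGsum, hsplit, hcu, hcv]
    norm_num
  have hdvd : (k : ℤ) ∣ 2 := ⟨∑ x : V, col x, h2.symm⟩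
  have hle : (k : ℤ) ≤ 2 := Int.le_of_dvd (by norm_num) hdvd
  have : (3 : ℤ) ≤ k := by exact_mod_cast hk
  omega

end Count

end EC

/-- In a 2-edge-connected `k`-regular graph with `k ≥ 3`, every edge is
contained in an even circuit. -/
theorem stmt_10 {V : Type*} [Fintype V] (G : SimpleGraph V) [DecidableRel G.Adj]
    (hG : TwoEdgeConnected G) (k : ℕ) (hk : 3 ≤ k) (hreg : G.IsRegularOfDegree k) :
    ∀ e ∈ G.edgeSet, ∃ (b : V) (D : G.Walk b b),
      D.IsCircuit ∧ Even D.length ∧ e ∈ D.edges := by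
  classical
  intro e he
  induction e using Sym2.ind with
  | _ u v =>
    have hadj : G.Adj u v := G.mem_edgeSet.mp he
    have huv : u ≠ v := G.ne_of_adj hadj
    set H : SimpleGraph V := G.deleteEdges {s(u, v)} with hHdef
    have hH : H.Connected := hG.2 _ he
    suffices hodd : ∃ t : H.Walk v u, t.IsTrail ∧ Odd t.length by
      obtain ⟨t, ht, htodd⟩ := hodd
      have hsub : ∀ e' ∈ t.edges, e' ∈ G.edgeSet := fun e' h' =>
        SimpleGraph.edgeSet_mono (SimpleGraph.deleteEdges_le _) (t.edges_subset_edgeSet h')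
      refine ⟨u, SimpleGraph.Walk.cons hadj (t.transfer G hsub), ⟨?_, ?_⟩, ?_, ?_⟩
      · rw [SimpleGraph.Walk.isTrail_cons]
        constructor
        · exact EC.transfer_isTrail t hsub ht
        · intro hmem
          rw [SimpleGraph.Walk.edges_transfer] at hmem
          have h2 := t.edges_subset_edgeSet hmem
          rw [hHdef, SimpleGraph.edgeSet_deleteEdges] at h2
          simp at h2
      · simp
      · rw [SimpleGraph.Walk.length_cons, SimpleGraph.Walk.length_transfer]
        rcases htodd with ⟨m, hm⟩
        exact ⟨m + 1, by omega⟩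
      · rw [SimpleGraph.Walk.edges_cons]
        exact List.mem_cons_self
    by_cases hOT : ∃ (x : V) (c : H.Walk x x), c.IsTrail ∧ Odd c.length
    · obtain ⟨z, O, hOt, hOodd⟩ := hOT
      have H3 : ∀ x y, H.Adj x y → H.Reachable v x →
          (H.deleteEdges {s(x, y)}).Reachable v u →
          (H.deleteEdges {s(x, y)}).Reachable x y := by
        intro x y hxy _ hvu'
        have hfG : s(x, y) ∈ G.edgeSet :=
          SimpleGraph.edgeSet_mono (SimpleGraph.deleteEdges_le _) (H.mem_edgeSet.mpr hxy)
        have hGf : (G.deleteEdges {s(x, y)}).Connected := hG.2 _ hfG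
        obtain ⟨w⟩ := hGf.preconnected x y
        have hgeq : (G.deleteEdges {s(x, y)}).deleteEdges {s(u, v)} =
            H.deleteEdges {s(x, y)} := by
          rw [hHdef]
          exact EC.deleteEdges_comm' G _ _
        have hpatch := EC.reachable_delete_patch (c := u) (d := v) w
          (by rw [hgeq]; exact hvu'.symm)
        rw [hgeq] at hpatch
        exact hpatch
      exact (EC.PL H.edgeSet.ncard H v u z O le_rfl hOt hOodd
        (hH.preconnected v u) (hH.preconnected v z) H3).1
    · push_neg at hOT
      have hyp : ∀ (x : V) (c : H.Walk x x), c.IsTrail → Even c.length := by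
        intro x c hc
        exact Nat.not_odd_iff_even.mp (hOT x c hc)
      have hallW : ∀ (x : V) (c : H.Walk x x), Even c.length := fun x c =>
        EC.even_closed_walks hyp c.length x c le_rfl
      obtain ⟨w0⟩ := hH.preconnected v u
      rcases Nat.even_or_odd w0.bypass.length with hPev | hPodd
      swap
      · exact ⟨w0.bypass, w0.bypass_isPath.isTrail, hPodd⟩
      · exfalso
        have hchoice : ∀ x : V, Nonempty (H.Walk u x) := fun x => hH.preconnected u x
        let wlk : ∀ x : V, H.Walk u x := fun x => (hchoice x).some
        have hpar : ∀ (x : V) (w : H.Walk u x), Even w.length ↔ Even (wlk x).length := by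
          intro x w
          have hc := hallW u (w.append (wlk x).reverse)
          rw [SimpleGraph.Walk.length_append, SimpleGraph.Walk.length_reverse] at hc
          exact Nat.even_add.mp hc
        set col : V → ℤ := fun x => if Even (wlk x).length then 1 else -1 with hcoldef
        have hflip : ∀ x y, H.Adj x y → col x + col y = 0 := by
          intro x y hxy
          have h1 := hpar y ((wlk x).concat hxy)
          rw [SimpleGraph.Walk.length_concat, Nat.even_add_one] at h1
          by_cases hx : Even (wlk x).length
          · have hy : ¬Even (wlk y).length := fun hy => (h1.mpr hy) hx
            simp [hcoldef, hx, hy]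
          · have hy : Even (wlk y).length := h1.mp hx
            simp [hcoldef, hx, hy]
        have hcu : col u = 1 := by
          have h0 : Even (wlk u).length := (hpar u SimpleGraph.Walk.nil).mp (by simp)
          simp [hcoldef, h0]
        have hcv : col v = 1 := by
          have h0 : Even (wlk v).length := by
            refine (hpar v w0.bypass.reverse).mp ?_
            rw [SimpleGraph.Walk.length_reverse]
            exact hPev
          simp [hcoldef, h0]
        have hregn : ∀ x : V, (G.neighborSet x).ncard = k := by
          intro x
          rw [← hreg x, ← SimpleGraph.card_neighborSet_eq_degree]
          rw [Set.ncard_eq_toFinset_card', Set.toFinset_card]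
        exact EC.counting hadj col hflip hcu hcv k hk hregn
end

section
/- Let G be a 2-edge-connected simple graph and let v be a vertex of G with degree at least 3. Then there exists a circuit of even length in G containing the vertex v. -/
open SimpleGraph

section Aux
open Walk

variable {V : Type*} {G : SimpleGraph V}

/-- In a path starting at `a`, there is at most one edge at `a`. -/
lemma aux_unique {a b : V} (p : G.Walk a b) (hp : p.IsPath) {w₁ w₂ : V}
    (h1 : s(a, w₁) ∈ p.edges) (h2 : s(a, w₂) ∈ p.edges) : w₁ = w₂ := by
  induction p with
  | nil => simp at h1
  | @cons u c d h q ih =>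
    rw [Walk.cons_isPath_iff] at hp
    have key : ∀ w, s(u, w) ∈ (Walk.cons h q).edges → w = c := by
      intro w hw
      rw [Walk.edges_cons, List.mem_cons] at hw
      rcases hw with hw | hw
      · rcases Sym2.eq_iff.mp hw with ⟨-, rfl⟩ | ⟨h1, h2⟩
        · rfl
        · exact absurd (h1 ▸ h) (G.irrefl)
      · exact absurd (Walk.fst_mem_support_of_mem_edges q hw) hp.2
    rw [key w₁ h1, key w₂ h2]

/-- Prefix of a walk stopping at the first vertex in the support of `C`,
whose edges avoid `C.edges`. -/
lemma aux_prefix {w v c : V} (C : G.Walk c c) (P : G.Walk w v) (hv : v ∈ C.support) :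
    ∃ x, ∃ _ : x ∈ C.support, ∃ P₀ : G.Walk w x,
      P₀.edges.Sublist P.edges ∧ ∀ f ∈ P₀.edges, f ∉ C.edges := by
  induction P with
  | nil => exact ⟨_, hv, Walk.nil, by simp, by simp⟩
  | @cons a b v' h P ih =>
    by_cases ha : a ∈ C.support
    · exact ⟨a, ha, Walk.nil, by simp, by simp⟩
    · obtain ⟨x, hx, P₀, hsub, hdisj⟩ := ih hv
      refine ⟨x, hx, Walk.cons h P₀, by rw [Walk.edges_cons, Walk.edges_cons]; exact hsub.cons₂ _, ?_⟩
      intro f hf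
      rw [Walk.edges_cons, List.mem_cons] at hf
      rcases hf with rfl | hf
      · exact fun hC => ha (Walk.fst_mem_support_of_mem_edges C hC)
      · exact hdisj f hf

/-- From 2-edge-connectedness, a path avoiding a given edge. -/
lemma aux_path (hG : G.Connected ∧ ∀ e ∈ G.edgeSet, (G.deleteEdges {e}).Connected)
    {v u : V} (hadj : G.Adj v u) :
    ∃ Q : G.Walk u v, Q.IsPath ∧ s(v, u) ∉ Q.edges := by
  have hc := hG.2 s(v, u) hadj
  obtain ⟨W⟩ := hc.preconnected u v
  classical
  let Q' := W.toPath
  have hedges : ∀ e ∈ (Q' : (G.deleteEdges {s(v,u)}).Walk u v).edges, e ∈ G.edgeSet := by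
    intro e he
    have := Walk.edges_subset_edgeSet _ he
    rw [edgeSet_deleteEdges] at this
    exact this.1
  refine ⟨(Q' : (G.deleteEdges {s(v,u)}).Walk u v).transfer G hedges, ?_, ?_⟩
  · exact Q'.2.transfer hedges
  · rw [Walk.edges_transfer]
    intro he
    have := Walk.edges_subset_edgeSet _ he
    rw [edgeSet_deleteEdges] at this
    exact this.2 rfl

theorem stmt_11' {V : Type*} [Fintype V] (G : SimpleGraph V) [DecidableRel G.Adj]
    (hG : G.Connected ∧ ∀ e ∈ G.edgeSet, (G.deleteEdges {e}).Connected)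
    (v : V) (hdeg : 3 ≤ G.degree v) :
    ∃ (b : V) (D : G.Walk b b), D.IsCircuit ∧ Even D.length ∧ v ∈ D.support := by
  classical
  have hcard : 3 ≤ (G.neighborFinset v).card := hdeg
  obtain ⟨u, hu⟩ : ∃ u, G.Adj v u := by
    obtain ⟨u, hu⟩ := Finset.card_pos.mp (by omega : 0 < (G.neighborFinset v).card)
    exact ⟨u, (G.mem_neighborFinset v u).mp hu⟩
  obtain ⟨Q, hQ, hQe⟩ := aux_path hG hu
  set C : G.Walk v v := Walk.cons hu Q with hC
  have hCtrail : C.IsTrail := by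
    rw [hC, Walk.isTrail_cons]; exact ⟨hQ.isTrail, hQe⟩
  by_cases hpar : Even C.length
  · exact ⟨v, C, ⟨hCtrail, by simp [hC]⟩, hpar, Walk.start_mem_support _⟩
  have huniq : ∀ w₁ w₂ : V, s(v,w₁) ∈ Q.edges → s(v,w₂) ∈ Q.edges → w₁ = w₂ := by
    intro w₁ w₂ h1 h2
    exact aux_unique Q.reverse hQ.reverse
      (by rw [Walk.edges_reverse, List.mem_reverse]; exact h1)
      (by rw [Walk.edges_reverse, List.mem_reverse]; exact h2)
  obtain ⟨w, hw, hwC⟩ : ∃ w, G.Adj v w ∧ s(v,w) ∉ C.edges := by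
    by_contra hno
    push_neg at hno
    have key : ∀ w, G.Adj v w → w = u ∨ s(v,w) ∈ Q.edges := by
      intro w haw
      have h := hno w haw
      rw [hC, Walk.edges_cons, List.mem_cons] at h
      rcases h with h | h
      · exact Or.inl (Sym2.congr_right.mp h)
      · exact Or.inr h
    obtain ⟨w₁, hw₁⟩ := Finset.card_pos.mp (by omega : 0 < (G.neighborFinset v).card)
    have hc2 : 0 < ((G.neighborFinset v).erase w₁).card := by
      rw [Finset.card_erase_of_mem hw₁]; omega
    obtain ⟨w₂, hw₂'⟩ := Finset.card_pos.mp hc2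
    obtain ⟨hne21, hw₂⟩ := Finset.mem_erase.mp hw₂'
    have hc3 : 0 < (((G.neighborFinset v).erase w₁).erase w₂).card := by
      rw [Finset.card_erase_of_mem hw₂', Finset.card_erase_of_mem hw₁]; omega
    obtain ⟨w₃, hw₃'⟩ := Finset.card_pos.mp hc3
    obtain ⟨hne32, hw₃''⟩ := Finset.mem_erase.mp hw₃'
    obtain ⟨hne31, hw₃⟩ := Finset.mem_erase.mp hw₃''
    have a₁ := (G.mem_neighborFinset v w₁).mp hw₁
    have a₂ := (G.mem_neighborFinset v w₂).mp hw₂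
    have a₃ := (G.mem_neighborFinset v w₃).mp hw₃
    rcases key w₁ a₁ with e1 | e1 <;> rcases key w₂ a₂ with e2 | e2 <;>
      rcases key w₃ a₃ with e3 | e3 <;>
      first
        | exact hne21 (e2.trans e1.symm)
        | exact hne31 (e3.trans e1.symm)
        | exact hne32 (e3.trans e2.symm)
        | exact hne21 (huniq _ _ e2 e1)
        | exact hne31 (huniq _ _ e3 e1)
        | exact hne32 (huniq _ _ e3 e2)
  obtain ⟨P, hP, hPe⟩ := aux_path hG hw
  obtain ⟨x, hx, P₀, hsub, hdisj⟩ := aux_prefix C P (Walk.start_mem_support C)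
  have hP₀nodup : P₀.edges.Nodup := hsub.nodup hP.isTrail.edges_nodup
  have hP₀e : s(v,w) ∉ P₀.edges := fun h => hPe (hsub.subset h)
  set T := C.takeUntil x hx with hT
  set Dr := C.dropUntil x hx with hDr
  have hspec : T.append Dr = C := C.take_spec hx
  have hCedges : C.edges = T.edges ++ Dr.edges := by
    conv_lhs => rw [← hspec]
    exact Walk.edges_append _ _
  have hCnodup := hCtrail.edges_nodup
  rw [hCedges] at hCnodup
  obtain ⟨hTnodup, hDrnodup, hTDdisj⟩ := List.nodup_append.mp hCnodup
  have hTe : ∀ f ∈ T.edges, f ∈ C.edges := fun f hf => hCedges ▸ List.mem_append_left _ hf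
  have hDre : ∀ f ∈ Dr.edges, f ∈ C.edges := fun f hf => hCedges ▸ List.mem_append_right _ hf
  have hlen : T.length + Dr.length = C.length := by
    conv_rhs => rw [← hspec]
    exact (Walk.length_append _ _).symm
  set D₁ : G.Walk v v := Walk.cons hw (P₀.append Dr) with hD₁
  set D₂ : G.Walk v v := Walk.cons hw (P₀.append T.reverse) with hD₂
  have hD₁trail : D₁.IsTrail := by
    rw [hD₁, Walk.isTrail_def, Walk.edges_cons, Walk.edges_append]
    refine List.nodup_cons.mpr ⟨?_, List.nodup_append'.mpr ⟨hP₀nodup, hDrnodup, ?_⟩⟩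
    · intro hmem
      rcases List.mem_append.mp hmem with h | h
      · exact hP₀e h
      · exact hwC (hDre _ h)
    · exact fun f hf hf' => hdisj f hf (hDre f hf')
  have hD₂trail : D₂.IsTrail := by
    rw [hD₂, Walk.isTrail_def, Walk.edges_cons, Walk.edges_append, Walk.edges_reverse]
    refine List.nodup_cons.mpr ⟨?_, List.nodup_append'.mpr
      ⟨hP₀nodup, List.nodup_reverse.mpr hTnodup, ?_⟩⟩
    · intro hmem
      rcases List.mem_append.mp hmem with h | h
      · exact hP₀e h
      · exact hwC (hTe _ (List.mem_reverse.mp h))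
    · exact fun f hf hf' => hdisj f hf (hTe f (List.mem_reverse.mp hf'))
  have hL1 : D₁.length = P₀.length + Dr.length + 1 := by
    rw [hD₁, Walk.length_cons, Walk.length_append]
  have hL2 : D₂.length = P₀.length + T.length + 1 := by
    rw [hD₂, Walk.length_cons, Walk.length_append, Walk.length_reverse]
  rcases Nat.even_or_odd D₁.length with h | h
  · exact ⟨v, D₁, ⟨hD₁trail, by simp [hD₁]⟩, h, Walk.start_mem_support _⟩
  · refine ⟨v, D₂, ⟨hD₂trail, by simp [hD₂]⟩, ?_, Walk.start_mem_support _⟩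
    rw [Nat.even_iff] at hpar ⊢
    rw [Nat.odd_iff] at h
    omega

end Aux

/-- In a 2-edge-connected graph, every vertex of degree at least 3 lies on an
even circuit. -/
theorem stmt_11 {V : Type*} [Fintype V] (G : SimpleGraph V) [DecidableRel G.Adj]
    (hG : TwoEdgeConnected G) (v : V) (hdeg : 3 ≤ G.degree v) :
    ∃ (b : V) (D : G.Walk b b), D.IsCircuit ∧ Even D.length ∧ v ∈ D.support :=
  stmt_11' G hG v hdeg
end

section
/- Let G be a 2-edge-connected simple graph that is not bipartite. Then every edge of G is contained in a circuit of odd length. -/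
open SimpleGraph

namespace OddCircuitAux

open SimpleGraph.Walk

variable {V : Type*} {G : SimpleGraph V}

/-- Split a walk at the first occurrence of an edge. -/
theorem splitAtEdge {u v : V} (W : G.Walk u v) {g : Sym2 V} (hg : g ∈ W.edges) :
    ∃ (a b : V) (h : G.Adj a b) (W₁ : G.Walk u a) (W₂ : G.Walk b v),
      s(a, b) = g ∧ W = W₁.append (Walk.cons h W₂) ∧ g ∉ W₁.edges := by
  induction W with
  | nil => simp at hg
  | @cons u x v h W ih =>
    rw [Walk.edges_cons, List.mem_cons] at hg
    by_cases hfirst : g = s(u, x)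
    · exact ⟨u, x, h, Walk.nil, W, hfirst.symm, by simp, by simp⟩
    · have hg' : g ∈ W.edges := hg.resolve_left hfirst
      obtain ⟨a, b, hab, W₁, W₂, hs, hW, hnot⟩ := ih hg'
      refine ⟨a, b, hab, Walk.cons h W₁, W₂, hs, ?_, ?_⟩
      · rw [Walk.cons_append, ← hW]
      · rw [Walk.edges_cons, List.mem_cons]
        rintro (h1 | h2)
        · exact hfirst h1
        · exact hnot h2

/-- Any odd closed walk yields an odd closed trail. -/
theorem oddClosedTrail : ∀ (n : ℕ) {u : V} (W : G.Walk u u), W.length ≤ n → Odd W.length →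
    ∃ (b : V) (D : G.Walk b b), D.IsTrail ∧ Odd D.length := by
  intro n
  induction n with
  | zero =>
    intro u W hle hodd
    have h0 : W.length = 0 := Nat.le_zero.mp hle
    rw [h0] at hodd
    simp [Nat.odd_iff] at hodd
  | succ n ih =>
    intro u W hle hodd
    by_cases htrail : W.IsTrail
    · exact ⟨u, W, htrail, hodd⟩
    · rw [Walk.isTrail_def] at htrail
      obtain ⟨g, hdup⟩ := List.exists_duplicate_iff_not_nodup.2 htrail
      have hg : g ∈ W.edges := hdup.mem
      obtain ⟨a, b, hab, W₁, W₂, hs, hW, hnot⟩ := splitAtEdge W hg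
      classical
      have hcount : 2 ≤ W.edges.count g := List.duplicate_iff_two_le_count.1 hdup
      have hedges : W.edges = W₁.edges ++ s(a, b) :: W₂.edges := by
        rw [hW, Walk.edges_append, Walk.edges_cons]
      have hgW₂ : g ∈ W₂.edges := by
        rw [hs] at hedges
        rw [hedges, List.count_append, List.count_cons_self] at hcount
        have h0 : W₁.edges.count g = 0 := List.count_eq_zero.2 hnot
        rw [h0] at hcount
        exact List.count_pos_iff.1 (by omega)
      obtain ⟨a', b', hab', W₃, W₄, hs', hW₂, _⟩ := splitAtEdge W₂ hgW₂
      have hlen : W.length = W₁.length + 1 + (W₃.length + 1 + W₄.length) := by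
        rw [hW, hW₂]
        simp [Walk.length_append, Walk.length_cons]
        omega
      rw [← hs, Sym2.eq_iff] at hs'
      rw [Nat.odd_iff] at hodd
      rcases hs' with ⟨rfl, rfl⟩ | ⟨rfl, rfl⟩
      · -- same direction: W₃ : b' → a', W₄ : b' → u, W₁ : u → a'
        set X : G.Walk a' a' := Walk.cons hab W₃ with hX
        set Z : G.Walk u u := W₁.append (Walk.cons hab W₄) with hZ
        have hXlen : X.length = W₃.length + 1 := by simp [hX]
        have hZlen : Z.length = W₁.length + W₄.length + 1 := by
          simp [hZ, Walk.length_append]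
          omega
        rcases Nat.even_or_odd X.length with hE | hO
        · refine ih Z ?_ ?_
          · omega
          · rw [Nat.even_iff] at hE
            rw [Nat.odd_iff]
            omega
        · exact ih X (by omega) hO
      · -- opposite direction: W₃ : b' → b', W₄ : a' → u, W₁ : u → a'
        set Z : G.Walk u u := W₁.append W₄ with hZ
        have hZlen : Z.length = W₁.length + W₄.length := by
          simp [hZ, Walk.length_append]
        rcases Nat.even_or_odd W₃.length with hE | hO
        · refine ih Z ?_ ?_
          · omega
          · rw [Nat.even_iff] at hE
            rw [Nat.odd_iff]
            omega
        · exact ih W₃ (by omega) hO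

/-- If a connected graph has no odd closed walk, it is 2-colorable. -/
theorem colorable_of_no_odd_closed_walk (hc : G.Connected)
    (h : ∀ (b : V) (D : G.Walk b b), ¬Odd D.length) : G.Colorable 2 := by
  classical
  have : Nonempty V := hc.nonempty
  obtain ⟨r⟩ := this
  have hreach : ∀ w : V, Nonempty (G.Walk r w) := fun w => (hc.preconnected r w)
  let len : V → ℕ := fun w => (hreach w).some.length
  have hvalid : ∀ {a b : V}, G.Adj a b → ¬(decide (Odd (len a)) = decide (Odd (len b))) := by
    intro a b hab heq
    have hsame : Odd (len a) ↔ Odd (len b) := decide_eq_decide.mp heq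
    have h2 : len a % 2 = len b % 2 := by
      by_cases hla : len a % 2 = 1
      · have := Nat.odd_iff.mp (hsame.mp (Nat.odd_iff.mpr hla))
        omega
      · by_contra hne
        have hlb : len b % 2 = 1 := by omega
        have := Nat.odd_iff.mp (hsame.mpr (Nat.odd_iff.mpr hlb))
        exact hla this
    set Wa := (hreach a).some
    set Wb := (hreach b).some
    have hD : Odd ((Wa.append (Walk.cons hab Wb.reverse)).length) := by
      rw [Walk.length_append, Walk.length_cons, Walk.length_reverse, Nat.odd_iff]
      show (len a + (len b + 1)) % 2 = 1
      omega
    exact h r _ hD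
  have hcol : G.Coloring Bool :=
    Coloring.mk (fun w => decide (Odd (len w))) (fun hab => hvalid hab)
  have := hcol.colorable
  simpa using this

/-- Appending edge-disjoint trails gives a trail. -/
theorem IsTrail.append_of_disjoint {u v w : V} {p : G.Walk u v} {q : G.Walk v w}
    (hp : p.IsTrail) (hq : q.IsTrail) (hd : ∀ g ∈ p.edges, g ∉ q.edges) :
    (p.append q).IsTrail := by
  rw [Walk.isTrail_def, Walk.edges_append, List.nodup_append]
  exact ⟨hp.edges_nodup, hq.edges_nodup, fun a ha b hb hab => hd a ha (hab ▸ hb)⟩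

/-- The end of a nonempty closed walk is in the tail of its support. -/
theorem end_mem_tail_support {u v : V} (W : G.Walk u v) (hW : ¬ W.Nil) :
    v ∈ W.support.tail := by
  cases W with
  | nil => simp at hW
  | cons h p => simpa using p.end_mem_support

theorem mem_support_rotate [DecidableEq V] {b x y : V} (C : G.Walk b b) (hC : ¬ C.Nil)
    (hx : x ∈ C.support) (hy : y ∈ C.support) : y ∈ (C.rotate x hx).support := by
  have htail : y ∈ C.support.tail := by
    by_cases hyb : y = b
    · subst hyb; exact end_mem_tail_support C hC
    · have hcons := C.support_eq_cons
      rw [hcons, List.mem_cons] at hy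
      rcases hy with rfl | hy2
      · exact absurd rfl hyb
      · exact hy2
  have := (C.support_rotate x hx).mem_iff (a := y)
  have hy' : y ∈ (C.rotate x hx).support.tail := this.mpr htail
  have : (C.rotate x hx).support = x :: (C.rotate x hx).support.tail := Walk.support_eq_cons _
  rw [this]
  exact List.mem_cons_of_mem _ hy'

theorem length_rotate [DecidableEq V] {b x : V} (C : G.Walk b b) (hx : x ∈ C.support) :
    (C.rotate x hx).length = C.length := by
  have := congrArg Walk.length (C.take_spec hx)
  rw [Walk.length_append] at this
  rw [Walk.rotate, Walk.length_append]
  omega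

/-- Edges of the two pieces of a split walk. -/
theorem edges_take_drop [DecidableEq V] {u v x : V} (W : G.Walk u v) (hx : x ∈ W.support) :
    (W.takeUntil x hx).edges ++ (W.dropUntil x hx).edges = W.edges := by
  have := congrArg Walk.edges (W.take_spec hx)
  rwa [Walk.edges_append] at this

theorem disjoint_take_drop [DecidableEq V] {u v x : V} {W : G.Walk u v} (hW : W.IsTrail)
    (hx : x ∈ W.support) :
    ∀ g ∈ (W.takeUntil x hx).edges, g ∉ (W.dropUntil x hx).edges := by
  have h := edges_take_drop W hx
  have := hW.edges_nodup
  rw [← h, List.nodup_append] at this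
  exact fun g hg hg2 => this.2.2 g hg g hg2 rfl

theorem sym2_cases (g : Sym2 V) : ∃ x y, g = s(x, y) :=
  Sym2.ind (fun x y => ⟨x, y, rfl⟩) g

def vertsOf (T : Set (Sym2 V)) : Set V := {x | ∃ g ∈ T, x ∈ g}

theorem mem_vertsOf {T : Set (Sym2 V)} {x : V} {g : Sym2 V} (hg : g ∈ T) (hx : x ∈ g) :
    x ∈ vertsOf T := ⟨g, hg, hx⟩

def GoodPar (G : SimpleGraph V) (T : Set (Sym2 V)) : Prop :=
  ∀ ⦃x y : V⦄, x ∈ vertsOf T → y ∈ vertsOf T → ∀ m : ℕ,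
      ∃ q : G.Walk x y, q.IsTrail ∧ (∀ g ∈ q.edges, g ∈ T) ∧ Even (q.length + m)

def GoodCyc (G : SimpleGraph V) (T : Set (Sym2 V)) : Prop :=
  ∀ ⦃x y : V⦄ (_ : G.Adj x y), s(x, y) ∈ T →
      ∃ q : G.Walk x y, q.IsTrail ∧ Even q.length ∧ ∀ g ∈ q.edges, g ∈ T ∧ g ≠ s(x, y)

/-- First vertex of a walk belonging to a set `S` (given the end is in `S`). -/
theorem firstHit (S : Set V) : ∀ {a b : V} (W : G.Walk a b), b ∈ S →
    ∃ (z : V) (W₁ : G.Walk a z), z ∈ S ∧ (∀ w ∈ W₁.support, w ∈ S → w = z) ∧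
      (∀ g ∈ W₁.edges, g ∈ W.edges) ∧ W₁.support ⊆ W.support ∧ (W.IsPath → W₁.IsPath) := by
  intro a b W hb
  induction W with
  | nil =>
    refine ⟨_, Walk.nil, hb, ?_, by simp, by simp, fun _ => Walk.IsPath.nil⟩
    intro w hw _
    simpa using hw
  | @cons c x d h W ih =>
    by_cases haS : c ∈ S
    · refine ⟨c, Walk.nil, haS, ?_, by simp, by simp, fun _ => Walk.IsPath.nil⟩
      intro w hw _
      simpa using hw
    · obtain ⟨z, W₁, hz, hfirst, hedges, hsupp, hpath⟩ := ih hb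
      refine ⟨z, Walk.cons h W₁, hz, ?_, ?_, ?_, ?_⟩
      · intro w hw hwS
        rw [Walk.support_cons, List.mem_cons] at hw
        rcases hw with rfl | hw
        · exact absurd hwS haS
        · exact hfirst w hw hwS
      · intro g hg
        rw [Walk.edges_cons, List.mem_cons] at hg ⊢
        rcases hg with rfl | hg
        · exact Or.inl rfl
        · exact Or.inr (hedges g hg)
      · intro w hw
        rw [Walk.support_cons, List.mem_cons] at hw ⊢
        rcases hw with rfl | hw
        · exact Or.inl rfl
        · exact Or.inr (hsupp hw)
      · intro hP
        rw [Walk.cons_isPath_iff] at hP ⊢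
        exact ⟨hpath hP.1, fun hc => hP.2 (hsupp hc)⟩


section Base

variable [DecidableEq V]

theorem mem_support_of_mem_vertsOf {b : V} {C : G.Walk b b} {x : V}
    (hx : x ∈ vertsOf {g | g ∈ C.edges}) : x ∈ C.support := by
  obtain ⟨g, hg, hxg⟩ := hx
  obtain ⟨c, d, rfl⟩ := sym2_cases g
  rcases Sym2.mem_iff.mp hxg with rfl | rfl
  · exact C.fst_mem_support_of_mem_edges hg
  · exact C.snd_mem_support_of_mem_edges hg

theorem basePar {b : V} {C : G.Walk b b} (hC : C.IsTrail) (hodd : Odd C.length) :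
    GoodPar G {g | g ∈ C.edges} := by
  intro x y hx hy m
  have hnil : ¬ C.Nil := by
    intro hn
    rw [Walk.nil_iff_length_eq.mp hn] at hodd
    simp [Nat.odd_iff] at hodd
  have hxs := mem_support_of_mem_vertsOf hx
  have hys := mem_support_of_mem_vertsOf hy
  have hCxtrail : (C.rotate x hxs).IsTrail := hC.rotate hxs
  have hCxlen : (C.rotate x hxs).length = C.length := length_rotate C hxs
  have hy' : y ∈ (C.rotate x hxs).support := mem_support_rotate C hnil hxs hys
  have hsplitlen : ((C.rotate x hxs).takeUntil y hy').length
      + ((C.rotate x hxs).dropUntil y hy').length = C.length := by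
    have h2 := congrArg Walk.length ((C.rotate x hxs).take_spec hy')
    rw [Walk.length_append] at h2
    omega
  have hsub : ∀ g : Sym2 V, g ∈ ((C.rotate x hxs).takeUntil y hy').edges
      ∨ g ∈ ((C.rotate x hxs).dropUntil y hy').edges → g ∈ C.edges := by
    intro g hg
    have : g ∈ (C.rotate x hxs).edges := by
      rcases hg with hg | hg
      · exact (C.rotate x hxs).edges_takeUntil_subset hy' hg
      · exact (C.rotate x hxs).edges_dropUntil_subset hy' hg
    exact (C.rotate_edges x hxs).perm.mem_iff.mp this
  rcases Nat.even_or_odd (((C.rotate x hxs).takeUntil y hy').length + m) with hE | hO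
  · exact ⟨(C.rotate x hxs).takeUntil y hy', hCxtrail.takeUntil hy',
      fun g hg => hsub g (Or.inl hg), hE⟩
  · refine ⟨((C.rotate x hxs).dropUntil y hy').reverse,
      ((hCxtrail.dropUntil hy')).reverse _, ?_, ?_⟩
    · intro g hg
      rw [Walk.edges_reverse, List.mem_reverse] at hg
      exact hsub g (Or.inr hg)
    · rw [Walk.length_reverse]
      rw [Nat.odd_iff] at hO hodd
      rw [Nat.even_iff]
      omega

theorem baseCyc {b : V} {C : G.Walk b b} (hC : C.IsTrail) (hodd : Odd C.length) :
    GoodCyc G {g | g ∈ C.edges} := by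
  intro c d hcd hmem
  have hcs : c ∈ C.support := C.fst_mem_support_of_mem_edges hmem
  have hCctrail : (C.rotate c hcs).IsTrail := hC.rotate hcs
  have hCclen : (C.rotate c hcs).length = C.length := length_rotate C hcs
  have hgC : s(c, d) ∈ (C.rotate c hcs).edges := (C.rotate_edges c hcs).perm.mem_iff.mpr hmem
  obtain ⟨a, b', hab, W₁, W₂, hs, hsplit, hnot₁⟩ := splitAtEdge (C.rotate c hcs) hgC
  have hedges : (C.rotate c hcs).edges = W₁.edges ++ s(a, b') :: W₂.edges := by
    rw [hsplit, Walk.edges_append, Walk.edges_cons]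
  have hnd : (W₁.edges ++ s(a, b') :: W₂.edges).Nodup := hedges ▸ hCctrail.edges_nodup
  rw [List.nodup_append] at hnd
  obtain ⟨hnd₁, hnd₂, hdisj⟩ := hnd
  rw [List.nodup_cons] at hnd₂
  have hlen : W₁.length + 1 + W₂.length = C.length := by
    have := congrArg Walk.length hsplit
    rw [Walk.length_append, Walk.length_cons] at this
    omega
  have hsubC : ∀ g : Sym2 V, g ∈ W₁.edges ∨ g ∈ W₂.edges → g ∈ C.edges := by
    intro g hg
    have : g ∈ (C.rotate c hcs).edges := by
      rw [hedges, List.mem_append, List.mem_cons]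
      tauto
    exact (C.rotate_edges c hcs).perm.mem_iff.mp this
  have hne : ∀ g : Sym2 V, g ∈ W₁.edges ∨ g ∈ W₂.edges → g ≠ s(c, d) := by
    rintro g hg rfl
    rw [← hs] at hnot₁
    rcases hg with hg | hg
    · rw [hs] at hnot₁; exact hnot₁ hg
    · rw [hs] at hnd₂; exact hnd₂.1 hg
  have hevq : Even (W₁.length + W₂.length) := by
    rw [Nat.odd_iff] at hodd
    rw [Nat.even_iff]
    omega
  rcases Sym2.eq_iff.mp hs with ⟨rfl, rfl⟩ | ⟨rfl, rfl⟩
  · -- W₁ : c → c, W₂ : d → c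
    refine ⟨W₁.append W₂.reverse, ?_, ?_, ?_⟩
    · refine IsTrail.append_of_disjoint ⟨hnd₁⟩ (IsTrail.reverse _ ⟨hnd₂.2⟩) ?_
      intro g hg₁ hg₂
      rw [Walk.edges_reverse, List.mem_reverse] at hg₂
      exact hdisj _ hg₁ _ (List.mem_cons_of_mem _ hg₂) rfl
    · rw [Walk.length_append, Walk.length_reverse]
      exact hevq
    · intro g hg
      rw [Walk.edges_append, List.mem_append, Walk.edges_reverse, List.mem_reverse] at hg
      exact ⟨hsubC g hg, hne g hg⟩
  · -- s(a,b') = s(d,c) case : W₁ : c → d, W₂ : c → c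
    refine ⟨W₂.append W₁, ?_, ?_, ?_⟩
    · refine IsTrail.append_of_disjoint ⟨hnd₂.2⟩ ⟨hnd₁⟩ ?_
      intro g hg₂ hg₁
      exact hdisj _ hg₁ _ (List.mem_cons_of_mem _ hg₂) rfl
    · rw [Walk.length_append]
      rw [Nat.even_iff] at hevq ⊢
      omega
    · intro g hg
      rw [Walk.edges_append, List.mem_append] at hg
      exact ⟨hsubC g hg.symm, hne g hg.symm⟩

end Base


section Step

variable [DecidableEq V]

theorem step (hconn : G.Connected)
    (hdel : ∀ e ∈ G.edgeSet, (G.deleteEdges {e}).Connected)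
    {T : Set (Sym2 V)} (hsub : T ⊆ G.edgeSet) (hTne : T.Nonempty)
    (hPar : GoodPar G T) (hCyc : GoodCyc G T) (hneq : T ≠ G.edgeSet) :
    ∃ T' : Set (Sym2 V), T ⊂ T' ∧ T' ⊆ G.edgeSet ∧ GoodPar G T' ∧ GoodCyc G T' := by
  set S : Set V := vertsOf T with hS
  by_cases hA : ∃ x y : V, G.Adj x y ∧ s(x, y) ∉ T ∧ x ∈ S ∧ y ∈ S
  · -- Case A : add an edge between two covered vertices
    obtain ⟨x, y, hxy, hxyT, hxS, hyS⟩ := hA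
    refine ⟨insert s(x, y) T, ⟨Set.subset_insert _ _, fun hc => hxyT (hc (Set.mem_insert _ _))⟩,
      Set.insert_subset (G.mem_edgeSet.mpr hxy) hsub, ?_, ?_⟩
    · -- GoodPar
      have hverts : vertsOf (insert s(x, y) T) ⊆ S := by
        rintro w ⟨g, hg, hw⟩
        rcases Set.mem_insert_iff.mp hg with rfl | hg
        · rcases Sym2.mem_iff.mp hw with rfl | rfl
          · exact hxS
          · exact hyS
        · exact ⟨g, hg, hw⟩
      intro a b ha hb m
      obtain ⟨q, hq1, hq2, hq3⟩ := hPar (hverts ha) (hverts hb) m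
      exact ⟨q, hq1, fun g hg => Set.mem_insert_of_mem _ (hq2 g hg), hq3⟩
    · -- GoodCyc
      intro c d hcd hmem
      rcases Set.mem_insert_iff.mp hmem with heq | hmem'
      · -- the new edge
        have hcS : c ∈ S := by
          have : c ∈ s(x, y) := heq ▸ Sym2.mem_mk_left c d
          rcases Sym2.mem_iff.mp this with rfl | rfl
          · exact hxS
          · exact hyS
        have hdS : d ∈ S := by
          have : d ∈ s(x, y) := heq ▸ Sym2.mem_mk_right c d
          rcases Sym2.mem_iff.mp this with rfl | rfl
          · exact hxS
          · exact hyS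
        obtain ⟨q, hq1, hq2, hq3⟩ := hPar hcS hdS 0
        refine ⟨q, hq1, by simpa using hq3, ?_⟩
        intro g hg
        refine ⟨Set.mem_insert_of_mem _ (hq2 g hg), ?_⟩
        rintro rfl
        rw [← heq] at hxyT
        exact hxyT (hq2 _ hg)
      · obtain ⟨q, hq1, hq2, hq3⟩ := hCyc hcd hmem'
        exact ⟨q, hq1, hq2, fun g hg => ⟨Set.mem_insert_of_mem _ ((hq3 g hg).1),
          (hq3 g hg).2⟩⟩
  · -- Case B : grow by an ear
    push_neg at hA
    -- there is a vertex outside S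
    obtain ⟨g₀, hg₀E, hg₀T⟩ := Set.exists_of_ssubset (hsub.ssubset_of_ne hneq)
    obtain ⟨x₀, y₀, rfl⟩ := sym2_cases g₀
    have hadj₀ : G.Adj x₀ y₀ := G.mem_edgeSet.mp hg₀E
    have hout : ∃ w, w ∉ S := by
      by_contra hall
      push_neg at hall
      exact hA x₀ y₀ hadj₀ hg₀T (hall x₀) (hall y₀)
    obtain ⟨w, hw⟩ := hout
    obtain ⟨g₁, hg₁⟩ := hTne
    obtain ⟨x₁, y₁, rfl⟩ := sym2_cases g₁
    have hx₁S : x₁ ∈ S := mem_vertsOf hg₁ (Sym2.mem_mk_left _ _)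
    -- a boundary dart
    obtain ⟨dart, _, hdfst, hdsnd⟩ :=
      ((hconn.preconnected x₁ w).some).exists_boundary_dart S hx₁S hw
    set x := dart.fst
    set y' := dart.snd
    have hxy' : G.Adj x y' := dart.adj
    have hf : s(x, y') ∈ G.edgeSet := G.mem_edgeSet.mpr hxy'
    -- a path from y' back to x avoiding the edge s(x, y')
    have hdconn := hdel _ hf
    set Rdel : (G.deleteEdges {s(x, y')}).Walk y' x :=
      ((hdconn.preconnected y' x).some.toPath : (G.deleteEdges {s(x, y')}).Path y' x).val
    have hRdelPath : Rdel.IsPath :=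
      ((hdconn.preconnected y' x).some.toPath : (G.deleteEdges {s(x, y')}).Path y' x).prop
    have htrans : ∀ g ∈ Rdel.edges, g ∈ G.edgeSet := by
      intro g hg
      have := Rdel.edges_subset_edgeSet hg
      rw [edgeSet_deleteEdges] at this
      exact this.1
    set Rt : G.Walk y' x := Rdel.transfer G htrans
    have hRtPath : Rt.IsPath := hRdelPath.transfer htrans
    have hfRt : s(x, y') ∉ Rt.edges := by
      intro hc
      rw [Walk.edges_transfer] at hc
      have := Rdel.edges_subset_edgeSet hc
      rw [edgeSet_deleteEdges] at this
      exact this.2 rfl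
    obtain ⟨z, R', hzS, hfirst, hedgesub, hsuppsub, hpath⟩ := firstHit S Rt hdfst
    have hR'path : R'.IsPath := hpath hRtPath
    have hfR' : s(x, y') ∉ R'.edges := fun hc => hfRt (hedgesub _ hc)
    set P : G.Walk x z := Walk.cons hxy' R' with hP
    have hPtrail : P.IsTrail := by
      rw [hP, Walk.isTrail_cons]
      exact ⟨hR'path.isTrail, hfR'⟩
    have hPT : ∀ g ∈ P.edges, g ∉ T := by
      intro g hgP hgT
      obtain ⟨c₁, d₁, rfl⟩ := sym2_cases g
      have hc₁S : c₁ ∈ S := mem_vertsOf hgT (Sym2.mem_mk_left _ _)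
      have hd₁S : d₁ ∈ S := mem_vertsOf hgT (Sym2.mem_mk_right _ _)
      rw [hP, Walk.edges_cons, List.mem_cons] at hgP
      rcases hgP with heq | hgR
      · rcases Sym2.eq_iff.mp heq with ⟨rfl, rfl⟩ | ⟨rfl, rfl⟩
        · exact hdsnd hd₁S
        · exact hdsnd hc₁S
      · have h1 : c₁ ∈ R'.support := R'.fst_mem_support_of_mem_edges hgR
        have h2 : d₁ ∈ R'.support := R'.snd_mem_support_of_mem_edges hgR
        have e1 : c₁ = z := hfirst _ h1 hc₁S
        have e2 : d₁ = z := hfirst _ h2 hd₁S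
        have : G.Adj c₁ d₁ := G.mem_edgeSet.mp (hsub hgT)
        rw [e1, e2] at this
        exact G.loopless.irrefl z this
    have hxS : x ∈ S := hdfst
    -- the new edge set
    refine ⟨T ∪ {g | g ∈ P.edges}, ?_, ?_, ?_, ?_⟩
    · constructor
      · exact Set.subset_union_left
      · intro hc
        have : s(x, y') ∈ T := hc (Or.inr (by rw [hP, Walk.edges_cons]; exact List.mem_cons_self))
        exact hPT _ (by rw [hP, Walk.edges_cons]; exact List.mem_cons_self) this
    · intro g hg
      rcases hg with hg | hg
      · exact hsub hg
      · exact P.edges_subset_edgeSet hg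
    · -- GoodPar
      have hvT' : ∀ w ∈ vertsOf (T ∪ {g | g ∈ P.edges}), w ∈ S ∨ w ∈ P.support := by
        rintro w ⟨g, hg, hw⟩
        rcases hg with hg | hg
        · exact Or.inl ⟨g, hg, hw⟩
        · obtain ⟨c₁, d₁, rfl⟩ := sym2_cases g
          rcases Sym2.mem_iff.mp hw with rfl | rfl
          · exact Or.inr (P.fst_mem_support_of_mem_edges hg)
          · exact Or.inr (P.snd_mem_support_of_mem_edges hg)
      have hMixed : ∀ a, a ∈ P.support → ∀ b', b' ∈ S → ∀ m : ℕ,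
          ∃ q : G.Walk a b', q.IsTrail ∧ (∀ g ∈ q.edges, g ∈ T ∪ {g | g ∈ P.edges})
            ∧ Even (q.length + m) := by
        intro a ha b' hb' m
        obtain ⟨qT, hqT1, hqT2, hqT3⟩ := hPar hxS hb' ((P.takeUntil a ha).length + m)
        refine ⟨(P.takeUntil a ha).reverse.append qT, ?_, ?_, ?_⟩
        · refine IsTrail.append_of_disjoint (IsTrail.reverse _ (hPtrail.takeUntil ha)) hqT1 ?_
          intro g hg hg2
          rw [Walk.edges_reverse, List.mem_reverse] at hg
          exact hPT g (P.edges_takeUntil_subset ha hg) (hqT2 g hg2)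
        · intro g hg
          rw [Walk.edges_append, List.mem_append, Walk.edges_reverse, List.mem_reverse] at hg
          rcases hg with hg | hg
          · exact Or.inr (P.edges_takeUntil_subset ha hg)
          · exact Or.inl (hqT2 g hg)
        · rw [Walk.length_append, Walk.length_reverse]
          rw [Nat.even_iff] at hqT3 ⊢
          omega
      have hPP : ∀ a (ha : a ∈ P.support) b' (_ : b' ∈ P.support) (m : ℕ),
          ∃ q : G.Walk a b', q.IsTrail ∧ (∀ g ∈ q.edges, g ∈ T ∪ {g | g ∈ P.edges})
            ∧ Even (q.length + m) := by
        intro a ha b' hb' m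
        by_cases hb₁ : b' ∈ (P.takeUntil a ha).support
        · obtain ⟨qT, hqT1, hqT2, hqT3⟩ := hPar hzS hxS
            ((P.dropUntil a ha).length + ((P.takeUntil a ha).takeUntil b' hb₁).length + m)
          refine ⟨(P.dropUntil a ha).append (qT.append ((P.takeUntil a ha).takeUntil b' hb₁)),
            ?_, ?_, ?_⟩
          · refine IsTrail.append_of_disjoint (hPtrail.dropUntil ha)
              (IsTrail.append_of_disjoint hqT1 ((hPtrail.takeUntil ha).takeUntil hb₁) ?_) ?_
            · intro g hg hg2
              exact hPT g (P.edges_takeUntil_subset ha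
                ((P.takeUntil a ha).edges_takeUntil_subset hb₁ hg2)) (hqT2 g hg)
            · intro g hg
              rw [Walk.edges_append, List.mem_append]
              rintro (hg2 | hg2)
              · exact hPT g (P.edges_dropUntil_subset ha hg) (hqT2 g hg2)
              · exact disjoint_take_drop hPtrail ha g
                  ((P.takeUntil a ha).edges_takeUntil_subset hb₁ hg2) hg
          · intro g hg
            rw [Walk.edges_append, List.mem_append, Walk.edges_append, List.mem_append] at hg
            rcases hg with hg | hg | hg
            · exact Or.inr (P.edges_dropUntil_subset ha hg)
            · exact Or.inl (hqT2 g hg)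
            · exact Or.inr (P.edges_takeUntil_subset ha
                ((P.takeUntil a ha).edges_takeUntil_subset hb₁ hg))
          · rw [Walk.length_append, Walk.length_append]
            rw [Nat.even_iff] at hqT3 ⊢
            omega
        · have hb₂ : b' ∈ (P.dropUntil a ha).support := by
            have hmem2 := hb'
            rw [← P.take_spec ha, Walk.mem_support_append_iff] at hmem2
            exact hmem2.resolve_left hb₁
          obtain ⟨qT, hqT1, hqT2, hqT3⟩ := hPar hxS hzS
            ((P.takeUntil a ha).length + ((P.dropUntil a ha).dropUntil b' hb₂).length + m)
          refine ⟨(P.takeUntil a ha).reverse.append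
            (qT.append ((P.dropUntil a ha).dropUntil b' hb₂).reverse), ?_, ?_, ?_⟩
          · refine IsTrail.append_of_disjoint (IsTrail.reverse _ (hPtrail.takeUntil ha))
              (IsTrail.append_of_disjoint hqT1
                (IsTrail.reverse _ ((hPtrail.dropUntil ha).dropUntil hb₂)) ?_) ?_
            · intro g hg hg2
              rw [Walk.edges_reverse, List.mem_reverse] at hg2
              exact hPT g (P.edges_dropUntil_subset ha
                ((P.dropUntil a ha).edges_dropUntil_subset hb₂ hg2)) (hqT2 g hg)
            · intro g hg
              rw [Walk.edges_reverse, List.mem_reverse] at hg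
              rw [Walk.edges_append, List.mem_append, Walk.edges_reverse, List.mem_reverse]
              rintro (hg2 | hg2)
              · exact hPT g (P.edges_takeUntil_subset ha hg) (hqT2 g hg2)
              · exact disjoint_take_drop hPtrail ha g hg
                  ((P.dropUntil a ha).edges_dropUntil_subset hb₂ hg2)
          · intro g hg
            rw [Walk.edges_append, List.mem_append, Walk.edges_append, List.mem_append,
              Walk.edges_reverse, List.mem_reverse, Walk.edges_reverse, List.mem_reverse] at hg
            rcases hg with hg | hg | hg
            · exact Or.inr (P.edges_takeUntil_subset ha hg)
            · exact Or.inl (hqT2 g hg)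
            · exact Or.inr (P.edges_dropUntil_subset ha
                ((P.dropUntil a ha).edges_dropUntil_subset hb₂ hg))
          · rw [Walk.length_append, Walk.length_append, Walk.length_reverse,
              Walk.length_reverse]
            rw [Nat.even_iff] at hqT3 ⊢
            omega
      intro a b' ha hb' m
      rcases hvT' _ ha with haS | haP
      · rcases hvT' _ hb' with hbS | hbP
        · obtain ⟨q, h1, h2, h3⟩ := hPar haS hbS m
          exact ⟨q, h1, fun g hg => Or.inl (h2 g hg), h3⟩
        · obtain ⟨q, h1, h2, h3⟩ := hMixed b' hbP a haS m
          refine ⟨q.reverse, IsTrail.reverse _ h1, ?_, ?_⟩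
          · intro g hg
            rw [Walk.edges_reverse, List.mem_reverse] at hg
            exact h2 g hg
          · rw [Walk.length_reverse]
            exact h3
      · rcases hvT' _ hb' with hbS | hbP
        · exact hMixed a haP b' hbS m
        · exact hPP a haP b' hbP m
    · -- GoodCyc
      intro c d hcd hmem
      rcases hmem with hmem | hmem
      · obtain ⟨q, h1, h2, h3⟩ := hCyc hcd hmem
        exact ⟨q, h1, h2, fun g hg => ⟨Or.inl (h3 g hg).1, (h3 g hg).2⟩⟩
      · obtain ⟨a, b', hab, P₁, P₂, hs, hsplit, hnot₁⟩ := splitAtEdge P hmem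
        have hedgesP : P.edges = P₁.edges ++ s(a, b') :: P₂.edges := by
          rw [hsplit, Walk.edges_append, Walk.edges_cons]
        have hnd : (P₁.edges ++ s(a, b') :: P₂.edges).Nodup := hedgesP ▸ hPtrail.edges_nodup
        rw [List.nodup_append] at hnd
        obtain ⟨hnd₁, hnd₂, hdisj⟩ := hnd
        rw [List.nodup_cons] at hnd₂
        have hsubP : ∀ g : Sym2 V, g ∈ P₁.edges ∨ g ∈ P₂.edges → g ∈ P.edges := by
          intro g hg
          rw [hedgesP, List.mem_append, List.mem_cons]
          tauto
        obtain ⟨qT, hqT1, hqT2, hqT3⟩ := hPar hxS hzS (P₁.length + P₂.length)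
        have key : ∃ q : G.Walk a b', q.IsTrail ∧ Even q.length ∧
            ∀ g ∈ q.edges, (g ∈ T ∪ {g | g ∈ P.edges}) ∧ g ≠ s(c, d) := by
          refine ⟨P₁.reverse.append (qT.append P₂.reverse), ?_, ?_, ?_⟩
          · refine IsTrail.append_of_disjoint (IsTrail.reverse _ ⟨hnd₁⟩)
              (IsTrail.append_of_disjoint hqT1 (IsTrail.reverse _ ⟨hnd₂.2⟩) ?_) ?_
            · intro g hg hg2
              rw [Walk.edges_reverse, List.mem_reverse] at hg2
              exact hPT g (hsubP g (Or.inr hg2)) (hqT2 g hg)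
            · intro g hg
              rw [Walk.edges_reverse, List.mem_reverse] at hg
              rw [Walk.edges_append, List.mem_append, Walk.edges_reverse, List.mem_reverse]
              rintro (hg2 | hg2)
              · exact hPT g (hsubP g (Or.inl hg)) (hqT2 g hg2)
              · exact hdisj _ hg _ (List.mem_cons_of_mem _ hg2) rfl
          · rw [Walk.length_append, Walk.length_append, Walk.length_reverse,
              Walk.length_reverse]
            rw [Nat.even_iff] at hqT3 ⊢
            omega
          · intro g hg
            rw [Walk.edges_append, List.mem_append, Walk.edges_append, List.mem_append,
              Walk.edges_reverse, List.mem_reverse, Walk.edges_reverse, List.mem_reverse] at hg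
            rcases hg with hg | hg | hg
            · refine ⟨Or.inr (hsubP g (Or.inl hg)), ?_⟩
              rintro rfl
              exact hnot₁ hg
            · refine ⟨Or.inl (hqT2 g hg), ?_⟩
              rintro rfl
              exact hPT _ hmem (hqT2 _ hg)
            · refine ⟨Or.inr (hsubP g (Or.inr hg)), ?_⟩
              rintro rfl
              rw [hs] at hnd₂
              exact hnd₂.1 hg
        rcases Sym2.eq_iff.mp hs with ⟨rfl, rfl⟩ | ⟨rfl, rfl⟩
        · exact key
        · obtain ⟨q, h1, h2, h3⟩ := key
          refine ⟨q.reverse, IsTrail.reverse _ h1, by rwa [Walk.length_reverse], ?_⟩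
          intro g hg
          rw [Walk.edges_reverse, List.mem_reverse] at hg
          exact h3 g hg

end Step


theorem grow [Fintype V] (hconn : G.Connected)
    (hdel : ∀ e ∈ G.edgeSet, (G.deleteEdges {e}).Connected) :
    ∀ (k : ℕ) (T : Set (Sym2 V)), T ⊆ G.edgeSet → T.Nonempty → GoodPar G T → GoodCyc G T →
      (G.edgeSet \ T).ncard ≤ k → GoodCyc G G.edgeSet := by
  intro k
  classical
  induction k with
  | zero =>
    intro T hsub hne hPar hCyc hcard
    have hfin : (G.edgeSet \ T).Finite := Set.toFinite _
    have hempty : (G.edgeSet \ T) = ∅ := by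
      rw [← Set.ncard_eq_zero hfin]
      omega
    have hTeq : T = G.edgeSet := Set.Subset.antisymm hsub (Set.diff_eq_empty.mp hempty)
    exact hTeq ▸ hCyc
  | succ k ih =>
    intro T hsub hne hPar hCyc hcard
    by_cases heq : T = G.edgeSet
    · exact heq ▸ hCyc
    · obtain ⟨T', hss, hsub', hPar', hCyc'⟩ := step hconn hdel hsub hne hPar hCyc heq
      have hT'ne : T'.Nonempty := hne.mono hss.subset
      obtain ⟨gs, hgT', hgT⟩ := Set.exists_of_ssubset hss
      have hstrict : (G.edgeSet \ T') ⊂ (G.edgeSet \ T) := by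
        constructor
        · exact Set.diff_subset_diff_right hss.subset
        · intro hcsub
          have hmem : gs ∈ G.edgeSet \ T := ⟨hsub' hgT', hgT⟩
          exact (hcsub hmem).2 hgT'
      have hlt := Set.ncard_lt_ncard hstrict (Set.toFinite _)
      exact ih T' hsub' hT'ne hPar' hCyc' (by omega)

end OddCircuitAux

open OddCircuitAux

/-- In a 2-edge-connected non-bipartite graph, every edge is contained in an
odd circuit. -/
theorem stmt_12 {V : Type*} [Fintype V] (G : SimpleGraph V) (hG : TwoEdgeConnected G)
    (hbip : ¬ G.Colorable 2) :
    ∀ e ∈ G.edgeSet, ∃ (b : V) (D : G.Walk b b),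
      D.IsCircuit ∧ Odd D.length ∧ e ∈ D.edges := by
  classical
  obtain ⟨hconn, hdel⟩ := hG
  intro e he
  have hodd : ∃ (b : V) (D : G.Walk b b), Odd D.length := by
    by_contra hno
    push_neg at hno
    exact hbip (colorable_of_no_odd_closed_walk hconn hno)
  obtain ⟨b₀, W, hWodd⟩ := hodd
  obtain ⟨b, C, hCtrail, hCodd⟩ := oddClosedTrail W.length W le_rfl hWodd
  have hsubset : {g | g ∈ C.edges} ⊆ G.edgeSet := fun g hg => C.edges_subset_edgeSet hg
  have hne : {g : Sym2 V | g ∈ C.edges}.Nonempty := by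
    cases C with
    | nil => simp [Nat.odd_iff] at hCodd
    | cons h p => exact ⟨_, by rw [Set.mem_setOf_eq, Walk.edges_cons]; exact List.mem_cons_self⟩
  have hGC : GoodCyc G G.edgeSet :=
    grow hconn hdel ((G.edgeSet \ {g | g ∈ C.edges}).ncard) _ hsubset hne
      (basePar hCtrail hCodd) (baseCyc hCtrail hCodd) le_rfl
  obtain ⟨u, v, rfl⟩ := sym2_cases e
  have hadj : G.Adj u v := G.mem_edgeSet.mp he
  obtain ⟨q, hq1, hq2, hq3⟩ := hGC hadj he
  refine ⟨u, q.append (Walk.cons hadj.symm Walk.nil), ⟨?_, ?_⟩, ?_, ?_⟩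
  · rw [Walk.isTrail_def, Walk.edges_append, Walk.edges_cons, Walk.edges_nil, List.nodup_append]
    refine ⟨hq1.edges_nodup, List.nodup_singleton _, ?_⟩
    intro g hg _ hgmem heq
    rw [List.mem_singleton] at hgmem
    subst hgmem
    exact (hq3 _ hg).2 (heq.trans Sym2.eq_swap)
  · intro hnil
    have hlen := congrArg Walk.length hnil
    rw [Walk.length_append, Walk.length_cons, Walk.length_nil] at hlen
    simp at hlen
  · rw [Walk.length_append, Walk.length_cons, Walk.length_nil]
    rw [Nat.even_iff] at hq2
    rw [Nat.odd_iff]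
    omega
  · rw [Walk.edges_append, List.mem_append, Walk.edges_cons, Walk.edges_nil]
    right
    rw [List.mem_singleton]
    exact Sym2.eq_swap
end

section
/- Let G be a 2-connected simple graph and let e = {u, v} and f = {x, y} be two distinct edges of G sharing no endpoint. Then there exist two vertex-disjoint paths in G, one joining u to one endpoint of f and the other joining v to the other endpoint of f. -/
open SimpleGraph

namespace TwoConnAux

variable {V : Type*} [DecidableEq V] {G : SimpleGraph V}

/-- From connectivity of each vertex-deleted subgraph, get a path avoiding a vertex. -/
lemma avoid (hw : ∀ w : V, (G.induce {x | x ≠ w}).Connected) (w a b : V)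
    (ha : a ≠ w) (hb : b ≠ w) :
    ∃ p : G.Walk a b, p.IsPath ∧ w ∉ p.support := by
  obtain ⟨q⟩ := (hw w).preconnected ⟨a, ha⟩ ⟨b, hb⟩
  set q' : G.Walk a b := q.map (SimpleGraph.Embedding.induce {x | x ≠ w}).toHom with hq'
  refine ⟨q'.toPath, q'.toPath.2, fun hmem => ?_⟩
  have := Walk.support_toPath_subset q' hmem
  have this : w ∈ (q.map (SimpleGraph.Embedding.induce {x | x ≠ w}).toHom).support := this
  rw [Walk.support_map] at this
  obtain ⟨z, _, hz⟩ := List.mem_map.mp this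
  exact z.2 hz

/-- First vertex of a walk lying in a set `S` (the target is assumed to be in `S`). -/
lemma first_hit {a b : V} (p : G.Walk a b) (S : Set V) (hb : b ∈ S) :
    ∃ w, w ∈ S ∧ ∃ q : G.Walk a w,
      (∀ z ∈ q.support, z ∈ p.support) ∧ (∀ z ∈ q.support, z ∈ S → z = w) := by
  induction p with
  | nil =>
    refine ⟨_, hb, Walk.nil, ?_, ?_⟩ <;> simp
  | @cons u v b h p ih =>
    by_cases hu : u ∈ S
    · exact ⟨u, hu, Walk.nil, by simp, by simp⟩
    · obtain ⟨w, hwS, q, hsub, hmin⟩ := ih hb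
      refine ⟨w, hwS, Walk.cons h q, ?_, ?_⟩
      · intro z hz
        rw [Walk.support_cons] at hz ⊢
        rcases List.mem_cons.mp hz with rfl | hz
        · exact List.mem_cons_self
        · exact List.mem_cons_of_mem _ (hsub z hz)
      · intro z hz hzS
        rw [Walk.support_cons] at hz
        rcases List.mem_cons.mp hz with rfl | hz
        · exact absurd hzS hu
        · exact hmin z hz hzS

/-- Appending paths meeting only in the common endpoint gives a path. -/
lemma append_isPath {a b c : V} {p : G.Walk a c} {q : G.Walk c b}
    (hp : p.IsPath) (hq : q.IsPath) (h : ∀ z ∈ p.support, z ∈ q.support → z = c) :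
    (p.append q).IsPath := by
  rw [Walk.isPath_def, Walk.support_append, List.nodup_append]
  have hqn := hq.support_nodup
  rw [q.support_eq_cons] at hqn
  refine ⟨hp.support_nodup, hqn.of_cons, ?_⟩
  intro z hz z' hz' hzz
  subst hzz
  have hz'' : z ∈ q.support := q.support_eq_cons ▸ List.mem_cons_of_mem _ hz'
  have := h z hz hz''
  subst this
  exact (List.nodup_cons.mp hqn).1 hz'

lemma take_drop_inter {a b : V} {p : G.Walk a b} (hp : p.IsPath) {u : V} (hu : u ∈ p.support) :
    ∀ z ∈ (p.takeUntil u hu).support, z ∈ (p.dropUntil u hu).support → z = u := by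
  intro z hz hz'
  have hnd := hp.support_nodup
  rw [← Walk.take_spec p hu, Walk.support_append, List.nodup_append] at hnd
  by_contra hne
  have hz'' : z ∈ (p.dropUntil u hu).support.tail := by
    rw [(p.dropUntil u hu).support_eq_cons] at hz'
    rcases List.mem_cons.mp hz' with rfl | h
    · exact absurd rfl hne
    · exact h
  exact hnd.2.2 z hz z hz'' rfl

/-- A "fan" at `u` towards `x` and `y`: two paths meeting only at `u`. -/
def IsFan (G : SimpleGraph V) (u x y : V) (p : G.Walk u x) (q : G.Walk u y) : Prop :=
  p.IsPath ∧ q.IsPath ∧ ∀ z ∈ p.support, z ∈ q.support → z = u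

lemma IsFan.symm {u x y : V} {p : G.Walk u x} {q : G.Walk u y} (h : IsFan G u x y p q) :
    IsFan G u y x q p :=
  ⟨h.2.1, h.1, fun z hz hz' => h.2.2 z hz' hz⟩

/-- Shift a fan at `z` to a fan at a vertex `u` lying on its first branch. -/
lemma fan_shift {z x y u : V} {p : G.Walk z x} {q : G.Walk z y}
    (hf : IsFan G z x y p q) (hu : u ∈ p.support) (huz : u ≠ z) :
    ∃ (p' : G.Walk u x) (q' : G.Walk u y), IsFan G u x y p' q' := by
  obtain ⟨hp, hq, hfan⟩ := hf
  set p₁ := p.takeUntil u hu with hp₁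
  set p₂ := p.dropUntil u hu with hp₂
  have hzp₂ : z ∉ p₂.support := fun hz =>
    huz.symm (take_drop_inter hp hu z p₁.start_mem_support hz)
  refine ⟨p₂, p₁.reverse.append q, hp.dropUntil hu, ?_, ?_⟩
  · refine append_isPath (hp.takeUntil hu).reverse hq ?_
    intro w hw hw'
    rw [Walk.support_reverse, List.mem_reverse] at hw
    exact hfan w (p.support_takeUntil_subset hu hw) hw'
  · intro w hw hw'
    rw [Walk.support_append, List.mem_append] at hw'
    rcases hw' with hw' | hw'
    · rw [Walk.support_reverse, List.mem_reverse] at hw'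
      exact take_drop_inter hp hu w hw' hw
    · have hw'' : w ∈ q.support := q.support_eq_cons ▸ List.mem_cons_of_mem _ hw'
      have := hfan w (p.support_dropUntil_subset hu hw) hw''
      subst this
      exact absurd hw hzp₂

/-- Attach a vertex `u` outside a fan at `z`, using an edge `uz` and a path `T` from `u`
meeting the fan only at its last vertex `w`, which lies on the first branch. -/
lemma fan_attach {z x y u w : V} {p : G.Walk z x} {q : G.Walk z y}
    (hf : IsFan G z x y p q) (huz : G.Adj u z)
    (hup : u ∉ p.support) (huq : u ∉ q.support)
    {T : G.Walk u w} (hT : T.IsPath) (hwp : w ∈ p.support) (hwz : w ≠ z)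
    (hTS : ∀ a ∈ T.support, (a ∈ p.support ∨ a ∈ q.support) → a = w) :
    ∃ (p' : G.Walk u x) (q' : G.Walk u y), IsFan G u x y p' q' := by
  obtain ⟨hp, hq, hfan⟩ := hf
  have hzdrop : z ∉ (p.dropUntil w hwp).support := fun hz =>
    hwz.symm (take_drop_inter hp hwp z (p.takeUntil w hwp).start_mem_support hz)
  refine ⟨T.append (p.dropUntil w hwp), Walk.cons huz q, ?_, hq.cons huq, ?_⟩
  · refine append_isPath hT (hp.dropUntil hwp) ?_
    intro a ha ha'
    exact hTS a ha (Or.inl (p.support_dropUntil_subset hwp ha'))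
  · intro a ha ha'
    rw [Walk.support_cons] at ha'
    rcases List.mem_cons.mp ha' with rfl | haq
    · rfl
    · exfalso
      rw [Walk.support_append, List.mem_append] at ha
      rcases ha with ha | ha
      · have := hTS a ha (Or.inr haq)
        subst this
        exact hwz (hfan a hwp haq)
      · have ha'' : a ∈ (p.dropUntil w hwp).support :=
          (p.dropUntil w hwp).support_eq_cons ▸ List.mem_cons_of_mem _ ha
        have := hfan a (p.support_dropUntil_subset hwp ha'') haq
        subst this
        exact hzdrop ha''

/-- The fan lemma: in a graph all of whose vertex-deleted subgraphs are connected,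
for every edge `xy` and vertex `u` off that edge there is a fan from `u` to `x` and `y`. -/
lemma fan (hconn : G.Connected) (hw : ∀ w : V, (G.induce {x | x ≠ w}).Connected) :
    ∀ (n : ℕ) (u x y : V), G.Adj x y → u ≠ x → u ≠ y → G.dist u x ≤ n →
    ∃ (p : G.Walk u x) (q : G.Walk u y), IsFan G u x y p q := by
  intro n
  induction n with
  | zero =>
    intro u x y hxy hux huy hd
    have := hconn.pos_dist_of_ne hux
    omega
  | succ n ih =>
    intro u x y hxy hux huy hd
    by_cases hax : G.Adj u x
    · obtain ⟨q, hq, hxq⟩ := avoid hw x u y hux hxy.ne'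
      refine ⟨Walk.cons hax Walk.nil, q, ?_, hq, ?_⟩
      · simp [Walk.isPath_def, hux]
      · intro z hz hz'
        simp only [Walk.support_cons, Walk.support_nil, List.mem_cons,
          List.mem_singleton, List.not_mem_nil, or_false] at hz
        rcases hz with rfl | rfl
        · rfl
        · exact absurd hz' hxq
    · by_cases hay : G.Adj u y
      · obtain ⟨p, hp, hyp⟩ := avoid hw y u x huy hxy.ne
        refine ⟨p, Walk.cons hay Walk.nil, hp, ?_, ?_⟩
        · simp [Walk.isPath_def, huy]
        · intro z hz hz'
          simp only [Walk.support_cons, Walk.support_nil, List.mem_cons,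
            List.mem_singleton, List.not_mem_nil, or_false] at hz'
          rcases hz' with rfl | rfl
          · rfl
          · exact absurd hz hyp
      · obtain ⟨p0, hlen⟩ := (hconn.preconnected u x).exists_walk_length_eq_dist
        cases p0 with
        | nil => exact absurd rfl hux
        | @cons _ z _ h p1 =>
          have hzu : z ≠ u := h.ne'
          have hzx : z ≠ x := by rintro rfl; exact hax h
          have hzy : z ≠ y := by rintro rfl; exact hay h
          have hdz : G.dist z x ≤ n := by
            have h1 := G.dist_le p1
            have h2 : 0 < G.dist u x := hconn.pos_dist_of_ne hux
            simp only [Walk.length_cons] at hlen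
            omega
          obtain ⟨p, q, hfz⟩ := ih z x y hxy hzx hzy hdz
          by_cases hup : u ∈ p.support
          · exact fan_shift hfz hup hzu.symm
          · by_cases huq : u ∈ q.support
            · obtain ⟨q', p', hf⟩ := fan_shift hfz.symm huq hzu.symm
              exact ⟨p', q', hf.symm⟩
            · obtain ⟨T0, hT0, hzT0⟩ := avoid hw z u x hzu.symm hzx.symm
              obtain ⟨w, hwS, T1, hT1sub, hT1min⟩ :=
                first_hit T0 {a | a ∈ p.support ∨ a ∈ q.support}
                  (Or.inl p.end_mem_support)
              set T := (T1.toPath : G.Walk u w) with hT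
              have hTsub : ∀ a ∈ T.support, a ∈ T1.support :=
                fun a ha => Walk.support_toPath_subset T1 ha
              have hTmin : ∀ a ∈ T.support, (a ∈ p.support ∨ a ∈ q.support) → a = w :=
                fun a ha h' => hT1min a (hTsub a ha) h'
              have hwz : w ≠ z := by
                rintro rfl
                exact hzT0 (hT1sub _ T1.end_mem_support)
              rcases hwS with hwp | hwq
              · exact fan_attach hfz h hup huq T1.toPath.2 hwp hwz hTmin
              · obtain ⟨q', p', hf⟩ := fan_attach hfz.symm h huq hup T1.toPath.2 hwq hwz
                  (fun a ha h' => hTmin a ha h'.symm)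
                exact ⟨p', q', hf.symm⟩

end TwoConnAux

/-- A graph is 2-connected if it has more than 2 vertices, is connected, and
remains connected after the deletion of any single vertex. -/
def TwoConnected {V : Type*} [Fintype V] (G : SimpleGraph V) : Prop :=
  2 < Fintype.card V ∧ G.Connected ∧ ∀ v : V, (G.induce {x | x ≠ v}).Connected

/-- In a 2-connected graph, given two edges `{u, v}` and `{x, y}` sharing no
endpoint, there are two vertex-disjoint paths joining the endpoints of the
first edge to the endpoints of the second (in one of the two pairings). -/
theorem stmt_13 {V : Type*} [Fintype V] (G : SimpleGraph V) (hG : TwoConnected G)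
    (u v x y : V) (he : G.Adj u v) (hf : G.Adj x y)
    (hux : u ≠ x) (huy : u ≠ y) (hvx : v ≠ x) (hvy : v ≠ y) :
    (∃ (p : G.Walk u x) (q : G.Walk v y), p.IsPath ∧ q.IsPath ∧
      p.support.Disjoint q.support) ∨
    (∃ (p : G.Walk u y) (q : G.Walk v x), p.IsPath ∧ q.IsPath ∧
      p.support.Disjoint q.support) := by
  classical
  obtain ⟨hcard, hconn, hind⟩ := hG
  obtain ⟨p, q, hp, hq, hfan⟩ :=
    TwoConnAux.fan hconn hind (G.dist u x) u x y hf hux huy le_rfl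
  have huv : u ≠ v := he.ne
  by_cases hvp : v ∈ p.support
  · -- v on the u→x branch: use (q : u→y) and the v→x part of p
    right
    refine ⟨q, p.dropUntil v hvp, hq, hp.dropUntil hvp, ?_⟩
    intro a haq hap
    have hap' : a ∈ p.support := p.support_dropUntil_subset hvp hap
    have h' : a = u := hfan a hap' haq
    rw [h'] at hap
    exact huv (TwoConnAux.take_drop_inter hp hvp u
      ((p.takeUntil v hvp).start_mem_support) hap)
  · by_cases hvq : v ∈ q.support
    · left
      refine ⟨p, q.dropUntil v hvq, hp, hq.dropUntil hvq, ?_⟩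
      intro a hap haq
      have haq' : a ∈ q.support := q.support_dropUntil_subset hvq haq
      have h' : a = u := hfan a hap haq'
      rw [h'] at haq
      exact huv (TwoConnAux.take_drop_inter hq hvq u
        ((q.takeUntil v hvq).start_mem_support) haq)
    · -- v off the fan: connect v to the fan avoiding u
      obtain ⟨T0, hT0, huT0⟩ := TwoConnAux.avoid hind u v x huv.symm hux.symm
      obtain ⟨w, hwS, T1, hT1sub, hT1min⟩ :=
        TwoConnAux.first_hit T0 {a | a ∈ p.support ∨ a ∈ q.support}
          (Or.inl p.end_mem_support)
      set T := (T1.toPath : G.Walk v w) with hTdef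
      have hTsub : ∀ a ∈ T.support, a ∈ T1.support :=
        fun a ha => SimpleGraph.Walk.support_toPath_subset T1 ha
      have hTmin : ∀ a ∈ T.support, (a ∈ p.support ∨ a ∈ q.support) → a = w :=
        fun a ha h' => hT1min a (hTsub a ha) h'
      have hTpath : T.IsPath := T1.toPath.2
      have huT : u ∉ T.support := fun hu => huT0 (hT1sub u (hTsub u hu))
      have hwu : w ≠ u := by
        rintro rfl
        exact huT T.end_mem_support
      rcases hwS with hwp | hwq
      · -- w on the u→x branch: use (q : u→y)?? no: we need v→x via w
        right
        have hudrop : u ∉ (p.dropUntil w hwp).support := fun hu =>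
          hwu.symm (TwoConnAux.take_drop_inter hp hwp u
            ((p.takeUntil w hwp).start_mem_support) hu)
        refine ⟨q, T.append (p.dropUntil w hwp), hq, ?_, ?_⟩
        · refine TwoConnAux.append_isPath hTpath (hp.dropUntil hwp) ?_
          intro a ha ha'
          exact hTmin a ha (Or.inl (p.support_dropUntil_subset hwp ha'))
        · intro a haq ha
          rw [SimpleGraph.Walk.support_append, List.mem_append] at ha
          rcases ha with ha | ha
          · have h' := hTmin a ha (Or.inr haq)
            rw [h'] at haq
            exact hwu (hfan w hwp haq)
          · have ha'' : a ∈ (p.dropUntil w hwp).support :=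
              (p.dropUntil w hwp).support_eq_cons ▸ List.mem_cons_of_mem _ ha
            have h' : a = u := hfan a (p.support_dropUntil_subset hwp ha'') haq
            rw [h'] at ha''
            exact hudrop ha''
      · -- w on the u→y branch: use (p : u→x) and v→y via w
        left
        have hudrop : u ∉ (q.dropUntil w hwq).support := fun hu =>
          hwu.symm (TwoConnAux.take_drop_inter hq hwq u
            ((q.takeUntil w hwq).start_mem_support) hu)
        refine ⟨p, T.append (q.dropUntil w hwq), hp, ?_, ?_⟩
        · refine TwoConnAux.append_isPath hTpath (hq.dropUntil hwq) ?_
          intro a ha ha'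
          exact hTmin a ha (Or.inr (q.support_dropUntil_subset hwq ha'))
        · intro a hap ha
          rw [SimpleGraph.Walk.support_append, List.mem_append] at ha
          rcases ha with ha | ha
          · have h' := hTmin a ha (Or.inl hap)
            rw [h'] at hap
            exact hwu (hfan w hap hwq)
          · have ha'' : a ∈ (q.dropUntil w hwq).support :=
              (q.dropUntil w hwq).support_eq_cons ▸ List.mem_cons_of_mem _ ha
            have h' : a = u := hfan a hap (q.support_dropUntil_subset hwq ha'')
            rw [h'] at ha''
            exact hudrop ha''
end

section
/- Let G be a 2-connected simple graph, let k ≥ 3 be a positive integer such that the degree of every vertex of G is divisible by k, and let e = {u, v} be an edge of G lying on some cycle of odd length. Then the graph G − e (G with the edge e deleted) is not bipartite. -/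
open SimpleGraph

lemma walk_parity {V : Type*} {G : SimpleGraph V} (f : V → ZMod 2)
    (hstep : ∀ {a b : V}, G.Adj a b → f b = f a + 1) :
    ∀ {a b : V} (p : G.Walk a b), f b = f a + (p.length : ZMod 2) := by
  intro a b p
  induction p with
  | nil => simp
  | cons h q ih =>
    rw [Walk.length_cons]
    push_cast
    rw [ih, hstep h]; ring

/-- If `G` is 2-connected with all degrees divisible by some `k ≥ 3`, and the
edge `{u, v}` lies on an odd cycle, then `G − {u, v}` is not bipartite. -/
theorem stmt_14 {V : Type*} [Fintype V] (G : SimpleGraph V) [DecidableRel G.Adj]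
    (hG : TwoConnected G) (k : ℕ) (hk : 3 ≤ k) (hdeg : ∀ w : V, k ∣ G.degree w)
    (u v : V) (huv : G.Adj u v)
    (hodd : ∃ (a : V) (C : G.Walk a a), C.IsCycle ∧ Odd C.length ∧ s(u, v) ∈ C.edges) :
    ¬ (G.deleteEdges {s(u, v)}).Colorable 2 := by
  classical
  intro hcol
  obtain ⟨c0⟩ := hcol
  set H := G.deleteEdges {s(u, v)} with hH
  let f : V → ZMod 2 := fun x => ((c0 x : Fin 2).val : ZMod 2)
  have hHadj : ∀ {a b : V}, H.Adj a b ↔ G.Adj a b ∧ s(a, b) ≠ s(u, v) := by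
    intro a b
    rw [hH, deleteEdges_adj]
    simp
  have hne : ∀ {a b : V}, H.Adj a b → f a ≠ f b := by
    intro a b hab h
    apply c0.valid hab
    have key : ∀ x y : Fin 2, ((x.val : ZMod 2) = (y.val : ZMod 2)) → x = y := by decide
    exact key _ _ h
  have hstepH : ∀ {a b : V}, H.Adj a b → f b = f a + 1 := by
    intro a b hab
    have key : ∀ x y : ZMod 2, x ≠ y → y = x + 1 := by decide
    exact key _ _ (hne hab)
  obtain ⟨a, C, hC, hCodd, heC⟩ := hodd
  by_cases hfuv : f u = f v
  · -- degree counting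
    -- degrees of H
    have hdegne : ∀ x : V, x ≠ u → x ≠ v → H.degree x = G.degree x := by
      intro x hxu hxv
      unfold SimpleGraph.degree
      congr 1
      ext y
      simp only [mem_neighborFinset, hHadj]
      constructor
      · rintro ⟨h, -⟩; exact h
      · intro h
        refine ⟨h, fun hc => ?_⟩
        rw [Sym2.eq_iff] at hc
        rcases hc with ⟨h1, h2⟩ | ⟨h1, h2⟩
        · exact hxu h1
        · exact hxv h1
    have hnbu : H.neighborFinset u = (G.neighborFinset u).erase v := by
      ext y
      simp only [mem_neighborFinset, hHadj, Finset.mem_erase]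
      constructor
      · rintro ⟨h, hs⟩
        refine ⟨fun hc => hs ?_, h⟩
        subst hc; rfl
      · rintro ⟨hyv, h⟩
        refine ⟨h, fun hc => ?_⟩
        rw [Sym2.eq_iff] at hc
        rcases hc with ⟨h1, h2⟩ | ⟨h1, h2⟩
        · exact hyv h2
        · exact hyv (h2.trans h1)
    have hnbv : H.neighborFinset v = (G.neighborFinset v).erase u := by
      ext y
      simp only [mem_neighborFinset, hHadj, Finset.mem_erase]
      constructor
      · rintro ⟨h, hs⟩
        refine ⟨fun hc => hs ?_, h⟩
        subst hc
        rw [Sym2.eq_swap]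
      · rintro ⟨hyu, h⟩
        refine ⟨h, fun hc => ?_⟩
        rw [Sym2.eq_iff] at hc
        rcases hc with ⟨h1, h2⟩ | ⟨h1, h2⟩
        · exact hyu (h2.trans h1)
        · exact hyu h2
    have hdegu : H.degree u + 1 = G.degree u := by
      unfold SimpleGraph.degree
      rw [hnbu, Finset.card_erase_of_mem (by rwa [mem_neighborFinset])]
      have : 0 < (G.neighborFinset u).card :=
        Finset.card_pos.mpr ⟨v, by rwa [mem_neighborFinset]⟩
      omega
    have hdegv : H.degree v + 1 = G.degree v := by
      unfold SimpleGraph.degree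
      rw [hnbv, Finset.card_erase_of_mem (by rw [mem_neighborFinset]; exact huv.symm)]
      have : 0 < (G.neighborFinset v).card :=
        Finset.card_pos.mpr ⟨u, by rw [mem_neighborFinset]; exact huv.symm⟩
      omega
    -- sum over each color class counts edges once
    have key : ∀ j : ZMod 2,
        ∑ x ∈ Finset.univ.filter (fun x => f x = j), H.degree x
      = ∑ x : V, ∑ y : V, (if H.Adj x y ∧ f x = j then 1 else 0) := by
      intro j
      rw [Finset.sum_filter]
      apply Finset.sum_congr rfl
      intro x _
      by_cases hx : f x = j
      · simp only [hx, if_true, and_true]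
        show (H.neighborFinset x).card = _
        rw [neighborFinset_eq_filter, Finset.card_filter]
      · simp [hx]
    have hswap : ∀ i : ZMod 2,
        ∑ x ∈ Finset.univ.filter (fun x => f x = i), H.degree x
      = ∑ x ∈ Finset.univ.filter (fun x => f x = i + 1), H.degree x := by
      intro i
      rw [key i, key (i + 1)]
      have step1 : ∀ x y : V,
          (if H.Adj x y ∧ f x = i then (1 : ℕ) else 0)
        = (if H.Adj y x ∧ f y = i + 1 then 1 else 0) := by
        intro x y
        congr 1
        apply propext
        constructor
        · rintro ⟨h, hfx⟩
          exact ⟨h.symm, by rw [hstepH h, hfx]⟩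
        · rintro ⟨h, hfy⟩
          refine ⟨h.symm, ?_⟩
          have := hstepH h.symm
          rw [hfy] at this
          have key2 : ∀ a b : ZMod 2, a + 1 = b + 1 → a = b := by decide
          exact (key2 _ _ this.symm)
      calc ∑ x : V, ∑ y : V, (if H.Adj x y ∧ f x = i then (1:ℕ) else 0)
          = ∑ x : V, ∑ y : V, (if H.Adj y x ∧ f y = i + 1 then (1:ℕ) else 0) := by
            apply Finset.sum_congr rfl; intro x _
            apply Finset.sum_congr rfl; intro y _
            exact step1 x y
        _ = ∑ y : V, ∑ x : V, (if H.Adj y x ∧ f y = i + 1 then (1:ℕ) else 0) :=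
            Finset.sum_comm
    -- now put it together
    set s := f u with hs
    set A := Finset.univ.filter (fun x => f x = s) with hA
    set B := Finset.univ.filter (fun x => f x = s + 1) with hB
    have huA : u ∈ A := by simp [hA, hs]
    have hvA : v ∈ A := by simp [hA, ← hfuv]
    have hone : (1 : ZMod 2) ≠ 0 := by decide
    have hkB : k ∣ ∑ x ∈ B, H.degree x := by
      apply Finset.dvd_sum
      intro x hx
      simp only [hB, Finset.mem_filter] at hx
      have key2 : ∀ a : ZMod 2, a ≠ a + 1 := by decide
      have hxu : x ≠ u := by
        intro hc; subst hc
        exact key2 s (hs.trans hx.2)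
      have hxv : x ≠ v := by
        intro hc; subst hc
        exact key2 s (hfuv.trans hx.2)
      rw [hdegne x hxu hxv]
      exact hdeg x
    have hkA : k ∣ ∑ x ∈ A, H.degree x := hswap s ▸ hkB
    -- sum over A of G-degrees
    have hGA : k ∣ ∑ x ∈ A, G.degree x := Finset.dvd_sum fun x _ => hdeg x
    have hsplit : ∑ x ∈ A, G.degree x = ∑ x ∈ A, H.degree x + 2 := by
      have huv' : u ≠ v := huv.ne
      have hvA' : v ∈ A.erase u := Finset.mem_erase.mpr ⟨huv'.symm, hvA⟩
      have eG : ∑ x ∈ A, G.degree x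
          = G.degree u + (G.degree v + ∑ x ∈ (A.erase u).erase v, G.degree x) := by
        rw [← Finset.add_sum_erase _ _ huA, ← Finset.add_sum_erase _ _ hvA']
      have eH : ∑ x ∈ A, H.degree x
          = H.degree u + (H.degree v + ∑ x ∈ (A.erase u).erase v, H.degree x) := by
        rw [← Finset.add_sum_erase _ _ huA, ← Finset.add_sum_erase _ _ hvA']
      rw [eG, eH]
      have e2 : ∑ x ∈ (A.erase u).erase v, G.degree x = ∑ x ∈ (A.erase u).erase v, H.degree x := by
        apply Finset.sum_congr rfl
        intro x hx
        simp only [Finset.mem_erase] at hx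
        exact (hdegne x hx.2.1 hx.1).symm
      rw [e2]
      omega
    have hk2 : k ∣ 2 := by
      have := Nat.dvd_sub hGA hkA
      rw [hsplit] at this
      simpa using this
    have := Nat.le_of_dvd (by norm_num) hk2
    omega
  · -- f is a valid coloring of G, contradicting the odd cycle
    have hstepG : ∀ {x y : V}, G.Adj x y → f y = f x + 1 := by
      intro x y hxy
      by_cases hxy' : s(x, y) = s(u, v)
      · rw [Sym2.eq_iff] at hxy'
        have key : ∀ a b : ZMod 2, a ≠ b → b = a + 1 := by decide
        rcases hxy' with ⟨h1, h2⟩ | ⟨h1, h2⟩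
        · subst h1; subst h2; exact key _ _ hfuv
        · subst h1; subst h2; exact key _ _ (fun h => hfuv h.symm)
      · exact hstepH (hHadj.mpr ⟨hxy, hxy'⟩)
    have := walk_parity f hstepG C
    have hcast : (C.length : ZMod 2) = 0 := by
      have h2 : f a + (C.length : ZMod 2) = f a + 0 := by rw [add_zero, ← this]
      exact add_left_cancel h2
    rw [ZMod.natCast_eq_zero_iff] at hcast
    rw [Nat.odd_iff] at hCodd
    omega
end
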